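/- arXiv:2201.05269 — 8 statements merged into one kernel-verified Lean document; each statement's English description precedes it below -/
import Mathlib

section
/- Let I = (0,∞), p ∈ (1,∞), and w : I → (0,∞) be measurable with ∫_x^∞ w^p < ∞ for every x > 0. If f : I → ℝ is locally integrable near 0 (i.e. ∫_0^x |f| < ∞ for all x ∈ I) and ∫_0^∞ |w(x) ∫_0^x f(t) dt|^p dx < ∞, then there exists a sequence β_k → ∞ with lim_{k→∞} |∫_0^{β_k} f|^p · ∫_{β_k}^∞ w^p = 0. -/
open MeasureTheory Set Filter

theorem stmt0 (p : ℝ) (hp : 1 < p) (w : ℝ → ℝ) (hwm : Measurable w)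
    (hwpos : ∀ x ∈ Ioi (0:ℝ), 0 < w x)
    (hwint : ∀ x ∈ Ioi (0:ℝ), IntegrableOn (fun t => w t ^ p) (Ioi x))
    (f : ℝ → ℝ) (hfm : Measurable f)
    (hfloc : ∀ x ∈ Ioi (0:ℝ), IntegrableOn f (Ioc 0 x))
    (hfCh : IntegrableOn (fun x => |w x * ∫ t in Ioc (0:ℝ) x, f t| ^ p) (Ioi 0)) :
    ∃ β : ℕ → ℝ, (∀ k, 0 < β k) ∧ Tendsto β atTop atTop ∧
      Tendsto (fun k => |∫ t in Ioc (0:ℝ) (β k), f t| ^ p * ∫ t in Ioi (β k), w t ^ p)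
        atTop (nhds 0) := by
  set g : ℝ → ℝ := fun x => |w x * ∫ t in Ioc (0:ℝ) x, f t| ^ p with hgdef
  have hg_nonneg : ∀ x, 0 ≤ g x := fun x => Real.rpow_nonneg (abs_nonneg _) _
  -- tail integral of g tends to 0
  have hg1 : IntegrableOn g (Ioi (1:ℝ)) := hfCh.mono_set (Ioi_subset_Ioi (by norm_num))
  have hTtail : Tendsto (fun b : ℝ => ∫ t in Ioi b, g t) atTop (nhds 0) := by
    have h1 : Tendsto (fun b : ℝ => ∫ t in (1:ℝ)..b, g t) atTop
        (nhds (∫ t in Ioi (1:ℝ), g t)) :=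
      intervalIntegral_tendsto_integral_Ioi 1 hg1 tendsto_id
    have h2 : Tendsto (fun b : ℝ => (∫ t in Ioi (1:ℝ), g t) - ∫ t in (1:ℝ)..b, g t)
        atTop (nhds 0) := by
      have := (tendsto_const_nhds (x := ∫ t in Ioi (1:ℝ), g t) (f := atTop)).sub h1
      simpa using this
    refine h2.congr' ?_
    filter_upwards [eventually_ge_atTop (1:ℝ)] with b hb
    have hsplit : (∫ t in Ioi (1:ℝ), g t) = (∫ t in Ioc (1:ℝ) b, g t) + ∫ t in Ioi b, g t := by
      rw [← setIntegral_union (Ioc_disjoint_Ioi le_rfl) measurableSet_Ioi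
        (hg1.mono_set Ioc_subset_Ioi_self) (hg1.mono_set (Ioi_subset_Ioi hb)),
        Ioc_union_Ioi_eq_Ioi hb]
    rw [intervalIntegral.integral_of_le hb]
    linarith [hsplit]
  -- key existence
  have key : ∀ k : ℕ, ∃ x : ℝ, ((k:ℝ)+1) < x ∧
      |∫ t in Ioc (0:ℝ) x, f t| ^ p * (∫ t in Ioi x, w t ^ p) ≤
        2 * (∫ t in Ioi ((k:ℝ)+1), g t) + 1/((k:ℝ)+1) := by
    intro k
    set a : ℝ := (k:ℝ) + 1 with ha
    have ha0 : (0:ℝ) < a := by positivity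
    have hamem : a ∈ Ioi (0:ℝ) := ha0
    have hWint : IntegrableOn (fun t => w t ^ p) (Ioi a) := hwint a hamem
    set W : ℝ → ℝ := fun x => ∫ t in Ioi x, w t ^ p with hWdef
    have hWa_pos : 0 < W a := by
      rw [hWdef]
      have hae : 0 ≤ᵐ[volume.restrict (Ioi a)] fun t => w t ^ p := by
        filter_upwards [ae_restrict_mem measurableSet_Ioi] with x hx
        exact le_of_lt (Real.rpow_pos_of_pos (hwpos x (lt_trans ha0 hx)) p)
      rw [setIntegral_pos_iff_support_of_nonneg_ae hae hWint]
      have hsub : Ioi a ⊆ Function.support (fun t => w t ^ p) ∩ Ioi a := fun x hx =>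
        ⟨ne_of_gt (Real.rpow_pos_of_pos (hwpos x (lt_trans ha0 hx)) p), hx⟩
      calc (0:ENNReal) < volume (Ioi a) := by simp [Real.volume_Ioi]
        _ ≤ _ := measure_mono hsub
    -- find γ > a with ∫ a..γ w^p ≥ W a / 2
    have hto : Tendsto (fun b : ℝ => ∫ t in a..b, w t ^ p) atTop (nhds (W a)) :=
      intervalIntegral_tendsto_integral_Ioi a hWint tendsto_id
    have hev : ∀ᶠ b in atTop, W a / 2 < ∫ t in a..b, w t ^ p :=
      hto.eventually_const_lt (by linarith)
    obtain ⟨γ, hS2, hγ⟩ := (hev.and (eventually_gt_atTop a)).exists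
    have hγle : a ≤ γ := le_of_lt hγ
    have hSdef : (∫ t in a..γ, w t ^ p) = ∫ t in Ioc a γ, w t ^ p :=
      intervalIntegral.integral_of_le hγle
    have hShalf : W a / 2 < ∫ t in Ioc a γ, w t ^ p := by rwa [hSdef] at hS2
    -- integrability on Ioc a γ
    have hWIoc : IntegrableOn (fun t => w t ^ p) (Ioc a γ) := hWint.mono_set Ioc_subset_Ioi_self
    have hgIoi : IntegrableOn g (Ioi a) := hfCh.mono_set (Ioi_subset_Ioi (le_of_lt ha0))
    have hgIoc : IntegrableOn g (Ioc a γ) := hgIoi.mono_set Ioc_subset_Ioi_self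
    set T : ℝ := ∫ t in Ioi a, g t with hT
    by_contra hcon
    push_neg at hcon
    set C : ℝ := (2 * T + 1/a) / W a with hC
    -- every x in Ioc a γ has |F x|^p > C
    have hFx : ∀ x ∈ Ioc a γ, C ≤ |∫ t in Ioc (0:ℝ) x, f t| ^ p := by
      intro x hx
      have hax : a < x := hx.1
      have h1 := hcon x hax
      have hWx_le : W x ≤ W a := by
        refine setIntegral_mono_set hWint ?_ ((Ioi_subset_Ioi (le_of_lt hax)).eventuallyLE)
        filter_upwards [ae_restrict_mem measurableSet_Ioi] with t ht
        exact le_of_lt (Real.rpow_pos_of_pos (hwpos t (lt_trans ha0 ht)) p)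
      have hFnn : (0:ℝ) ≤ |∫ t in Ioc (0:ℝ) x, f t| ^ p := Real.rpow_nonneg (abs_nonneg _) _
      have : 2 * T + 1/a < |∫ t in Ioc (0:ℝ) x, f t| ^ p * W a :=
        lt_of_lt_of_le h1 (mul_le_mul_of_nonneg_left hWx_le hFnn)
      rw [hC, div_le_iff₀ hWa_pos]
      linarith
    -- lower bound the integral of g on Ioc a γ
    have hptwise : ∀ x ∈ Ioc a γ, C * w x ^ p ≤ g x := by
      intro x hx
      have hx0 : (0:ℝ) < x := lt_trans ha0 hx.1
      have hwx : 0 < w x := hwpos x hx0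
      have : g x = w x ^ p * |∫ t in Ioc (0:ℝ) x, f t| ^ p := by
        rw [hgdef]
        simp only []
        rw [abs_mul, abs_of_pos hwx, Real.mul_rpow (le_of_lt hwx) (abs_nonneg _)]
      rw [this, mul_comm C (w x ^ p)]
      exact mul_le_mul_of_nonneg_left (hFx x hx) (le_of_lt (Real.rpow_pos_of_pos hwx p))
    have hint_le : C * ∫ t in Ioc a γ, w t ^ p ≤ ∫ t in Ioc a γ, g t := by
      rw [← integral_const_mul]
      exact setIntegral_mono_on (hWIoc.const_mul C) hgIoc measurableSet_Ioc hptwise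
    have hIoc_le_T : (∫ t in Ioc a γ, g t) ≤ T := by
      refine setIntegral_mono_set hgIoi ?_ ((Ioc_subset_Ioi_self (a := γ) (b := a)).eventuallyLE)
      filter_upwards with t using hg_nonneg t
    have hCpos : 0 < C := by
      rw [hC]
      have hTnn : 0 ≤ T := setIntegral_nonneg measurableSet_Ioi fun t _ => hg_nonneg t
      positivity
    have : C * (W a / 2) < C * ∫ t in Ioc a γ, w t ^ p :=
      mul_lt_mul_of_pos_left hShalf hCpos
    have hCW : C * (W a / 2) = T + 1/(2*a) := by
      rw [hC]; field_simp
    have h1a : (0:ℝ) < 1/(2*a) := by positivity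
    linarith
  choose β hβ1 hβ2 using key
  refine ⟨β, fun k => lt_trans (by positivity) (hβ1 k), ?_, ?_⟩
  · refine tendsto_atTop_mono (fun k => ?_) tendsto_natCast_atTop_atTop
    exact le_of_lt (lt_of_le_of_lt (by linarith [Nat.cast_nonneg (α := ℝ) k]) (hβ1 k))
  · have hub : Tendsto (fun k : ℕ => 2 * (∫ t in Ioi ((k:ℝ)+1), g t) + 1/((k:ℝ)+1))
        atTop (nhds 0) := by
      have h1 : Tendsto (fun k : ℕ => ((k:ℝ)+1)) atTop atTop :=
        tendsto_atTop_add_const_right _ 1 tendsto_natCast_atTop_atTop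
      have h2 := (hTtail.comp h1).const_mul (2:ℝ)
      have h3 : Tendsto (fun k : ℕ => 1/((k:ℝ)+1)) atTop (nhds 0) :=
        tendsto_one_div_add_atTop_nhds_zero_nat
      simpa using h2.add h3
    refine squeeze_zero (fun k => ?_) (fun k => hβ2 k) hub
    have h0 : (0:ℝ) < β k := lt_trans (by positivity) (hβ1 k)
    refine mul_nonneg (Real.rpow_nonneg (abs_nonneg _) _) ?_
    exact setIntegral_nonneg measurableSet_Ioi fun t ht =>
      le_of_lt (Real.rpow_pos_of_pos (hwpos t (lt_trans h0 ht)) p)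
end

section
/- Let I = (0,∞), p ∈ (1,∞), and w : I → (0,∞) be measurable with ∫_x^∞ w^p < ∞ for every x > 0. If f is locally integrable near 0 with ‖f‖ := (∫_0^∞ |w(x) ∫_0^x f|^p dx)^{1/p} < ∞, then there exist sequences α_k ↓ 0 and β_k ↑ ∞ such that the truncations f_n := f·χ_{[α_n, β_n]} satisfy ‖f − f_n‖ → 0 as n → ∞. -/
open MeasureTheory Set Filter

lemma aux_tail_zero {g : ℝ → ℝ} {u : ℕ → ℝ} (hu : Monotone u)
    (hut : Tendsto u atTop atTop) (hg : IntegrableOn g (Ioi (u 0))) :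
    Tendsto (fun n => ∫ x in Ioi (u n), g x) atTop (nhds 0) := by
  have h := tendsto_setIntegral_of_antitone (μ := volume) (f := g) (s := fun n => Ioi (u n))
    (fun n => measurableSet_Ioi) (fun i j hij => Ioi_subset_Ioi (hu hij)) ⟨0, hg⟩
  have he : ⋂ n, Ioi (u n) = (∅ : Set ℝ) := by
    ext t
    simp only [mem_iInter, mem_Ioi, mem_empty_iff_false, iff_false, not_forall, not_lt]
    exact (hut.eventually_ge_atTop t).exists
  rwa [he, setIntegral_empty] at h

lemma aux_head_zero {g : ℝ → ℝ} {u : ℕ → ℝ} (hu : Antitone u)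
    (hut : Tendsto u atTop (nhds 0)) (hg : IntegrableOn g (Ioc 0 (u 0))) :
    Tendsto (fun n => ∫ x in Ioc 0 (u n), g x) atTop (nhds 0) := by
  have h := tendsto_setIntegral_of_antitone (μ := volume) (f := g) (s := fun n => Ioc 0 (u n))
    (fun n => measurableSet_Ioc) (fun i j hij => Ioc_subset_Ioc le_rfl (hu hij)) ⟨0, hg⟩
  have he : ⋂ n, Ioc 0 (u n) = (∅ : Set ℝ) := by
    ext t
    simp only [mem_iInter, mem_Ioc, mem_empty_iff_false, iff_false, not_forall, not_and, not_le]
    by_cases ht : 0 < t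
    · obtain ⟨n, hn⟩ := (hut.eventually (eventually_lt_nhds ht)).exists
      exact ⟨n, fun _ => hn⟩
    · exact ⟨0, fun h => absurd h ht⟩
  rwa [he, setIntegral_empty] at h

section sel

variable {g Φ : ℝ → ℝ}

lemma aux_G_pos (hgpos : ∀ x : ℝ, 0 < x → 0 < g x)
    (hgi : ∀ x : ℝ, 0 < x → IntegrableOn g (Ioi x)) {a : ℝ} (ha : 0 < a) :
    0 < ∫ t in Ioi a, g t := by
  rw [setIntegral_pos_iff_support_of_nonneg_ae
    ((ae_restrict_iff' measurableSet_Ioi).2 (ae_of_all _ fun x hx => (hgpos x (ha.trans hx)).le))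
    (hgi a ha)]
  refine lt_of_lt_of_le ?_
    (measure_mono (fun x hx => ⟨(hgpos x (ha.trans hx)).ne', hx⟩))
  show (0:ENNReal) < volume (Ioi a)
  rw [Real.volume_Ioi]
  exact ENNReal.zero_lt_top

lemma aux_G_anti (hgpos : ∀ x : ℝ, 0 < x → 0 < g x)
    (hgi : ∀ x : ℝ, 0 < x → IntegrableOn g (Ioi x)) {a b : ℝ} (ha : 0 < a) (hab : a ≤ b) :
    (∫ t in Ioi b, g t) ≤ ∫ t in Ioi a, g t :=
  setIntegral_mono_set (hgi a ha)
    ((ae_restrict_iff' measurableSet_Ioi).2 (ae_of_all _ fun x hx => (hgpos x (ha.trans hx)).le))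
    ((Ioi_subset_Ioi hab).eventuallyLE)

lemma aux_G_split (hgpos : ∀ x : ℝ, 0 < x → 0 < g x)
    (hgi : ∀ x : ℝ, 0 < x → IntegrableOn g (Ioi x)) {a b : ℝ} (ha : 0 < a) (hab : a ≤ b) :
    (∫ t in Ioi a, g t) = (∫ t in Ioc a b, g t) + ∫ t in Ioi b, g t := by
  rw [← setIntegral_union (Ioc_disjoint_Ioi le_rfl) measurableSet_Ioi
    ((hgi a ha).mono_set Ioc_subset_Ioi_self) (hgi b (lt_of_lt_of_le ha hab)),
    Ioc_union_Ioi_eq_Ioi hab]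

lemma aux_G_tail0 (hgi : ∀ x : ℝ, 0 < x → IntegrableOn g (Ioi x)) {a : ℝ} (ha : 0 < a) :
    Tendsto (fun n : ℕ => ∫ t in Ioi (a + n), g t) atTop (nhds 0) := by
  refine aux_tail_zero (fun i j hij => by
      have : (i:ℝ) ≤ j := Nat.cast_le.2 hij
      linarith) ?_ ?_
  · exact tendsto_atTop_add_const_left _ a tendsto_natCast_atTop_atTop
  · exact (hgi a ha).mono_set (Ioi_subset_Ioi (by norm_num))

lemma aux_key (hgpos : ∀ x : ℝ, 0 < x → 0 < g x)
    (hgi : ∀ x : ℝ, 0 < x → IntegrableOn g (Ioi x))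
    (hΦ : ∀ x, 0 ≤ Φ x) (hWi : IntegrableOn (fun x => g x * Φ x) (Ioi 0))
    {ε a b : ℝ} (hε : 0 < ε) (ha : 0 < a) (hab : a ≤ b)
    (hlow : ∀ x, a < x → x ≤ b → ε ≤ Φ x * ∫ t in Ioi x, g t)
    (hhalf : (∫ t in Ioi b, g t) ≤ (∫ t in Ioi a, g t) / 2) :
    ε / 2 ≤ ∫ x in Ioc a b, g x * Φ x := by
  set Ga := ∫ t in Ioi a, g t with hGa
  have hGapos : 0 < Ga := aux_G_pos hgpos hgi ha
  have h1 : ∀ x ∈ Ioc a b, ε / Ga * g x ≤ g x * Φ x := by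
    intro x hx
    have hxpos : 0 < x := ha.trans hx.1
    have hGx : 0 < ∫ t in Ioi x, g t := aux_G_pos hgpos hgi hxpos
    have hGxa : (∫ t in Ioi x, g t) ≤ Ga := aux_G_anti hgpos hgi ha hx.1.le
    have hΦx : ε / Ga ≤ Φ x := by
      rw [div_le_iff₀ hGapos]
      calc ε ≤ Φ x * ∫ t in Ioi x, g t := hlow x hx.1 hx.2
        _ ≤ Φ x * Ga := by nlinarith [hΦ x]
    calc ε / Ga * g x ≤ Φ x * g x := mul_le_mul_of_nonneg_right hΦx (hgpos x hxpos).le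
      _ = g x * Φ x := mul_comm _ _
  have h2 : (∫ x in Ioc a b, ε / Ga * g x) ≤ ∫ x in Ioc a b, g x * Φ x :=
    setIntegral_mono_on (((hgi a ha).mono_set Ioc_subset_Ioi_self).const_mul _)
      (hWi.mono_set (fun x hx => mem_Ioi.2 (ha.trans hx.1))) measurableSet_Ioc h1
  have h3 : (∫ x in Ioc a b, ε / Ga * g x) = ε / Ga * ∫ x in Ioc a b, g x :=
    integral_const_mul _ _
  have h4 : (∫ x in Ioc a b, g x) = Ga - ∫ t in Ioi b, g t := by
    have := aux_G_split hgpos hgi ha hab; linarith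
  have h5 : Ga / 2 ≤ ∫ x in Ioc a b, g x := by rw [h4]; linarith
  have h6 : ε / 2 ≤ ∫ x in Ioc a b, ε / Ga * g x := by
    rw [h3]
    calc ε / 2 = ε / Ga * (Ga / 2) := by field_simp
      _ ≤ _ := mul_le_mul_of_nonneg_left h5 (by positivity)
  linarith

lemma aux_sel_beta (hgpos : ∀ x : ℝ, 0 < x → 0 < g x)
    (hgi : ∀ x : ℝ, 0 < x → IntegrableOn g (Ioi x))
    (hΦ : ∀ x, 0 ≤ Φ x) (hWi : IntegrableOn (fun x => g x * Φ x) (Ioi 0))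
    {ε N : ℝ} (hε : 0 < ε) (hN : 1 ≤ N) :
    ∃ x, N ≤ x ∧ Φ x * (∫ t in Ioi x, g t) < ε := by
  by_contra hcon
  push_neg at hcon
  have hN0 : (0:ℝ) < N := lt_of_lt_of_le one_pos hN
  have key : ∀ m : ℕ, ε / 2 ≤ ∫ x in Ioi (N + (m:ℝ)), g x * Φ x := by
    intro m
    set a := N + (m:ℝ) with ha'
    have ha : 0 < a := by positivity
    have htail := aux_G_tail0 hgi ha
    obtain ⟨k, hk⟩ := ((tendsto_order.1 htail).2 ((∫ t in Ioi a, g t) / 2)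
      (by have := aux_G_pos hgpos hgi ha; linarith)).exists
    set b := a + (k:ℝ) with hb'
    have hab : a ≤ b := le_add_of_nonneg_right (Nat.cast_nonneg k)
    have h := aux_key hgpos hgi hΦ hWi hε ha hab
      (fun x hx1 _ => hcon x (by have : (0:ℝ) ≤ (m:ℝ) := Nat.cast_nonneg m; linarith)) hk.le
    refine le_trans h (setIntegral_mono_set
      (hWi.mono_set (fun x hx => mem_Ioi.2 (ha.trans hx)))
      ((ae_restrict_iff' measurableSet_Ioi).2 (ae_of_all _ fun x hx =>
        mul_nonneg (hgpos x (ha.trans hx)).le (hΦ x)))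
      (Ioc_subset_Ioi_self.eventuallyLE))
  have htend : Tendsto (fun m : ℕ => ∫ x in Ioi (N + (m:ℝ)), g x * Φ x) atTop (nhds 0) := by
    refine aux_tail_zero (fun i j hij => by
        have : (i:ℝ) ≤ j := Nat.cast_le.2 hij
        linarith) ?_ ?_
    · exact tendsto_atTop_add_const_left _ N tendsto_natCast_atTop_atTop
    · exact hWi.mono_set (Ioi_subset_Ioi (by positivity))
  have := ge_of_tendsto' htend key
  linarith

lemma aux_sel_alpha (hgpos : ∀ x : ℝ, 0 < x → 0 < g x)
    (hgi : ∀ x : ℝ, 0 < x → IntegrableOn g (Ioi x))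
    (hΦ : ∀ x, 0 ≤ Φ x) (hWi : IntegrableOn (fun x => g x * Φ x) (Ioi 0))
    (hΦ0 : ∀ c : ℝ, 0 < c → ∀ d : ℝ, 0 < d → ∃ x, 0 < x ∧ x ≤ d ∧ Φ x < c)
    {ε d : ℝ} (hε : 0 < ε) (hd : 0 < d) :
    ∃ x, 0 < x ∧ x ≤ d ∧ Φ x * (∫ t in Ioi x, g t) < ε := by
  by_contra hcon
  push_neg at hcon
  by_cases hbdd : ∃ K, ∀ x, 0 < x → x ≤ d → (∫ t in Ioi x, g t) ≤ K
  · obtain ⟨K, hK⟩ := hbdd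
    have hK0 : 0 < K := lt_of_lt_of_le (aux_G_pos hgpos hgi hd) (hK d hd le_rfl)
    obtain ⟨x, hx0, hxd, hxΦ⟩ := hΦ0 (ε / K) (by positivity) d hd
    have h1 := hcon x hx0 hxd
    have h2 : Φ x * (∫ t in Ioi x, g t) ≤ Φ x * K :=
      mul_le_mul_of_nonneg_left (hK x hx0 hxd) (hΦ x)
    rw [lt_div_iff₀ hK0] at hxΦ
    nlinarith
  · push_neg at hbdd
    have key : ∀ m : ℕ, ε / 2 ≤ ∫ x in Ioc 0 (d / ((m:ℝ)+1)), g x * Φ x := by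
      intro m
      set d' := d / ((m:ℝ)+1) with hd''
      have hd'0 : 0 < d' := by positivity
      have hd'd : d' ≤ d := by
        rw [hd'']
        apply div_le_self hd.le
        have : (0:ℝ) ≤ (m:ℝ) := Nat.cast_nonneg m
        linarith
      obtain ⟨η, hη0, hηd, hηG⟩ := hbdd (2 * ∫ t in Ioi d', g t)
      have hηd' : η < d' := by
        by_contra hge
        push_neg at hge
        have h1 := aux_G_anti hgpos hgi hd'0 hge
        have h2 := aux_G_pos hgpos hgi hd'0
        linarith
      have h := aux_key hgpos hgi hΦ hWi hε hη0 hηd'.le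
        (fun x hx1 hx2 => hcon x (hη0.trans hx1) (hx2.trans hd'd))
        (by linarith [aux_G_pos hgpos hgi hd'0])
      refine le_trans h (setIntegral_mono_set
        (hWi.mono_set (fun x hx => mem_Ioi.2 hx.1))
        ((ae_restrict_iff' measurableSet_Ioc).2 (ae_of_all _ fun x hx =>
          mul_nonneg (hgpos x hx.1).le (hΦ x)))
        ((Ioc_subset_Ioc_left hη0.le).eventuallyLE))
    have htend : Tendsto (fun m : ℕ => ∫ x in Ioc 0 (d / ((m:ℝ)+1)), g x * Φ x) atTop (nhds 0) := by
      refine aux_head_zero (fun i j hij => by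
          have h1 : (i:ℝ) + 1 ≤ (j:ℝ) + 1 := by
            have : (i:ℝ) ≤ j := Nat.cast_le.2 hij
            linarith
          gcongr) ?_ ?_
      · have h := tendsto_one_div_add_atTop_nhds_zero_nat.const_mul d
        simp only [mul_one_div, mul_zero] at h
        convert h using 2
      · exact hWi.mono_set (fun x hx => mem_Ioi.2 hx.1)
    have := ge_of_tendsto' htend key
    linarith

end sel

lemma aux_three (p : ℝ) (hp : 0 ≤ p) (v₁ v₂ v₃ : ℝ) :
    |v₁ + v₂ + v₃| ^ p ≤ 3 ^ p * (|v₁| ^ p + |v₂| ^ p + |v₃| ^ p) := by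
  set m := max |v₁| (max |v₂| |v₃|) with hm
  have hm1 : |v₁| ≤ m := le_max_left _ _
  have hm2 : |v₂| ≤ m := le_trans (le_max_left _ _) (le_max_right _ _)
  have hm3 : |v₃| ≤ m := le_trans (le_max_right _ _) (le_max_right _ _)
  have hmnn : 0 ≤ m := le_trans (abs_nonneg _) hm1
  have h1 : |v₁ + v₂ + v₃| ≤ 3 * m := by
    calc |v₁ + v₂ + v₃| ≤ |v₁ + v₂| + |v₃| := abs_add_le _ _
      _ ≤ |v₁| + |v₂| + |v₃| := by linarith [abs_add_le v₁ v₂]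
      _ ≤ 3 * m := by linarith
  calc |v₁ + v₂ + v₃| ^ p ≤ (3 * m) ^ p := Real.rpow_le_rpow (abs_nonneg _) h1 hp
    _ = 3 ^ p * m ^ p := Real.mul_rpow (by norm_num) hmnn
    _ ≤ 3 ^ p * (|v₁| ^ p + |v₂| ^ p + |v₃| ^ p) := by
      refine mul_le_mul_of_nonneg_left ?_ (Real.rpow_nonneg (by norm_num) _)
      have e1 := Real.rpow_nonneg (abs_nonneg v₁) p
      have e2 := Real.rpow_nonneg (abs_nonneg v₂) p
      have e3 := Real.rpow_nonneg (abs_nonneg v₃) p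
      rcases max_cases |v₁| (max |v₂| |v₃|) with ⟨h, _⟩ | ⟨h, _⟩
      · rw [hm, h]; linarith
      · rcases max_cases |v₂| |v₃| with ⟨h', _⟩ | ⟨h', _⟩
        · rw [hm, h, h']; linarith
        · rw [hm, h, h']; linarith

lemma aux_ind (h : ℝ → ℝ) {s : Set ℝ} (hs : MeasurableSet s) (hsub : s ⊆ Ioi (0:ℝ))
    (hi : IntegrableOn h s) :
    Integrable (s.indicator h) (volume.restrict (Ioi (0:ℝ))) ∧
    (∫ x in Ioi (0:ℝ), s.indicator h x) = ∫ x in s, h x := by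
  constructor
  · rw [integrable_indicator_iff hs, IntegrableOn, Measure.restrict_restrict hs,
      inter_eq_self_of_subset_left hsub]
    exact hi
  · rw [integral_indicator hs, Measure.restrict_restrict hs,
      inter_eq_self_of_subset_left hsub]

set_option maxHeartbeats 2000000 in
theorem stmt1 (p : ℝ) (hp : 1 < p) (w : ℝ → ℝ) (hwm : Measurable w)
    (hwpos : ∀ x ∈ Ioi (0:ℝ), 0 < w x)
    (hwint : ∀ x ∈ Ioi (0:ℝ), IntegrableOn (fun t => w t ^ p) (Ioi x))
    (f : ℝ → ℝ) (hfm : Measurable f)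
    (hfloc : ∀ x ∈ Ioi (0:ℝ), IntegrableOn f (Ioc 0 x))
    (hfCh : IntegrableOn (fun x => |w x * ∫ t in Ioc (0:ℝ) x, f t| ^ p) (Ioi 0)) :
    ∃ α β : ℕ → ℝ, (∀ k, 0 < α k) ∧ (∀ k, α k ≤ β k) ∧
      Antitone α ∧ Monotone β ∧
      Tendsto α atTop (nhds 0) ∧ Tendsto β atTop atTop ∧
      Tendsto (fun n => (∫ x in Ioi (0:ℝ),
          |w x * ∫ t in Ioc (0:ℝ) x, (f t - (Icc (α n) (β n)).indicator f t)| ^ p) ^ (1/p))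
        atTop (nhds 0) := by
  classical
  have hp0 : (0:ℝ) < p := lt_trans one_pos hp
  have hgpos : ∀ x : ℝ, 0 < x → 0 < w x ^ p :=
    fun x hx => Real.rpow_pos_of_pos (hwpos x (mem_Ioi.2 hx)) p
  have hgi : ∀ x : ℝ, 0 < x → IntegrableOn (fun t => w t ^ p) (Ioi x) :=
    fun x hx => hwint x (mem_Ioi.2 hx)
  have hΦnn : ∀ x : ℝ, (0:ℝ) ≤ |∫ t in Ioc (0:ℝ) x, f t| ^ p :=
    fun x => Real.rpow_nonneg (abs_nonneg _) p
  have hWJ : ∀ x J : ℝ, 0 < x → |w x * J| ^ p = w x ^ p * |J| ^ p := by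
    intro x J hx
    rw [abs_mul, abs_of_pos (hwpos x (mem_Ioi.2 hx)), Real.mul_rpow (hwpos x (mem_Ioi.2 hx)).le (abs_nonneg _)]
  have hWi : IntegrableOn (fun x => w x ^ p * |∫ t in Ioc (0:ℝ) x, f t| ^ p) (Ioi (0:ℝ)) :=
    hfCh.congr_fun (fun x hx => hWJ x _ hx) measurableSet_Ioi
  -- Φ tends to 0 near 0
  have hΦ0 : ∀ c : ℝ, 0 < c → ∀ d : ℝ, 0 < d →
      ∃ x, 0 < x ∧ x ≤ d ∧ |∫ t in Ioc (0:ℝ) x, f t| ^ p < c := by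
    intro c hc d hd
    have htend : Tendsto (fun m : ℕ => ∫ t in Ioc (0:ℝ) (d / ((m:ℝ)+1)), |f t|) atTop (nhds 0) := by
      refine aux_head_zero (fun i j hij => by
          have h1 : (i:ℝ) + 1 ≤ (j:ℝ) + 1 := by
            have : (i:ℝ) ≤ j := Nat.cast_le.2 hij
            linarith
          gcongr) ?_ ?_
      · have h := tendsto_one_div_add_atTop_nhds_zero_nat.const_mul d
        simp only [mul_one_div, mul_zero] at h
        convert h using 2
      · have habs : IntegrableOn (fun t => |f t|) (Ioc (0:ℝ) d) := (hfloc d (mem_Ioi.2 hd)).abs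
        refine habs.mono_set (Ioc_subset_Ioc_right ?_)
        norm_num
    obtain ⟨m, hm⟩ := ((tendsto_order.1 htend).2 ((c/2) ^ (1/p))
      (Real.rpow_pos_of_pos (by linarith) _)).exists
    refine ⟨d / ((m:ℝ)+1), by positivity, div_le_self hd.le (by
      have : (0:ℝ) ≤ m := Nat.cast_nonneg m
      linarith), ?_⟩
    have hFle : |∫ t in Ioc (0:ℝ) (d / ((m:ℝ)+1)), f t| ≤ ∫ t in Ioc (0:ℝ) (d / ((m:ℝ)+1)), |f t| := by
      simpa using norm_integral_le_integral_norm (μ := volume.restrict (Ioc (0:ℝ) (d / ((m:ℝ)+1)))) f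
    have h1 : |∫ t in Ioc (0:ℝ) (d / ((m:ℝ)+1)), f t| ^ p ≤ ((c/2) ^ (1/p)) ^ p :=
      Real.rpow_le_rpow (abs_nonneg _) (le_trans hFle hm.le) hp0.le
    have h2 : ((c/2) ^ (1/p)) ^ p = c/2 := by
      rw [← Real.rpow_mul (by linarith : (0:ℝ) ≤ c/2), one_div_mul_cancel hp0.ne', Real.rpow_one]
    rw [h2] at h1
    linarith
  -- selection of α
  have hA' : ∀ (n : ℕ) (dd : ℝ), 0 < dd →
      ∃ x, 0 < x ∧ x ≤ min dd (1/((n:ℝ)+1)) ∧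
        |∫ t in Ioc (0:ℝ) x, f t| ^ p * (∫ t in Ioi x, w t ^ p) < 1/((n:ℝ)+1) := by
    intro n dd hdd
    obtain ⟨x, h1, h2, h3⟩ := aux_sel_alpha (Φ := fun x => |∫ t in Ioc (0:ℝ) x, f t| ^ p)
      hgpos hgi hΦnn hWi hΦ0 (by positivity : (0:ℝ) < 1/((n:ℝ)+1))
      (lt_min hdd (by positivity) : (0:ℝ) < min dd (1/((n:ℝ)+1)))
    exact ⟨x, h1, h2, h3⟩
  set sα : ℕ → ℝ → ℝ := fun n dd => if hdd : 0 < dd then (hA' n dd hdd).choose else 1 with hsα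
  have hsαspec : ∀ n dd, ∀ hdd : 0 < dd, 0 < sα n dd ∧ sα n dd ≤ min dd (1/((n:ℝ)+1)) ∧
      |∫ t in Ioc (0:ℝ) (sα n dd), f t| ^ p * (∫ t in Ioi (sα n dd), w t ^ p) < 1/((n:ℝ)+1) := by
    intro n dd hdd
    simp only [hsα, dif_pos hdd]
    exact (hA' n dd hdd).choose_spec
  set α : ℕ → ℝ := fun n => Nat.rec (sα 0 1) (fun k prev => sα (k+1) prev) n with hαdef
  have hαs : ∀ n, α (n+1) = sα (n+1) (α n) := fun n => rfl
  have hαpos : ∀ n, 0 < α n := by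
    intro n
    induction n with
    | zero => exact (hsαspec 0 1 one_pos).1
    | succ k ih => exact (hsαspec (k+1) (α k) ih).1
  have hαsucc : ∀ n, α (n+1) ≤ α n := fun n =>
    le_trans (hsαspec (n+1) (α n) (hαpos n)).2.1 (min_le_left _ _)
  have hαsmall : ∀ n, α n ≤ 1/((n:ℝ)+1) := by
    intro n
    cases n with
    | zero => exact le_trans (hsαspec 0 1 one_pos).2.1 (min_le_right _ _)
    | succ k => exact le_trans (hsαspec (k+1) (α k) (hαpos k)).2.1 (min_le_right _ _)
  have hαprop : ∀ n, |∫ t in Ioc (0:ℝ) (α n), f t| ^ p * (∫ t in Ioi (α n), w t ^ p)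
      < 1/((n:ℝ)+1) := by
    intro n
    cases n with
    | zero => exact (hsαspec 0 1 one_pos).2.2
    | succ k => exact (hsαspec (k+1) (α k) (hαpos k)).2.2
  have hαanti : Antitone α := antitone_nat_of_succ_le hαsucc
  have hαle1 : ∀ n, α n ≤ 1 := by
    intro n
    refine le_trans (hαsmall n) ?_
    rw [div_le_one (by positivity)]
    have : (0:ℝ) ≤ n := Nat.cast_nonneg n
    linarith
  have hαtend : Tendsto α atTop (nhds 0) :=
    squeeze_zero (fun n => (hαpos n).le) hαsmall tendsto_one_div_add_atTop_nhds_zero_nat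
  -- selection of β
  have hB' : ∀ (n : ℕ) (N : ℝ), 1 ≤ N →
      ∃ x, N ≤ x ∧ |∫ t in Ioc (0:ℝ) x, f t| ^ p * (∫ t in Ioi x, w t ^ p) < 1/((n:ℝ)+1) :=
    fun n N hN => aux_sel_beta (Φ := fun x => |∫ t in Ioc (0:ℝ) x, f t| ^ p)
      hgpos hgi hΦnn hWi (by positivity : (0:ℝ) < 1/((n:ℝ)+1)) hN
  set sβ : ℕ → ℝ → ℝ := fun n N => if hN : 1 ≤ N then (hB' n N hN).choose else 1 with hsβ
  have hsβspec : ∀ n N, ∀ hN : 1 ≤ N, N ≤ sβ n N ∧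
      |∫ t in Ioc (0:ℝ) (sβ n N), f t| ^ p * (∫ t in Ioi (sβ n N), w t ^ p) < 1/((n:ℝ)+1) := by
    intro n N hN
    simp only [hsβ, dif_pos hN]
    exact (hB' n N hN).choose_spec
  set β : ℕ → ℝ := fun n => Nat.rec (sβ 0 1) (fun k prev => sβ (k+1) (max (prev+1) ((k:ℝ)+2))) n
    with hβdef
  have hβs : ∀ n, β (n+1) = sβ (n+1) (max (β n + 1) ((n:ℝ)+2)) := fun n => rfl
  have hβ1 : ∀ n, 1 ≤ β n := by
    intro n
    induction n with
    | zero => exact (hsβspec 0 1 le_rfl).1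
    | succ k ih =>
      refine le_trans ?_ (hsβspec (k+1) _ ?_).1
      · exact le_trans (by linarith) (le_max_left (β k + 1) ((k:ℝ)+2))
      · exact le_trans (by linarith) (le_max_left (β k + 1) ((k:ℝ)+2))
  have hβsucc : ∀ n, β n ≤ β (n+1) := by
    intro n
    refine le_trans ?_ (hsβspec (n+1) _ (le_trans (by linarith [hβ1 n]) (le_max_left (β n + 1) ((n:ℝ)+2)))).1
    exact le_trans (by linarith) (le_max_left (β n + 1) ((n:ℝ)+2))
  have hβmono : Monotone β := monotone_nat_of_le_succ hβsucc
  have hβge : ∀ n : ℕ, (n:ℝ) + 1 ≤ β n := by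
    intro n
    cases n with
    | zero => simpa using hβ1 0
    | succ k =>
      refine le_trans ?_ (hsβspec (k+1) _ (le_trans (by linarith [hβ1 k]) (le_max_left (β k + 1) ((k:ℝ)+2)))).1
      refine le_trans ?_ (le_max_right (β k + 1) ((k:ℝ)+2))
      push_cast
      linarith
  have hβprop : ∀ n, |∫ t in Ioc (0:ℝ) (β n), f t| ^ p * (∫ t in Ioi (β n), w t ^ p)
      < 1/((n:ℝ)+1) := by
    intro n
    cases n with
    | zero => exact (hsβspec 0 1 le_rfl).2
    | succ k => exact (hsβspec (k+1) _ (le_trans (by linarith [hβ1 k]) (le_max_left (β k + 1) ((k:ℝ)+2)))).2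
  have hβtend : Tendsto β atTop atTop := by
    refine tendsto_atTop_mono (fun n => le_trans ?_ (hβge n)) tendsto_natCast_atTop_atTop
    linarith
  have hαβ : ∀ n, α n ≤ β n := fun n => le_trans (hαle1 n) (hβ1 n)
  -- main estimate
  have main : ∀ n : ℕ, (∫ x in Ioi (0:ℝ),
      |w x * ∫ t in Ioc (0:ℝ) x, (f t - (Icc (α n) (β n)).indicator f t)| ^ p)
      ≤ (∫ x in Ioc (0:ℝ) (α n), w x ^ p * |∫ t in Ioc (0:ℝ) x, f t| ^ p)
        + 3^p * (|∫ t in Ioc (0:ℝ) (α n), f t| ^ p * ∫ t in Ioi (α n), w t ^ p)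
        + 3^p * (∫ x in Ioi (β n), w x ^ p * |∫ t in Ioc (0:ℝ) x, f t| ^ p)
        + 3^p * (|∫ t in Ioc (0:ℝ) (β n), f t| ^ p * ∫ t in Ioi (β n), w t ^ p) := by
    intro n
    set a := α n with ha'
    set b := β n with hb'
    have ha : 0 < a := hαpos n
    have hb1 : (1:ℝ) ≤ b := hβ1 n
    have hab : a ≤ b := hαβ n
    have hb0 : (0:ℝ) < b := lt_of_lt_of_le one_pos hb1
    have h3p : (1:ℝ) ≤ 3 ^ p := Real.one_le_rpow (by norm_num) hp0.le
    have h3pnn : (0:ℝ) ≤ 3 ^ p := le_trans zero_le_one h3p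
    obtain ⟨i1, e1⟩ := aux_ind (fun x => w x ^ p * |∫ t in Ioc (0:ℝ) x, f t| ^ p)
      (measurableSet_Ioc : MeasurableSet (Ioc (0:ℝ) a)) (fun x hx => mem_Ioi.2 hx.1)
      (hWi.mono_set (fun x hx => mem_Ioi.2 hx.1))
    obtain ⟨i2, e2⟩ := aux_ind (fun x => w x ^ p)
      (measurableSet_Ici : MeasurableSet (Ici a)) (fun x hx => mem_Ioi.2 (lt_of_lt_of_le ha hx))
      (Iff.mpr integrableOn_Ici_iff_integrableOn_Ioi (hgi a ha))
    obtain ⟨i3, e3⟩ := aux_ind (fun x => w x ^ p * |∫ t in Ioc (0:ℝ) x, f t| ^ p)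
      (measurableSet_Ioi : MeasurableSet (Ioi b)) (fun x hx => mem_Ioi.2 (lt_trans hb0 hx))
      (hWi.mono_set (Ioi_subset_Ioi hb0.le))
    obtain ⟨i4, e4⟩ := aux_ind (fun x => w x ^ p)
      (measurableSet_Ioi : MeasurableSet (Ioi b)) (fun x hx => mem_Ioi.2 (lt_trans hb0 hx))
      (hgi b hb0)
    set M : ℝ → ℝ := fun x =>
      (Ioc (0:ℝ) a).indicator (fun x => w x ^ p * |∫ t in Ioc (0:ℝ) x, f t| ^ p) x
      + (3^p * |∫ t in Ioc (0:ℝ) a, f t| ^ p) * (Ici a).indicator (fun x => w x ^ p) x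
      + 3^p * (Ioi b).indicator (fun x => w x ^ p * |∫ t in Ioc (0:ℝ) x, f t| ^ p) x
      + (3^p * |∫ t in Ioc (0:ℝ) b, f t| ^ p) * (Ioi b).indicator (fun x => w x ^ p) x with hM
    have j1 : Integrable (fun x =>
        (Ioc (0:ℝ) a).indicator (fun x => w x ^ p * |∫ t in Ioc (0:ℝ) x, f t| ^ p) x)
        (volume.restrict (Ioi (0:ℝ))) := i1
    have j2 : Integrable (fun x =>
        (3^p * |∫ t in Ioc (0:ℝ) a, f t| ^ p) * (Ici a).indicator (fun x => w x ^ p) x)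
        (volume.restrict (Ioi (0:ℝ))) := i2.const_mul _
    have j3 : Integrable (fun x =>
        3^p * (Ioi b).indicator (fun x => w x ^ p * |∫ t in Ioc (0:ℝ) x, f t| ^ p) x)
        (volume.restrict (Ioi (0:ℝ))) := i3.const_mul _
    have j4 : Integrable (fun x =>
        (3^p * |∫ t in Ioc (0:ℝ) b, f t| ^ p) * (Ioi b).indicator (fun x => w x ^ p) x)
        (volume.restrict (Ioi (0:ℝ))) := i4.const_mul _
    have j12 : Integrable (fun x =>
        (Ioc (0:ℝ) a).indicator (fun x => w x ^ p * |∫ t in Ioc (0:ℝ) x, f t| ^ p) x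
        + (3^p * |∫ t in Ioc (0:ℝ) a, f t| ^ p) * (Ici a).indicator (fun x => w x ^ p) x)
        (volume.restrict (Ioi (0:ℝ))) := j1.add j2
    have j123 : Integrable (fun x =>
        (Ioc (0:ℝ) a).indicator (fun x => w x ^ p * |∫ t in Ioc (0:ℝ) x, f t| ^ p) x
        + (3^p * |∫ t in Ioc (0:ℝ) a, f t| ^ p) * (Ici a).indicator (fun x => w x ^ p) x
        + 3^p * (Ioi b).indicator (fun x => w x ^ p * |∫ t in Ioc (0:ℝ) x, f t| ^ p) x)
        (volume.restrict (Ioi (0:ℝ))) := j12.add j3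
    have hMint : Integrable M (volume.restrict (Ioi (0:ℝ))) := j123.add j4
    have hMeq : (∫ x in Ioi (0:ℝ), M x)
        = (∫ x in Ioc (0:ℝ) a, w x ^ p * |∫ t in Ioc (0:ℝ) x, f t| ^ p)
          + 3^p * (|∫ t in Ioc (0:ℝ) a, f t| ^ p * ∫ t in Ioi a, w t ^ p)
          + 3^p * (∫ x in Ioi b, w x ^ p * |∫ t in Ioc (0:ℝ) x, f t| ^ p)
          + 3^p * (|∫ t in Ioc (0:ℝ) b, f t| ^ p * ∫ t in Ioi b, w t ^ p) := by
      simp only [hM]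
      rw [integral_add j123 j4, integral_add j12 j3, integral_add j1 j2,
        integral_const_mul, integral_const_mul, integral_const_mul,
        e1, e2, e3, e4, integral_Ici_eq_integral_Ioi]
      ring
    have hpt : ∀ x ∈ Ioi (0:ℝ),
        |w x * ∫ t in Ioc (0:ℝ) x, (f t - (Icc a b).indicator f t)| ^ p ≤ M x := by
      intro x hx
      have hx0 : (0:ℝ) < x := hx
      have hfi : IntegrableOn f (Ioc (0:ℝ) x) := hfloc x hx
      have hD : (∫ t in Ioc (0:ℝ) x, (f t - (Icc a b).indicator f t))
          = (∫ t in Ioc (0:ℝ) x, f t) - ∫ t in Ioc (0:ℝ) x ∩ Icc a b, f t := by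
        rw [integral_sub hfi (hfi.indicator measurableSet_Icc),
          setIntegral_indicator measurableSet_Icc]
      have m1 : 0 ≤ (Ioc (0:ℝ) a).indicator
          (fun x => w x ^ p * |∫ t in Ioc (0:ℝ) x, f t| ^ p) x :=
        indicator_nonneg (fun y hy => mul_nonneg (hgpos y hy.1).le (hΦnn y)) x
      have m2 : 0 ≤ (3^p * |∫ t in Ioc (0:ℝ) a, f t| ^ p) * (Ici a).indicator (fun x => w x ^ p) x :=
        mul_nonneg (mul_nonneg h3pnn (hΦnn a))
          (indicator_nonneg (fun y hy => (hgpos y (lt_of_lt_of_le ha hy)).le) x)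
      have m3 : 0 ≤ 3^p * (Ioi b).indicator
          (fun x => w x ^ p * |∫ t in Ioc (0:ℝ) x, f t| ^ p) x :=
        mul_nonneg h3pnn
          (indicator_nonneg (fun y hy => mul_nonneg (hgpos y (lt_trans hb0 hy)).le (hΦnn y)) x)
      have m4 : 0 ≤ (3^p * |∫ t in Ioc (0:ℝ) b, f t| ^ p) * (Ioi b).indicator (fun x => w x ^ p) x :=
        mul_nonneg (mul_nonneg h3pnn (hΦnn b))
          (indicator_nonneg (fun y hy => (hgpos y (lt_trans hb0 hy)).le) x)
      rcases lt_or_ge x a with hxa | hax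
      · have hempty : Ioc (0:ℝ) x ∩ Icc a b = ∅ := by
          apply eq_empty_iff_forall_notMem.2
          rintro t ⟨⟨_, ht2⟩, ht3, _⟩
          linarith
        rw [hD, hempty, setIntegral_empty, sub_zero, hWJ x _ hx0]
        have e1x : (Ioc (0:ℝ) a).indicator
            (fun x => w x ^ p * |∫ t in Ioc (0:ℝ) x, f t| ^ p) x
            = w x ^ p * |∫ t in Ioc (0:ℝ) x, f t| ^ p := indicator_of_mem (mem_Ioc.2 ⟨hx0, hxa.le⟩) _
        simp only [hM]
        linarith [m2, m3, m4, e1x.ge, e1x.le]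
      · rcases le_or_gt x b with hxb | hbx
        · have hinter : Ioc (0:ℝ) x ∩ Icc a b = Icc a x := by
            ext t
            simp only [mem_inter_iff, mem_Ioc, mem_Icc]
            constructor
            · rintro ⟨⟨_, h2⟩, h3, _⟩; exact ⟨h3, h2⟩
            · rintro ⟨h1, h2⟩
              exact ⟨⟨lt_of_lt_of_le ha h1, h2⟩, h1, le_trans h2 hxb⟩
          have hsplit : (∫ t in Ioc (0:ℝ) x, f t)
              = (∫ t in Ioc (0:ℝ) a, f t) + ∫ t in Ioc a x, f t := by
            rw [← setIntegral_union (Ioc_disjoint_Ioc_of_le le_rfl) measurableSet_Ioc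
              (hfi.mono_set (Ioc_subset_Ioc_right hax))
              (hfi.mono_set (Ioc_subset_Ioc_left ha.le)),
              Ioc_union_Ioc_eq_Ioc ha.le hax]
          rw [hD, hinter, integral_Icc_eq_integral_Ioc, hsplit, add_sub_cancel_right,
            hWJ x _ hx0]
          have e2x : (Ici a).indicator (fun x => w x ^ p) x = w x ^ p :=
            indicator_of_mem hax _
          have hkey : w x ^ p * |∫ t in Ioc (0:ℝ) a, f t| ^ p
              ≤ (3^p * |∫ t in Ioc (0:ℝ) a, f t| ^ p) * w x ^ p := by
            nlinarith [mul_nonneg (mul_nonneg (sub_nonneg.2 h3p) (hΦnn a)) (hgpos x hx0).le]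
          simp only [hM]
          rw [e2x]
          linarith [m1, m3, m4, hkey]
        · have hinter : Ioc (0:ℝ) x ∩ Icc a b = Icc a b := by
            apply inter_eq_self_of_subset_right
            intro t ht
            exact ⟨lt_of_lt_of_le ha ht.1, le_trans ht.2 hbx.le⟩
          have hsplit : (∫ t in Ioc (0:ℝ) b, f t)
              = (∫ t in Ioc (0:ℝ) a, f t) + ∫ t in Ioc a b, f t := by
            rw [← setIntegral_union (Ioc_disjoint_Ioc_of_le le_rfl) measurableSet_Ioc
              ((hfloc b (mem_Ioi.2 hb0)).mono_set (Ioc_subset_Ioc_right hab))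
              ((hfloc b (mem_Ioi.2 hb0)).mono_set (Ioc_subset_Ioc_left ha.le)),
              Ioc_union_Ioc_eq_Ioc ha.le hab]
          have hIab : (∫ t in Ioc a b, f t)
              = (∫ t in Ioc (0:ℝ) b, f t) - ∫ t in Ioc (0:ℝ) a, f t := by
            rw [hsplit]; ring
          rw [hD, hinter, integral_Icc_eq_integral_Ioc, hIab, hWJ x _ hx0]
          have harith : (∫ t in Ioc (0:ℝ) x, f t)
              - ((∫ t in Ioc (0:ℝ) b, f t) - ∫ t in Ioc (0:ℝ) a, f t)
              = (∫ t in Ioc (0:ℝ) x, f t) + (-(∫ t in Ioc (0:ℝ) b, f t))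
                + ∫ t in Ioc (0:ℝ) a, f t := by ring
          rw [harith]
          have hthree := aux_three p hp0.le (∫ t in Ioc (0:ℝ) x, f t)
            (-(∫ t in Ioc (0:ℝ) b, f t)) (∫ t in Ioc (0:ℝ) a, f t)
          rw [abs_neg] at hthree
          have hmul := mul_le_mul_of_nonneg_left hthree (hgpos x hx0).le
          have e2x : (Ici a).indicator (fun x => w x ^ p) x = w x ^ p :=
            indicator_of_mem (le_trans hab hbx.le) _
          have e3x : (Ioi b).indicator
              (fun x => w x ^ p * |∫ t in Ioc (0:ℝ) x, f t| ^ p) x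
              = w x ^ p * |∫ t in Ioc (0:ℝ) x, f t| ^ p := indicator_of_mem hbx _
          have e4x : (Ioi b).indicator (fun x => w x ^ p) x = w x ^ p := indicator_of_mem hbx _
          simp only [hM]
          rw [e2x, e3x, e4x]
          nlinarith [m1, hmul]
          
    have hmono := integral_mono_of_nonneg
      (f := fun x => |w x * ∫ t in Ioc (0:ℝ) x, (f t - (Icc a b).indicator f t)| ^ p)
      (g := M) (μ := volume.restrict (Ioi (0:ℝ)))
      (ae_of_all _ (fun x => Real.rpow_nonneg (abs_nonneg _) p))
      hMint ((ae_restrict_iff' measurableSet_Ioi).2 (ae_of_all _ hpt))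
    exact le_trans hmono (le_of_eq hMeq)
  refine ⟨α, β, hαpos, hαβ, hαanti, hβmono, hαtend, hβtend, ?_⟩
  have t1 : Tendsto (fun n => ∫ x in Ioc (0:ℝ) (α n), w x ^ p * |∫ t in Ioc (0:ℝ) x, f t| ^ p)
      atTop (nhds 0) :=
    aux_head_zero hαanti hαtend (hWi.mono_set (fun x hx => mem_Ioi.2 hx.1))
  have t2 : Tendsto (fun n => |∫ t in Ioc (0:ℝ) (α n), f t| ^ p * ∫ t in Ioi (α n), w t ^ p)
      atTop (nhds 0) :=
    squeeze_zero (fun n => mul_nonneg (hΦnn _) (setIntegral_nonneg measurableSet_Ioi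
      (fun x hx => (hgpos x (lt_trans (hαpos n) hx)).le))) (fun n => (hαprop n).le)
      tendsto_one_div_add_atTop_nhds_zero_nat
  have t3 : Tendsto (fun n => ∫ x in Ioi (β n), w x ^ p * |∫ t in Ioc (0:ℝ) x, f t| ^ p)
      atTop (nhds 0) :=
    aux_tail_zero hβmono hβtend (hWi.mono_set (Ioi_subset_Ioi (lt_of_lt_of_le one_pos (hβ1 0)).le))
  have t4 : Tendsto (fun n => |∫ t in Ioc (0:ℝ) (β n), f t| ^ p * ∫ t in Ioi (β n), w t ^ p)
      atTop (nhds 0) :=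
    squeeze_zero (fun n => mul_nonneg (hΦnn _) (setIntegral_nonneg measurableSet_Ioi
      (fun x hx => (hgpos x (lt_trans (lt_of_lt_of_le one_pos (hβ1 n)) hx)).le)))
      (fun n => (hβprop n).le) tendsto_one_div_add_atTop_nhds_zero_nat
  have hE : Tendsto (fun n =>
      (∫ x in Ioc (0:ℝ) (α n), w x ^ p * |∫ t in Ioc (0:ℝ) x, f t| ^ p)
        + 3^p * (|∫ t in Ioc (0:ℝ) (α n), f t| ^ p * ∫ t in Ioi (α n), w t ^ p)
        + 3^p * (∫ x in Ioi (β n), w x ^ p * |∫ t in Ioc (0:ℝ) x, f t| ^ p)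
        + 3^p * (|∫ t in Ioc (0:ℝ) (β n), f t| ^ p * ∫ t in Ioi (β n), w t ^ p))
      atTop (nhds 0) := by
    have h := ((t1.add (t2.const_mul (3^p))).add (t3.const_mul (3^p))).add (t4.const_mul (3^p))
    simpa using h
  have hnn : ∀ n : ℕ, 0 ≤ ∫ x in Ioi (0:ℝ),
      |w x * ∫ t in Ioc (0:ℝ) x, (f t - (Icc (α n) (β n)).indicator f t)| ^ p :=
    fun n => integral_nonneg (fun x => Real.rpow_nonneg (abs_nonneg _) p)
  refine squeeze_zero (fun n => Real.rpow_nonneg (hnn n) _)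
    (fun n => Real.rpow_le_rpow (hnn n) (main n) (by positivity)) ?_
  have hcont : ContinuousAt (fun y : ℝ => y ^ (1/p)) 0 :=
    Real.continuousAt_rpow_const 0 (1/p) (Or.inr (by positivity))
  have hcomp := hcont.tendsto.comp hE
  rw [Function.comp_def] at hcomp
  rwa [Real.zero_rpow (by positivity : (0:ℝ) < 1/p).ne'] at hcomp
end

section
/- Let I = (c,d) ⊂ ℝ, p ∈ (1,∞), w : I → (0,∞) measurable with w^p locally integrable near d, let [a,b] ⊂ I with a < b, and let h ∈ L^1([a,b]). Then for every ε > 0 there exists a measurable function f supported in [a,b] with |f| = |h| on (a,b) and (∫_a^b |w(x) ∫_c^x f(t) dt|^p dx)^{1/p} < ε. -/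
open MeasureTheory Set Filter
open Topology

theorem stmt2 (c d p : ℝ) (hcd : c < d) (hp : 1 < p) (w : ℝ → ℝ) (hwm : Measurable w)
    (hwpos : ∀ x ∈ Ioo c d, 0 < w x)
    (hwint : ∀ x ∈ Ioo c d, IntegrableOn (fun t => w t ^ p) (Ioo x d))
    (a b : ℝ) (hca : c < a) (hab : a < b) (hbd : b < d)
    (h : ℝ → ℝ) (hhm : Measurable h) (hh : IntegrableOn h (Icc a b))
    (ε : ℝ) (hε : 0 < ε) :
    ∃ f : ℝ → ℝ, Measurable f ∧ (∀ x, x ∉ Icc a b → f x = 0) ∧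
      (∀ x ∈ Ioo a b, |f x| = |h x|) ∧
      (∫ x in Ioc a b, |w x * ∫ t in Ioc c x, f t| ^ p) ^ (1/p) < ε := by
  have hp0 : 0 < p := lt_trans one_pos hp
  have hpne : p ≠ 0 := ne_of_gt hp0
  -- auxiliary nonnegative integrable density
  set h' : ℝ → ℝ := (Ioc a b).indicator (fun t => |h t|) with hh'def
  have hh'm : Measurable h' := hhm.abs.indicator measurableSet_Ioc
  have hh'nn : ∀ t, 0 ≤ h' t := fun t =>
    Set.indicator_nonneg (fun t _ => abs_nonneg _) t
  have hh'int : Integrable h' :=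
    (integrable_indicator_iff measurableSet_Ioc).2 ((hh.mono_set Ioc_subset_Icc_self).abs)
  -- the cumulative mass function
  set H : ℝ → ℝ := fun x => ∫ t in a..x, h' t with hHdef
  have Hcont : Continuous H := hh'int.continuous_primitive a
  have Hdiff : ∀ x y : ℝ, x ≤ y → H y - H x = ∫ t in Ioc x y, h' t := by
    intro x y hxy
    rw [hHdef]
    dsimp only
    rw [intervalIntegral.integral_interval_sub_left hh'int.intervalIntegrable
      hh'int.intervalIntegrable, intervalIntegral.integral_of_le hxy]
  have Hmono : Monotone H := by
    intro x y hxy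
    have h1 := Hdiff x y hxy
    have h2 : 0 ≤ ∫ t in Ioc x y, h' t :=
      setIntegral_nonneg measurableSet_Ioc (fun t _ => hh'nn t)
    linarith
  have Ha : H a = 0 := intervalIntegral.integral_same
  set M := H b with hMdef
  have hM0 : 0 ≤ M := by rw [hMdef, ← Ha]; exact Hmono hab.le
  rcases eq_or_lt_of_le hM0 with hM | hM
  · -- degenerate case: h vanishes a.e. on [a,b]
    refine ⟨(Ioo a b).indicator h, hhm.indicator measurableSet_Ioo, ?_, ?_, ?_⟩
    · intro x hx
      exact indicator_of_notMem (fun hx' => hx (Ioo_subset_Icc_self hx')) h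
    · intro x hx; rw [indicator_of_mem hx]
    · have hint : Integrable ((Ioo a b).indicator h) :=
        (integrable_indicator_iff measurableSet_Ioo).2 (hh.mono_set Ioo_subset_Icc_self)
      have htot : (∫ t, h' t) = 0 := by
        rw [hh'def, integral_indicator measurableSet_Ioc]
        have e1 : (∫ t in Ioc a b, |h t|) = M := by
          rw [hMdef, hHdef]
          dsimp only
          rw [intervalIntegral.integral_of_le hab.le]
          refine setIntegral_congr_fun measurableSet_Ioc (fun t ht => ?_)
          exact (Set.indicator_of_mem ht (fun t => |h t|)).symm
        rw [e1, ← hM]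
      have hint0 : ∀ x : ℝ, (∫ t in Ioc c x, (Ioo a b).indicator h t) = 0 := by
        intro x
        have hle : ∀ t, |(Ioo a b).indicator h t| ≤ h' t := by
          intro t
          by_cases ht : t ∈ Ioo a b
          · rw [indicator_of_mem ht, hh'def,
              indicator_of_mem (Ioo_subset_Ioc_self ht)]
          · rw [indicator_of_notMem ht]; simpa using hh'nn t
        have h1 : |∫ t in Ioc c x, (Ioo a b).indicator h t|
            ≤ ∫ t in Ioc c x, |(Ioo a b).indicator h t| := by
          simpa [Real.norm_eq_abs] using
            norm_integral_le_integral_norm (μ := volume.restrict (Ioc c x))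
              ((Ioo a b).indicator h)
        have h2 : (∫ t in Ioc c x, |(Ioo a b).indicator h t|)
            ≤ ∫ t in Ioc c x, h' t :=
          setIntegral_mono_on hint.abs.integrableOn hh'int.integrableOn
            measurableSet_Ioc (fun t _ => hle t)
        have h3 : (∫ t in Ioc c x, h' t) ≤ ∫ t, h' t :=
          setIntegral_le_integral hh'int (ae_of_all _ hh'nn)
        have : |∫ t in Ioc c x, (Ioo a b).indicator h t| ≤ 0 := by
          rw [← htot] at *; linarith
        exact abs_eq_zero.mp (le_antisymm this (abs_nonneg _))
      have hzero : (∫ x in Ioc a b,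
          |w x * ∫ t in Ioc c x, (Ioo a b).indicator h t| ^ p) = 0 := by
        have e : ∀ x ∈ Ioc a b,
            |w x * ∫ t in Ioc c x, (Ioo a b).indicator h t| ^ p = (0:ℝ) := by
          intro x _
          rw [hint0 x, mul_zero, abs_zero, Real.zero_rpow hpne]
        rw [setIntegral_congr_fun measurableSet_Ioc e]
        simp
      rw [hzero, Real.zero_rpow (by positivity : (1:ℝ)/p ≠ 0)]
      exact hε
  · -- main case: M > 0
    set C := ∫ x in Ioc a b, w x ^ p with hCdef
    have hC0 : 0 ≤ C :=
      setIntegral_nonneg measurableSet_Ioc (fun x hx =>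
        Real.rpow_nonneg
          (hwpos x ⟨lt_trans hca hx.1, lt_of_le_of_lt hx.2 hbd⟩).le p)
    have hwC : IntegrableOn (fun x => w x ^ p) (Ioc a b) := by
      have hmid : (c+a)/2 ∈ Ioo c d := ⟨by linarith, by linarith⟩
      exact (hwint _ hmid).mono_set
        (fun x hx => ⟨by simp only [mem_Ioc] at hx; linarith [hx.1],
          lt_of_le_of_lt hx.2 hbd⟩)
    obtain ⟨n₀, hn₀⟩ := exists_nat_gt (M * C ^ (1/p) / ε)
    set n := n₀ + 1 with hndef
    have hn : M * C ^ (1/p) / ε < (n:ℝ) := by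
      refine lt_of_lt_of_le hn₀ ?_
      exact_mod_cast Nat.le_succ n₀
    have hnpos : (0:ℝ) < n := by
      refine lt_of_le_of_lt (div_nonneg (mul_nonneg hM.le (Real.rpow_nonneg hC0 _)) hε.le) hn
    set δ := M / n with hδdef
    have hδpos : 0 < δ := div_pos hM hnpos
    have hnδ : (n:ℝ) * δ = M := by
      rw [hδdef]; field_simp
    have hfinal : δ * C ^ (1/p) < ε := by
      have h1 : M * C ^ (1/p) < (n:ℝ) * ε := (div_lt_iff₀ hε).mp hn
      rw [hδdef, div_mul_eq_mul_div, div_lt_iff₀ hnpos]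
      linarith
    -- the partition points
    set S : ℕ → Set ℝ := fun k => {y | y ∈ Icc a b ∧ (k:ℝ) * δ ≤ H y} with hSdef
    have hSclosed : ∀ k, IsClosed (S k) := by
      intro k
      have e : S k = Icc a b ∩ H ⁻¹' (Ici ((k:ℝ) * δ)) := by
        ext y; simp [hSdef, and_comm]
      rw [e]
      exact isClosed_Icc.inter (isClosed_Ici.preimage Hcont)
    have hSb : ∀ k, k ≤ n → b ∈ S k := by
      intro k hk
      refine ⟨right_mem_Icc.mpr hab.le, ?_⟩
      have : (k:ℝ) * δ ≤ (n:ℝ) * δ := by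
        apply mul_le_mul_of_nonneg_right _ hδpos.le
        exact_mod_cast hk
      rw [← hMdef]
      linarith [hnδ]
    have hSbdd : ∀ k, BddBelow (S k) := fun k => ⟨a, fun y hy => hy.1.1⟩
    set X : ℕ → ℝ := fun k => sInf (S k) with hXdef
    have hXmem : ∀ k, k ≤ n → X k ∈ S k := fun k hk =>
      (hSclosed k).csInf_mem ⟨b, hSb k hk⟩ (hSbdd k)
    have hXicc : ∀ k, k ≤ n → X k ∈ Icc a b := fun k hk => (hXmem k hk).1
    have hXH : ∀ k, k ≤ n → H (X k) = (k:ℝ) * δ := by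
      intro k hk
      refine le_antisymm ?_ (hXmem k hk).2
      by_contra hlt
      push_neg at hlt
      have hXa : a < X k := by
        rcases lt_or_eq_of_le (hXicc k hk).1 with h1 | h1
        · exact h1
        · exfalso
          rw [← h1, Ha] at hlt
          have : (0:ℝ) ≤ (k:ℝ) * δ := mul_nonneg (Nat.cast_nonneg k) hδpos.le
          linarith
      have hev1 : ∀ᶠ y in 𝓝 (X k), (k:ℝ) * δ < H y :=
        (Hcont.tendsto (X k)).eventually (eventually_gt_nhds hlt)
      have hev2 : ∀ᶠ y in 𝓝 (X k), a < y := eventually_gt_nhds hXa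
      have hev3 : ∀ᶠ y in 𝓝[<] (X k), ((k:ℝ) * δ < H y ∧ a < y) ∧ y < X k :=
        (((hev1.and hev2).filter_mono nhdsWithin_le_nhds).and
          (eventually_mem_nhdsWithin : ∀ᶠ y in 𝓝[<] (X k), y ∈ Iio (X k)))
      obtain ⟨y, ⟨hy1, hy2⟩, hy3⟩ := hev3.exists
      have hyS : y ∈ S k :=
        ⟨⟨hy2.le, le_trans hy3.le (hXicc k hk).2⟩, hy1.le⟩
      exact absurd (csInf_le (hSbdd k) hyS) (not_le.mpr hy3)
    have hXmono : ∀ k, k + 1 ≤ n → X k ≤ X (k+1) := by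
      intro k hk
      refine csInf_le_csInf (hSbdd k) ⟨b, hSb (k+1) hk⟩ (fun y hy => ⟨hy.1, ?_⟩)
      refine le_trans ?_ hy.2
      apply mul_le_mul_of_nonneg_right _ hδpos.le
      exact_mod_cast Nat.le_succ k
    have hX0 : X 0 = a := by
      apply le_antisymm
      · exact csInf_le (hSbdd 0) ⟨left_mem_Icc.mpr hab.le, by simp [Ha]⟩
      · exact (hXicc 0 (Nat.zero_le n)).1
    -- the sign function
    set sgn : ℝ → ℝ := fun u => if Even ⌊u / δ⌋ then 1 else -1 with hsgndef
    have hsgnm : Measurable sgn :=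
      (Measurable.of_discrete (f := fun z : ℤ => if Even z then (1:ℝ) else -1)).comp
        (Int.measurable_floor.comp (measurable_id.div_const δ))
    have hsabs : ∀ u, |sgn u| = 1 := by
      intro u; rw [hsgndef]; dsimp only; split <;> simp
    set g : ℝ → ℝ := fun t => |h t| * sgn (H t) with hgdef
    set f : ℝ → ℝ := (Ioo a b).indicator g with hfdef
    have hfm : Measurable f :=
      (hhm.abs.mul (hsgnm.comp Hcont.measurable)).indicator measurableSet_Ioo
    have hgabs : ∀ t, |g t| = |h t| := by
      intro t; rw [hgdef]; dsimp only
      rw [abs_mul, hsabs, mul_one, abs_abs]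
    refine ⟨f, hfm, ?_, ?_, ?_⟩
    · intro x hx
      exact indicator_of_notMem (fun hx' => hx (Ioo_subset_Icc_self hx')) g
    · intro x hx
      rw [hfdef, indicator_of_mem hx, hgabs]
    · -- the quantitative bound
      have hfle : ∀ t, |f t| ≤ h' t := by
        intro t
        rw [hfdef]
        by_cases ht : t ∈ Ioo a b
        · rw [indicator_of_mem ht, hgabs, hh'def,
            indicator_of_mem (Ioo_subset_Ioc_self ht)]
        · rw [indicator_of_notMem ht]; simpa using hh'nn t
      have hfint : Integrable f :=
        hh'int.mono' hfm.aestronglyMeasurable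
          (ae_of_all _ (fun t => by rw [Real.norm_eq_abs]; exact hfle t))
      set F : ℝ → ℝ := fun x => ∫ t in Ioc a x, f t with hFdef
      have hFsplit : ∀ x y : ℝ, x ≤ y → a ≤ x →
          F y = F x + ∫ t in Ioc x y, f t := by
        intro x y hxy hax
        rw [hFdef]
        dsimp only
        rw [← Ioc_union_Ioc_eq_Ioc hax hxy,
          setIntegral_union (Ioc_disjoint_Ioc_of_le le_rfl) measurableSet_Ioc
            hfint.integrableOn hfint.integrableOn]
      have hsign : ∀ k, k + 1 ≤ n → ∀ t ∈ Ioo (X k) (X (k+1)),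
          f t = (if Even k then 1 else -1) * h' t := by
        intro k hk t ht
        have hk' : k ≤ n := Nat.le_of_succ_le hk
        have hta : a < t := lt_of_le_of_lt (hXicc k hk').1 ht.1
        have htb : t < b := lt_of_lt_of_le ht.2 (hXicc (k+1) hk).2
        have htIoo : t ∈ Ioo a b := ⟨hta, htb⟩
        have hH1 : (k:ℝ) * δ ≤ H t := by
          rw [← hXH k hk']; exact Hmono ht.1.le
        have hH2 : H t < ((k:ℝ) + 1) * δ := by
          by_contra hge
          push_neg at hge
          have htS : t ∈ S (k+1) := ⟨⟨hta.le, htb.le⟩, by push_cast; linarith⟩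
          exact absurd (csInf_le (hSbdd (k+1)) htS) (not_le.mpr ht.2)
        have hfloor : ⌊H t / δ⌋ = (k:ℤ) := by
          rw [Int.floor_eq_iff]
          constructor
          · rw [le_div_iff₀ hδpos]; push_cast; linarith
          · rw [div_lt_iff₀ hδpos]; push_cast; linarith
        rw [hfdef, indicator_of_mem htIoo, hgdef]
        dsimp only
        rw [hsgndef]
        dsimp only
        rw [hfloor]
        have e : h' t = |h t| := indicator_of_mem (Ioo_subset_Ioc_self htIoo) _
        rw [e]
        by_cases hek : Even k <;> simp [hek, Int.even_coe_nat, mul_comm]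
      have hstep : ∀ k, k + 1 ≤ n → ∀ x ∈ Icc (X k) (X (k+1)),
          F x = F (X k) + (if Even k then 1 else -1) * (H x - H (X k)) := by
        intro k hk x hx
        have hk' : k ≤ n := Nat.le_of_succ_le hk
        have hax : a ≤ X k := (hXicc k hk').1
        rw [hFsplit (X k) x hx.1 hax]
        congr 1
        rw [integral_Ioc_eq_integral_Ioo,
          setIntegral_congr_fun measurableSet_Ioo
            (fun t ht => hsign k hk t ⟨ht.1, lt_of_lt_of_le ht.2 hx.2⟩),
          integral_const_mul, ← integral_Ioc_eq_integral_Ioo,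
          ← Hdiff (X k) x hx.1]
      have hFX : ∀ k, k ≤ n → F (X k) = if Even k then 0 else δ := by
        intro k
        induction k with
        | zero =>
          intro _
          simp [hFdef, hX0]
        | succ k ih =>
          intro hk
          have hk' : k ≤ n := Nat.le_of_succ_le hk
          have hmem : X (k+1) ∈ Icc (X k) (X (k+1)) :=
            right_mem_Icc.mpr (hXmono k hk)
          rw [hstep k hk _ hmem, ih hk', hXH k hk', hXH (k+1) hk]
          push_cast
          by_cases hek : Even k <;>
            simp [hek, Nat.even_add_one] <;> ring
      have hFb : ∀ x ∈ Icc a b, 0 ≤ F x ∧ F x ≤ δ := by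
        intro x hx
        by_cases hxn : X n ≤ x
        · have hsplit := hFsplit (X n) x hxn (hXicc n le_rfl).1
          have hzero : (∫ t in Ioc (X n) x, f t) = 0 := by
            have h1 : |∫ t in Ioc (X n) x, f t| ≤ ∫ t in Ioc (X n) x, |f t| := by
              simpa [Real.norm_eq_abs] using
                norm_integral_le_integral_norm (μ := volume.restrict (Ioc (X n) x)) f
            have h2 : (∫ t in Ioc (X n) x, |f t|) ≤ ∫ t in Ioc (X n) x, h' t :=
              setIntegral_mono_on hfint.abs.integrableOn hh'int.integrableOn
                measurableSet_Ioc (fun t _ => hfle t)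
            have h3 : (∫ t in Ioc (X n) x, h' t) = H x - H (X n) :=
              (Hdiff _ _ hxn).symm
            have h4 : H x ≤ M := by rw [hMdef]; exact Hmono hx.2
            have h5 : H (X n) = (n:ℝ) * δ := hXH n le_rfl
            have h6 : |∫ t in Ioc (X n) x, f t| ≤ 0 := by
              linarith [h1, h2, h3, h4, h5, hnδ]
            exact abs_eq_zero.mp (le_antisymm h6 (abs_nonneg _))
          rw [hsplit, hzero, add_zero, hFX n le_rfl]
          by_cases hen : Even n <;> simp [hen, hδpos.le]
        · push_neg at hxn
          have hex : ∃ j, x ≤ X (j+1) := ⟨n₀, by rw [← hndef]; exact hxn.le⟩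
          have hk1 : x ≤ X (Nat.find hex + 1) := Nat.find_spec hex
          have hkn : Nat.find hex + 1 ≤ n := by
            have : Nat.find hex ≤ n₀ :=
              Nat.find_le (by rw [← hndef]; exact hxn.le)
            omega
          have hk0 : X (Nat.find hex) ≤ x := by
            rcases Nat.eq_zero_or_pos (Nat.find hex) with hk | hk
            · rw [hk, hX0]; exact hx.1
            · obtain ⟨j, hj⟩ := Nat.exists_eq_succ_of_ne_zero (Nat.pos_iff_ne_zero.mp hk)
              have hmin := Nat.find_min hex (m := j) (by omega)
              push_neg at hmin
              rw [hj]
              exact hmin.le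
          have hstep' := hstep _ hkn x ⟨hk0, hk1⟩
          have hH1 : H (X (Nat.find hex)) ≤ H x := Hmono hk0
          have hH2 : H x ≤ H (X (Nat.find hex + 1)) := Hmono hk1
          rw [hXH _ (Nat.le_of_succ_le hkn)] at hstep' hH1
          rw [hXH _ hkn] at hH2
          rw [hstep', hFX _ (Nat.le_of_succ_le hkn)]
          push_cast at hH2
          by_cases hek : Even (Nat.find hex) <;>
            simp [hek] <;> constructor <;> linarith
      have hFc : ∀ x ∈ Ioc a b, (∫ t in Ioc c x, f t) = F x := by
        intro x hx
        rw [← Ioc_union_Ioc_eq_Ioc hca.le hx.1.le,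
          setIntegral_union (Ioc_disjoint_Ioc_of_le le_rfl) measurableSet_Ioc
            hfint.integrableOn hfint.integrableOn]
        have hz : (∫ t in Ioc c a, f t) = 0 := by
          rw [setIntegral_congr_fun measurableSet_Ioc
            (fun t ht => indicator_of_notMem
              (fun hmem => absurd hmem.1 (not_lt.mpr ht.2)) g)]
          simp
        rw [hz, zero_add]
      -- final estimate
      have hGle : ∀ x ∈ Ioc a b,
          |w x * ∫ t in Ioc c x, f t| ^ p ≤ δ ^ p * w x ^ p := by
        intro x hx
        have hxcd : x ∈ Ioo c d := ⟨lt_trans hca hx.1, lt_of_le_of_lt hx.2 hbd⟩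
        have hw := hwpos x hxcd
        obtain ⟨hF0, hFδ⟩ := hFb x (Ioc_subset_Icc_self hx)
        rw [hFc x hx, abs_mul, abs_of_pos hw, abs_of_nonneg hF0]
        calc (w x * F x) ^ p ≤ (w x * δ) ^ p :=
              Real.rpow_le_rpow (mul_nonneg hw.le hF0)
                (mul_le_mul_of_nonneg_left hFδ hw.le) hp0.le
          _ = δ ^ p * w x ^ p := by
              rw [Real.mul_rpow hw.le hδpos.le, mul_comm]
      have hIle : (∫ x in Ioc a b, |w x * ∫ t in Ioc c x, f t| ^ p)
          ≤ δ ^ p * C := by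
        rw [hCdef, ← integral_const_mul]
        refine integral_mono_of_nonneg
          (ae_of_all _ fun x => Real.rpow_nonneg (abs_nonneg _) p)
          (hwC.const_mul _) ?_
        exact (ae_restrict_iff' measurableSet_Ioc).mpr (ae_of_all _ hGle)
      have hI0 : 0 ≤ ∫ x in Ioc a b, |w x * ∫ t in Ioc c x, f t| ^ p :=
        setIntegral_nonneg measurableSet_Ioc
          (fun x _ => Real.rpow_nonneg (abs_nonneg _) p)
      calc (∫ x in Ioc a b, |w x * ∫ t in Ioc c x, f t| ^ p) ^ (1/p)
          ≤ (δ ^ p * C) ^ (1/p) :=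
            Real.rpow_le_rpow hI0 hIle (by positivity)
        _ = δ * C ^ (1/p) := by
            rw [Real.mul_rpow (Real.rpow_nonneg hδpos.le p) hC0,
              ← Real.rpow_mul hδpos.le, mul_one_div, div_self hpne,
              Real.rpow_one]
        _ < ε := hfinal
end

section
/- Let I = (c,d) ⊂ ℝ, p ∈ (1,∞), w : I → (0,∞) measurable with w^p locally integrable near d, and let g : I → ℝ be measurable. If the set {x ∈ I : g(x) ≠ 0} has positive Lebesgue measure, then sup over nonzero f in Ch_{p,w}(I) of (∫_I |f g|) / ‖f‖_{Ch_{p,w}(I)} = ∞. Consequently the Köthe dual (associate space) of Ch_{p,w}(I) is {0}. -/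
open MeasureTheory Set Filter

/-- membership in the altered Cesàro space `Ch_{p,w}((c,d))` (case ν = 1) -/
def memCh (c d p : ℝ) (w f : ℝ → ℝ) : Prop :=
  Measurable f ∧ (∀ x ∈ Ioo c d, IntegrableOn f (Ioc c x)) ∧
    IntegrableOn (fun x => |w x * ∫ t in Ioc c x, f t| ^ p) (Ioo c d)

/-- seminorm of the altered Cesàro space -/
noncomputable def chNorm (c d p : ℝ) (w f : ℝ → ℝ) : ℝ :=
  (∫ x in Ioo c d, |w x * ∫ t in Ioc c x, f t| ^ p) ^ (1/p)

/-- auxiliary alternating sum -/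
noncomputable def altS (L t : ℝ) (N : ℕ) : ℝ :=
  ∑ k ∈ Finset.range N, (-1:ℝ)^k * (min t (((k:ℝ)+1)*L) - min t ((k:ℝ)*L))

lemma altS_spec {L : ℝ} (hL : 0 < L) :
    ∀ (N : ℕ) (t : ℝ), 0 ≤ t →
      (((N : ℝ) * L ≤ t → altS L t N = if Even N then 0 else L) ∧
       (t ≤ (N : ℝ) * L → 0 ≤ altS L t N ∧ altS L t N ≤ L)) := by
  intro N
  induction N with
  | zero =>
    intro t ht
    refine ⟨fun _ => by simp [altS], fun h => ?_⟩
    have ht0 : t = 0 := le_antisymm (by simpa using h) ht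
    simp [altS, ht0, hL.le]
  | succ N ih =>
    intro t ht
    have hN0 : (0:ℝ) ≤ (N:ℝ)*L := by positivity
    have hsum : altS L t (N+1) = altS L t N
        + (-1:ℝ)^N * (min t (((N:ℝ)+1)*L) - min t ((N:ℝ)*L)) := by
      simp [altS, Finset.sum_range_succ]
    constructor
    · intro h
      have hc : ((N:ℝ)+1)*L ≤ t := by push_cast at h; linarith
      have h' : (N:ℝ)*L ≤ t := by nlinarith
      rw [hsum, (ih t ht).1 h', min_eq_right hc, min_eq_right h']
      rcases Nat.even_or_odd N with he | ho
      · rw [he.neg_one_pow]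
        simp [he, Nat.even_add_one]
        ring
      · rw [ho.neg_one_pow]
        simp [Nat.even_add_one, Nat.not_even_iff_odd.2 ho]
        ring
    · intro h
      have hc : t ≤ ((N:ℝ)+1)*L := by push_cast at h; linarith
      rcases le_or_gt t ((N:ℝ)*L) with h1 | h1
      · have hb := (ih t ht).2 h1
        rw [hsum, min_eq_left (by linarith), min_eq_left h1]
        simpa using hb
      · rw [hsum, (ih t ht).1 h1.le, min_eq_right h1.le, min_eq_left hc]
        rcases Nat.even_or_odd N with he | ho
        · rw [he.neg_one_pow]
          simp only [he, if_pos]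
          constructor <;> nlinarith
        · rw [ho.neg_one_pow]
          simp only [Nat.not_even_iff_odd.2 ho, if_neg, not_false_iff]
          constructor <;> nlinarith
  
lemma altS_zero {L : ℝ} (hL : 0 < L) (N : ℕ) : altS L 0 N = 0 := by
  unfold altS
  apply Finset.sum_eq_zero
  intro k _
  have h1 : min (0:ℝ) (((k:ℝ)+1)*L) = 0 := min_eq_left (by positivity)
  have h2 : min (0:ℝ) ((k:ℝ)*L) = 0 := min_eq_left (by positivity)
  rw [h1, h2]; ring

lemma bdd_integrableOn {f : ℝ → ℝ} (hf : Measurable f) (hb : ∀ u, |f u| ≤ 1)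
    {s : Set ℝ} (hs : volume s ≠ ⊤) : IntegrableOn f s := by
  have h1 : IntegrableOn (fun _ : ℝ => (1:ℝ)) s :=
    MeasureTheory.integrableOn_const hs
  refine h1.mono' hf.aestronglyMeasurable (Filter.Eventually.of_forall fun u => ?_)
  rw [Real.norm_eq_abs]
  simpa using hb u

lemma altS_continuous (L : ℝ) (N : ℕ) : Continuous fun t => altS L t N := by
  unfold altS
  apply continuous_finset_sum
  intro k _
  exact continuous_const.mul ((continuous_id.min continuous_const).sub
    (continuous_id.min continuous_const))

set_option maxHeartbeats 2000000 in
theorem stmt3 (c d p : ℝ) (hcd : c < d) (hp : 1 < p) (w : ℝ → ℝ) (hwm : Measurable w)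
    (hwpos : ∀ x ∈ Ioo c d, 0 < w x)
    (hwint : ∀ x ∈ Ioo c d, IntegrableOn (fun t => w t ^ p) (Ioo x d))
    (g : ℝ → ℝ) (hgm : Measurable g)
    (hg : 0 < volume {x ∈ Ioo c d | g x ≠ 0}) :
    ∀ C : ℝ, 0 < C → ∃ f : ℝ → ℝ, memCh c d p w f ∧
      ENNReal.ofReal (C * chNorm c d p w f) <
        ∫⁻ x in Ioo c d, ENNReal.ofReal |f x * g x| := by
  intro C hC
  have hp0 : (0:ℝ) < p := by linarith
  have hp0' : p ≠ 0 := hp0.ne'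
  set S := {x ∈ Ioo c d | g x ≠ 0} with hSdef
  have hSm : MeasurableSet S := by
    have : S = Ioo c d ∩ {x | g x ≠ 0} := rfl
    rw [this]
    exact measurableSet_Ioo.inter (hgm (measurableSet_singleton 0).compl)
  -- choose α
  obtain ⟨α, hαc, hαd, hEpos⟩ : ∃ α, c < α ∧ α < d ∧ 0 < volume (S ∩ Ioi α) := by
    by_contra hcon
    push_neg at hcon
    have hnull : ∀ n : ℕ, volume (S ∩ Ioi (c + (d - c)/(n+2))) = 0 := by
      intro n
      have h1 : c < c + (d - c)/(n+2) := by
        have : (0:ℝ) < (d - c)/(n+2) := div_pos (by linarith) (by positivity)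
        linarith
      have h2 : c + (d - c)/(n+2) < d := by
        have : (d - c)/(n+2) < d - c := by
          apply div_lt_self (by linarith)
          push_cast; linarith
        linarith
      have := hcon _ h1 h2
      exact le_antisymm this (by simp)
    have hsub : S ⊆ ⋃ n : ℕ, S ∩ Ioi (c + (d - c)/(n+2)) := by
      intro u hu
      have huc : c < u := hu.1.1
      obtain ⟨n, hn⟩ := exists_nat_gt ((d - c)/(u - c))
      refine mem_iUnion.2 ⟨n, hu, ?_⟩
      have hu0 : (0:ℝ) < u - c := by linarith
      have hd0 : (0:ℝ) < d - c := by linarith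
      have h3 : d - c < (n+2) * (u - c) := by
        have := (div_lt_iff₀ hu0).1 hn
        nlinarith
      have : (d - c)/((n:ℝ)+2) < u - c := by
        rw [div_lt_iff₀ (by positivity)]
        nlinarith
      simp only [mem_Ioi]
      push_cast
      linarith
    have : volume S = 0 :=
      measure_mono_null hsub (measure_iUnion_null_iff.2 hnull)
    exact absurd this hg.ne'
  set E := S ∩ Ioi α with hEdef
  have hEm : MeasurableSet E := hSm.inter measurableSet_Ioi
  have hEsub : E ⊆ Ioo α d := fun x hx => ⟨hx.2, hx.1.1.2⟩
  have hEsubcd : E ⊆ Ioo c d := fun x hx => hx.1.1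
  have hEtop : volume E < ⊤ :=
    lt_of_le_of_lt (measure_mono hEsub) measure_Ioo_lt_top
  have hfin : ∀ {A : Set ℝ}, A ⊆ E → volume A ≠ ⊤ :=
    fun h => (lt_of_le_of_lt (measure_mono h) hEtop).ne
  have hνmono : ∀ {A B : Set ℝ}, A ⊆ B → B ⊆ E →
      (volume A).toReal ≤ (volume B).toReal := fun hAB hBE =>
    (ENNReal.toReal_le_toReal (hfin (hAB.trans hBE)) (hfin hBE)).2 (measure_mono hAB)
  set m := (volume E).toReal with hmdef
  have hm : 0 < m := ENNReal.toReal_pos hEpos.ne' hEtop.ne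
  -- the lintegral of |g| over E
  set a := ∫⁻ x in E, ENNReal.ofReal |g x| with hadef
  have ha : 0 < a := by
    rw [hadef, lintegral_pos_iff_support (hgm.abs.ennreal_ofReal)]
    have hsupp : E ⊆ Function.support fun x => ENNReal.ofReal |g x| := by
      intro x hx
      have hgx : g x ≠ 0 := hx.1.2
      simp only [Function.mem_support, ne_eq, ENNReal.ofReal_eq_zero, not_le]
      exact abs_pos.2 hgx
    calc 0 < volume E := hEpos
      _ = volume.restrict E E := (Measure.restrict_apply_self _ _).symm
      _ ≤ volume.restrict E (Function.support fun x => ENNReal.ofReal |g x|) :=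
          measure_mono hsupp
  set b := min a 1 with hbdef
  have hb0 : 0 < b := lt_min ha zero_lt_one
  have hbne : b ≠ ⊤ := ne_top_of_le_ne_top ENNReal.one_ne_top (min_le_right _ _)
  have hbtr : 0 < b.toReal := ENNReal.toReal_pos hb0.ne' hbne
  -- W
  set W := ∫ x in Ioo α d, w x ^ p with hWdef
  have hW0 : 0 ≤ W := by
    apply setIntegral_nonneg measurableSet_Ioo
    intro x hx
    exact Real.rpow_nonneg (hwpos x ⟨lt_trans hαc hx.1, hx.2⟩).le p
  -- choose n
  obtain ⟨n₁, hn₁⟩ := exists_nat_gt ((C * (m * W ^ (1/p))) / b.toReal)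
  set n : ℕ := n₁ + 1 with hndef
  have hn0 : (0:ℝ) < n := by positivity
  set L := m / n with hLdef
  have hL : 0 < L := div_pos hm hn0
  have hCL : C * (L * W ^ (1/p)) < b.toReal := by
    have h1 : (C * (m * W ^ (1/p))) / b.toReal < n := by
      have : (n₁ : ℝ) ≤ n := by rw [hndef]; push_cast; linarith
      linarith
    have h2 : C * (m * W ^ (1/p)) < n * b.toReal := by
      rw [div_lt_iff₀ hbtr] at h1; linarith
    have h3 : C * (L * W ^ (1/p)) = (C * (m * W ^ (1/p))) / n := by
      rw [hLdef]; ring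
    rw [h3, div_lt_iff₀ hn0]
    linarith
  set N : ℕ := n + 1 with hNdef
  have hmNL : m < (N:ℝ) * L := by
    have hnm : (n:ℝ) * L = m := by
      rw [hLdef]; field_simp
    have : (N:ℝ) * L = (n:ℝ)*L + L := by rw [hNdef]; push_cast; ring
    rw [this, hnm]; linarith
  -- τ
  set τ : ℝ → ℝ := fun x => (volume (E ∩ Ioc α x)).toReal with hτdef
  have hτapp : ∀ x, τ x = (volume (E ∩ Ioc α x)).toReal := fun _ => rfl
  have hτnn : ∀ x, 0 ≤ τ x := fun _ => ENNReal.toReal_nonneg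
  have hτmono : Monotone τ := by
    intro u v huv
    exact hνmono (inter_subset_inter_right E (Ioc_subset_Ioc_right huv))
      inter_subset_left
  have hτle : ∀ x, τ x ≤ m := by
    intro x
    exact hνmono inter_subset_left (subset_refl E)
  have hτ0 : ∀ x, x ≤ α → τ x = 0 := by
    intro x hx
    rw [hτapp, Ioc_eq_empty (by linarith : ¬ α < x)]
    simp
  have hkey : ∀ y x : ℝ, y ≤ x → τ x ≤ τ y + (x - y) := by
    intro y x hyx
    have hsub : E ∩ Ioc α x ⊆ (E ∩ Ioc α y) ∪ Ioc y x := by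
      rintro u ⟨huE, hu1, hu2⟩
      rcases le_or_gt u y with h | h
      · exact Or.inl ⟨huE, hu1, h⟩
      · exact Or.inr ⟨h, hu2⟩
    have h1 : volume (E ∩ Ioc α x) ≤ volume (E ∩ Ioc α y) + volume (Ioc y x) :=
      le_trans (measure_mono hsub) (measure_union_le _ _)
    have h2 : volume (Ioc y x) = ENNReal.ofReal (x - y) := Real.volume_Ioc
    have hne1 : volume (E ∩ Ioc α y) ≠ ⊤ := hfin inter_subset_left
    have hne2 : volume (Ioc y x) ≠ ⊤ := by rw [h2]; exact ENNReal.ofReal_ne_top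
    calc τ x = (volume (E ∩ Ioc α x)).toReal := rfl
      _ ≤ (volume (E ∩ Ioc α y) + volume (Ioc y x)).toReal := by
          apply (ENNReal.toReal_le_toReal (hfin inter_subset_left)
            (ENNReal.add_ne_top.2 ⟨hne1, hne2⟩)).2 h1
      _ = τ y + (x - y) := by
          rw [ENNReal.toReal_add hne1 hne2, h2, ENNReal.toReal_ofReal (by linarith)]
  have hτlip : LipschitzWith 1 τ := by
    apply LipschitzWith.of_dist_le_mul
    intro x y
    rw [Real.dist_eq, Real.dist_eq, NNReal.coe_one, one_mul]
    rcases le_total x y with h | h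
    · have h1 := hkey x y h
      have h2 := hτmono h
      rw [abs_le]
      constructor
      · have : |x - y| = y - x := by rw [abs_of_nonpos (by linarith)]; ring
        rw [this]; linarith
      · have : |x - y| = y - x := by rw [abs_of_nonpos (by linarith)]; ring
        rw [this]; linarith
    · have h1 := hkey y x h
      have h2 := hτmono h
      rw [abs_le, abs_of_nonneg (by linarith : (0:ℝ) ≤ x - y)]
      constructor <;> linarith
  have hτcont : Continuous τ := hτlip.continuous
  have hτm : Measurable τ := hτcont.measurable
  -- lemma K
  have hK : ∀ x s : ℝ, 0 ≤ s →
      (volume (E ∩ Ioc α x ∩ {u | τ u < s})).toReal = min (τ x) s := by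
    intro x s hs
    rcases lt_or_ge (τ x) s with hlt | hle
    · have he : E ∩ Ioc α x ∩ {u | τ u < s} = E ∩ Ioc α x := by
        apply inter_eq_left.2
        rintro u ⟨huE, hu1, hu2⟩
        have : τ u ≤ τ x := hτmono hu2
        exact lt_of_le_of_lt this hlt
      rw [he, min_eq_left hlt.le]
    · rw [min_eq_right hle]
      rcases eq_or_lt_of_le hs with hs0 | hs0
      · have he : E ∩ Ioc α x ∩ {u | τ u < s} = ∅ := by
          apply eq_empty_iff_forall_notMem.2
          rintro u ⟨_, hu⟩
          rw [← hs0] at hu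
          exact absurd hu (not_lt.2 (hτnn u))
        rw [he, ← hs0]
        simp
      · have hαx : α ≤ x := by
          by_contra hx
          push_neg at hx
          have := hτ0 x hx.le
          linarith [lt_of_lt_of_le hs0 hle]
        have hτα : τ α = 0 := hτ0 α le_rfl
        have hIVT := intermediate_value_Icc hαx hτcont.continuousOn
        apply le_antisymm
        · obtain ⟨y, hy, hτy⟩ := hIVT ⟨hτα.trans_le hs, hle⟩
          have hsub : E ∩ Ioc α x ∩ {u | τ u < s} ⊆ E ∩ Ioc α y := by
            rintro u ⟨⟨huE, hu1, hu2⟩, hus⟩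
            refine ⟨huE, hu1, ?_⟩
            by_contra hyu
            push_neg at hyu
            have : τ y ≤ τ u := hτmono hyu.le
            rw [hτy] at this
            exact absurd hus (not_lt.2 this)
          calc (volume (E ∩ Ioc α x ∩ {u | τ u < s})).toReal
              ≤ (volume (E ∩ Ioc α y)).toReal :=
                hνmono hsub inter_subset_left
            _ = s := by rw [← hτy]
        · apply le_of_forall_lt
          intro s' hs'
          rcases lt_or_ge s' 0 with h0 | h0
          · exact lt_of_lt_of_le h0 ENNReal.toReal_nonneg
          · set s'' := (s' + s)/2 with hs''def
            have hs''1 : s' < s'' := by rw [hs''def]; linarith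
            have hs''2 : s'' < s := by rw [hs''def]; linarith
            have hs''0 : 0 ≤ s'' := by linarith
            obtain ⟨y, hy, hτy⟩ := hIVT ⟨hτα.trans_le hs''0, by linarith⟩
            have hsub : E ∩ Ioc α y ⊆ E ∩ Ioc α x ∩ {u | τ u < s} := by
              rintro u ⟨huE, hu1, hu2⟩
              refine ⟨⟨huE, hu1, hu2.trans hy.2⟩, ?_⟩
              have : τ u ≤ τ y := hτmono hu2
              rw [hτy] at this
              exact lt_of_le_of_lt this hs''2
            calc s' < s'' := hs''1
              _ = (volume (E ∩ Ioc α y)).toReal := by rw [← hτy]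
              _ ≤ _ := hνmono hsub (inter_subset_left.trans inter_subset_left)
  -- the oscillating function
  set rad : ℝ → ℝ := fun t => if Even ⌊t / L⌋ then (1:ℝ) else (-1:ℝ) with hraddef
  have hradm : Measurable rad := by
    apply Measurable.ite _ measurable_const measurable_const
    have hmf : Measurable fun t : ℝ => ⌊t / L⌋ := Measurable.floor (by fun_prop)
    exact hmf (show MeasurableSet {z : ℤ | Even z} from .of_discrete)
  have hradpm : ∀ t, rad t = 1 ∨ rad t = -1 := by
    intro t
    rw [hraddef]
    by_cases h : Even ⌊t / L⌋
    · left; simp [h]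
    · right; simp [h]
  have hradk : ∀ (k : ℕ) (t : ℝ), (k:ℝ)*L ≤ t → t < ((k:ℝ)+1)*L →
      rad t = (-1:ℝ)^k := by
    intro k t h1 h2
    have hfl : ⌊t / L⌋ = (k : ℤ) := by
      rw [Int.floor_eq_iff]
      constructor
      · rw [le_div_iff₀ hL]; push_cast; linarith
      · rw [div_lt_iff₀ hL]; push_cast at h2 ⊢; linarith
    rw [hraddef]
    simp only [hfl, Int.even_coe_nat]
    rcases Nat.even_or_odd k with he | ho
    · rw [if_pos he, he.neg_one_pow]
    · rw [if_neg (Nat.not_even_iff_odd.2 ho), ho.neg_one_pow]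
  set f : ℝ → ℝ := E.indicator (fun u => rad (τ u)) with hfdef
  have hfm : Measurable f := (hradm.comp hτm).indicator hEm
  have hfabs : ∀ u, |f u| ≤ 1 := by
    intro u
    rw [hfdef]
    by_cases hu : u ∈ E
    · rw [indicator_of_mem hu]
      rcases hradpm (τ u) with h | h <;> rw [h] <;> simp
    · rw [indicator_of_notMem hu]; simp
  have hfE : ∀ u ∈ E, |f u| = 1 := by
    intro u hu
    rw [hfdef, indicator_of_mem hu]
    rcases hradpm (τ u) with h | h <;> rw [h] <;> simp
  -- the key computation of the primitive
  have hFG : ∀ x : ℝ, (∫ t in Ioc c x, f t) = altS L (τ x) N := by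
    intro x
    have hEIoc : Ioc c x ∩ E = E ∩ Ioc α x := by
      ext u
      constructor
      · rintro ⟨⟨h1, h2⟩, hu⟩
        exact ⟨hu, hu.2, h2⟩
      · rintro ⟨hu, h1, h2⟩
        exact ⟨⟨lt_trans hαc h1, h2⟩, hu⟩
    set B : ℕ → Set ℝ := fun k =>
      E ∩ Ioc α x ∩ τ ⁻¹' (Ico ((k:ℝ)*L) (((k:ℝ)+1)*L)) with hBdef
    have hBmeas : ∀ k, MeasurableSet (B k) := fun k =>
      ((hEm.inter measurableSet_Ioc).inter (hτm measurableSet_Ico))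
    have hBsub : ∀ k, B k ⊆ E := fun k =>
      (inter_subset_left.trans inter_subset_left)
    have hcov : E ∩ Ioc α x = ⋃ k ∈ Finset.range N, B k := by
      ext u
      simp only [mem_iUnion, Finset.mem_range, exists_prop]
      constructor
      · intro hu
        have h0 : 0 ≤ τ u := hτnn u
        have hum : τ u ≤ m := hτle u
        have hj0 : (0:ℤ) ≤ ⌊τ u / L⌋ := Int.le_floor.2 (by push_cast; exact div_nonneg h0 hL.le)
        set k := ⌊τ u / L⌋.toNat with hkdef
        have hkc : ((k:ℕ):ℝ) = ((⌊τ u / L⌋ : ℤ) : ℝ) := by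
          rw [hkdef]
          exact_mod_cast congrArg (fun z : ℤ => (z : ℝ)) (Int.toNat_of_nonneg hj0)
        have hk1 : (k:ℝ)*L ≤ τ u := by
          rw [hkc, ← le_div_iff₀ hL]
          exact Int.floor_le _
        have hk2 : τ u < ((k:ℝ)+1)*L := by
          rw [hkc, ← div_lt_iff₀ hL]
          exact Int.lt_floor_add_one _
        have hkN : k < N := by
          by_contra hcon
          push_neg at hcon
          have hc1 : (N:ℝ) ≤ (k:ℝ) := by exact_mod_cast hcon
          have hc2 : (N:ℝ)*L ≤ (k:ℝ)*L := by nlinarith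
          linarith
        exact ⟨k, hkN, hu, hk1, hk2⟩
      · rintro ⟨k, _, hu, _⟩
        exact hu
    have hBdisj : (↑(Finset.range N) : Set ℕ).Pairwise (Function.onFun Disjoint B) := by
      intro i _ j _ hij
      rw [Function.onFun, Set.disjoint_left]
      rintro u ⟨_, hu1⟩ ⟨_, hu2⟩
      simp only [mem_preimage, mem_Ico] at hu1 hu2
      apply hij
      have hi : (i:ℝ)*L < ((j:ℝ)+1)*L := lt_of_le_of_lt hu1.1 hu2.2
      have hj : (j:ℝ)*L < ((i:ℝ)+1)*L := lt_of_le_of_lt hu2.1 hu1.2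
      have hi' : (i:ℝ) < (j:ℝ)+1 := lt_of_mul_lt_mul_right (by linarith [hi]) hL.le
      have hj' : (j:ℝ) < (i:ℝ)+1 := lt_of_mul_lt_mul_right (by linarith [hj]) hL.le
      have hii : i < j + 1 := by exact_mod_cast hi'
      have hjj : j < i + 1 := by exact_mod_cast hj'
      omega
    have hBint : ∀ k ∈ Finset.range N,
        IntegrableOn (fun u => rad (τ u)) (B k) := by
      intro k _
      apply bdd_integrableOn (hradm.comp hτm) _ (hfin (hBsub k))
      intro u
      rcases hradpm (τ u) with h | h <;> rw [Function.comp_apply, h] <;> simp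
    have hvolB : ∀ k : ℕ, (volume (B k)).toReal
        = min (τ x) (((k:ℝ)+1)*L) - min (τ x) ((k:ℝ)*L) := by
      intro k
      have hBeq : B k = (E ∩ Ioc α x ∩ {u | τ u < ((k:ℝ)+1)*L})
          \ (E ∩ Ioc α x ∩ {u | τ u < (k:ℝ)*L}) := by
        ext u
        constructor
        · rintro ⟨⟨h1, h2⟩, h3⟩
          simp only [mem_preimage, mem_Ico] at h3
          exact ⟨⟨⟨h1, h2⟩, h3.2⟩, fun hc => absurd hc.2 (not_lt.2 h3.1)⟩
        · rintro ⟨⟨⟨h1, h2⟩, h4⟩, h5⟩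
          refine ⟨⟨h1, h2⟩, ?_⟩
          simp only [mem_preimage, mem_Ico]
          exact ⟨not_lt.1 (fun hc => h5 ⟨⟨h1, h2⟩, hc⟩), h4⟩
      have hsub2 : (E ∩ Ioc α x ∩ {u | τ u < (k:ℝ)*L})
          ⊆ (E ∩ Ioc α x ∩ {u | τ u < ((k:ℝ)+1)*L}) := by
        rintro u ⟨h1, h2⟩
        refine ⟨h1, ?_⟩
        simp only [mem_setOf_eq] at h2 ⊢
        nlinarith [hL]
      have hmeas2 : MeasurableSet (E ∩ Ioc α x ∩ {u | τ u < (k:ℝ)*L}) :=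
        (hEm.inter measurableSet_Ioc).inter (hτm measurableSet_Iio)
      rw [hBeq, measure_diff hsub2 hmeas2.nullMeasurableSet
        (hfin ((inter_subset_left.trans inter_subset_left))),
        ENNReal.toReal_sub_of_le (measure_mono hsub2)
        (hfin ((inter_subset_left.trans inter_subset_left))),
        hK x (((k:ℝ)+1)*L) (mul_nonneg (by positivity) hL.le),
        hK x ((k:ℝ)*L) (mul_nonneg (Nat.cast_nonneg k) hL.le)]
    have h1 : (∫ t in Ioc c x, f t) = ∫ t in Ioc c x ∩ E, rad (τ t) := by
      rw [hfdef]
      exact setIntegral_indicator hEm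
    rw [h1, hEIoc, hcov,
      integral_biUnion_finset (Finset.range N) (fun k _ => hBmeas k) hBdisj hBint]
    unfold altS
    apply Finset.sum_congr rfl
    intro k hk
    have hconst : EqOn (fun u => rad (τ u)) (fun _ => (-1:ℝ)^k) (B k) := by
      rintro u ⟨_, hu⟩
      simp only [mem_preimage, mem_Ico] at hu
      exact hradk k (τ u) hu.1 hu.2
    rw [setIntegral_congr_fun (hBmeas k) hconst, setIntegral_const, measureReal_def, hvolB k,
      smul_eq_mul, mul_comm]
  -- bounds on the primitive
  have hGbd : ∀ x : ℝ, 0 ≤ altS L (τ x) N ∧ altS L (τ x) N ≤ L := by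
    intro x
    exact (altS_spec hL N (τ x) (hτnn x)).2 (le_trans (hτle x) (le_of_lt hmNL))
  have hG0 : ∀ x : ℝ, x ≤ α → altS L (τ x) N = 0 := by
    intro x hx
    rw [hτ0 x hx, altS_zero hL]
  have hGm : Measurable fun x => altS L (τ x) N :=
    (altS_continuous L N).measurable.comp hτm
  -- the dominating function and integrability
  set ψ : ℝ → ℝ := (Ioo α d).indicator (fun x => L^p * w x ^ p) with hψdef
  have hψnn : ∀ x, 0 ≤ ψ x := by
    intro x
    rw [hψdef]
    apply indicator_nonneg
    intro y hy
    have := hwpos y ⟨lt_trans hαc hy.1, hy.2⟩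
    positivity
  have hψint : IntegrableOn ψ (Ioo c d) := by
    have h1 : IntegrableOn (fun x => L^p * w x ^ p) (Ioo α d) :=
      (hwint α ⟨hαc, hαd⟩).const_mul (L^p)
    exact (h1.integrable_indicator measurableSet_Ioo).integrableOn
  have hptwise : ∀ x ∈ Ioo c d, |w x * altS L (τ x) N| ^ p ≤ ψ x := by
    intro x hx
    by_cases hxα : α < x
    · have hx2 : x ∈ Ioo α d := ⟨hxα, hx.2⟩
      rw [hψdef, indicator_of_mem hx2]
      have hw := hwpos x hx
      have hGb := hGbd x
      have habs : |w x * altS L (τ x) N| = w x * altS L (τ x) N :=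
        abs_of_nonneg (mul_nonneg hw.le hGb.1)
      rw [habs]
      calc (w x * altS L (τ x) N) ^ p ≤ (w x * L) ^ p := by
            apply Real.rpow_le_rpow (mul_nonneg hw.le hGb.1)
              (mul_le_mul_of_nonneg_left hGb.2 hw.le) hp0.le
        _ = L^p * w x ^ p := by
            rw [Real.mul_rpow hw.le hL.le]; ring
    · push_neg at hxα
      rw [hG0 x hxα, mul_zero, abs_zero, Real.zero_rpow hp0',
        hψdef, indicator_of_notMem (fun hmem => absurd hmem.1 (not_lt.2 hxα))]
  have hGint : IntegrableOn (fun x => |w x * altS L (τ x) N| ^ p) (Ioo c d) := by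
    apply Integrable.mono hψint
    · apply Measurable.aestronglyMeasurable
      fun_prop
    · rw [ae_restrict_iff' measurableSet_Ioo]
      apply ae_of_all
      intro x hx
      rw [Real.norm_eq_abs, Real.norm_eq_abs,
        abs_of_nonneg (Real.rpow_nonneg (abs_nonneg _) p),
        abs_of_nonneg (hψnn x)]
      exact hptwise x hx
  -- membership
  have hmem : memCh c d p w f := by
    refine ⟨hfm, ?_, ?_⟩
    · intro x hx
      exact bdd_integrableOn hfm hfabs measure_Ioc_lt_top.ne
    · simp only [hFG]
      exact hGint
  -- norm bound
  have hnormnn : 0 ≤ chNorm c d p w f := by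
    unfold chNorm
    apply Real.rpow_nonneg
    apply setIntegral_nonneg measurableSet_Ioo
    intro x _
    exact Real.rpow_nonneg (abs_nonneg _) p
  have hnorm : chNorm c d p w f ≤ L * W ^ (1/p) := by
    unfold chNorm
    simp only [hFG]
    have hIψ : ∫ x in Ioo c d, ψ x = L^p * W := by
      have hss : Ioo c d ∩ Ioo α d = Ioo α d :=
        inter_eq_right.2 (fun y hy => ⟨lt_trans hαc hy.1, hy.2⟩)
      rw [hψdef, setIntegral_indicator measurableSet_Ioo, hss, hWdef,
        ← integral_const_mul]
    have hI1 : ∫ x in Ioo c d, |w x * altS L (τ x) N| ^ p ≤ L^p * W := by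
      rw [← hIψ]
      exact setIntegral_mono_on hGint hψint measurableSet_Ioo hptwise
    calc (∫ x in Ioo c d, |w x * altS L (τ x) N| ^ p) ^ (1/p)
        ≤ (L^p * W) ^ (1/p) := by
          apply Real.rpow_le_rpow (setIntegral_nonneg measurableSet_Ioo
            (fun x _ => Real.rpow_nonneg (abs_nonneg _) p)) hI1 (by positivity)
      _ = L * W ^ (1/p) := by
          rw [Real.mul_rpow (Real.rpow_nonneg hL.le p) hW0, one_div,
            Real.rpow_rpow_inv hL.le hp0']
  -- final estimate
  refine ⟨f, hmem, ?_⟩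
  have hright : b ≤ ∫⁻ x in Ioo c d, ENNReal.ofReal |f x * g x| := by
    have h1 : a = ∫⁻ x in E, ENNReal.ofReal |f x * g x| := by
      rw [hadef]
      apply setLIntegral_congr_fun hEm
      intro x hx
      dsimp only
      rw [abs_mul, hfE x hx, one_mul]
    calc b ≤ a := min_le_left _ _
      _ = ∫⁻ x in E, ENNReal.ofReal |f x * g x| := h1
      _ ≤ ∫⁻ x in Ioo c d, ENNReal.ofReal |f x * g x| :=
          lintegral_mono_set hEsubcd
  apply lt_of_lt_of_le _ hright
  rw [ENNReal.ofReal_lt_iff_lt_toReal (mul_nonneg hC.le hnormnn) hbne]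
  calc C * chNorm c d p w f ≤ C * (L * W ^ (1/p)) :=
        mul_le_mul_of_nonneg_left hnorm hC.le
    _ < b.toReal := hCL
end

section
/- Let I = (c,d) ⊂ ℝ, p ∈ (1,∞), w : I → (0,∞) measurable with ∫_x^d w^p < ∞ for all x ∈ I, and let g : I → ℝ be continuous. If sup over nonzero f ∈ Cs_{p,w}(I) of |∫_I f g| / ‖f‖_{Cs_{p,w}(I)} < ∞, where ‖f‖_{Cs_{p,w}(I)} = (∫_I [w(x) ∫_{(c,x]} |f|]^p dx)^{1/p}, then lim_{s → d⁻} g(s) = 0. -/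
open MeasureTheory Set Filter

/-- membership in the weighted Cesàro space `Cs_{p,w}((c,d))` (case ν = 1) -/
def memCs (c d p : ℝ) (w f : ℝ → ℝ) : Prop :=
  Measurable f ∧ (∀ x ∈ Ioo c d, IntegrableOn f (Ioc c x)) ∧
    IntegrableOn (fun x => (w x * ∫ t in Ioc c x, |f t|) ^ p) (Ioo c d)

/-- seminorm of the weighted Cesàro space -/
noncomputable def csNorm (c d p : ℝ) (w f : ℝ → ℝ) : ℝ :=
  (∫ x in Ioo c d, (w x * ∫ t in Ioc c x, |f t|) ^ p) ^ (1/p)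

theorem stmt4 (c d p : ℝ) (hcd : c < d) (hp : 1 < p) (w : ℝ → ℝ) (hwm : Measurable w)
    (hwpos : ∀ x ∈ Ioo c d, 0 < w x)
    (hwint : ∀ x ∈ Ioo c d, IntegrableOn (fun t => w t ^ p) (Ioo x d))
    (g : ℝ → ℝ) (hgc : ContinuousOn g (Ioo c d))
    (C : ℝ)
    (hC : ∀ f : ℝ → ℝ, memCs c d p w f →
      IntegrableOn (fun x => f x * g x) (Ioo c d) ∧
      |∫ x in Ioo c d, f x * g x| ≤ C * csNorm c d p w f) :
    Tendsto g (nhdsWithin d (Iio d)) (nhds 0) := by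
  have hp0 : (0:ℝ) < p := lt_trans one_pos hp
  have hp0' : p ≠ 0 := ne_of_gt hp0
  by_contra hcon
  rw [Metric.tendsto_nhds] at hcon
  push_neg at hcon
  obtain ⟨ε, hε, hfreq⟩ := hcon
  have hfreq : ∃ᶠ s in nhdsWithin d (Iio d), ε ≤ |g s| := by
    simpa [Real.dist_eq, not_lt] using hfreq
  -- midpoint
  set x₀ : ℝ := (c + d) / 2 with hx₀def
  have hx₀ : x₀ ∈ Ioo c d := ⟨by simp [hx₀def]; linarith, by simp [hx₀def]; linarith⟩
  -- key claim
  have key : ∀ η : ℝ, 0 < η → ε / 2 ≤ C * η ^ (1/p) := by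
    intro η hη
    -- find a₀ ∈ Ioo c d with small tail
    obtain ⟨a₀, ha₀, htail⟩ :
        ∃ a₀ ∈ Ioo x₀ d, ∫ x in Ioo a₀ d, w x ^ p < η := by
      have hmeas0 : Tendsto (fun a => (volume.restrict (Ioo x₀ d)) (Ioo a d))
          (nhdsWithin d (Iio d)) (nhds 0) := by
        have hub : Tendsto (fun a : ℝ => ENNReal.ofReal (d - a)) (nhdsWithin d (Iio d))
            (nhds 0) := by
          rw [show (0 : ENNReal) = ENNReal.ofReal (d - d) by simp]
          exact (ENNReal.continuous_ofReal.tendsto _).comp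
            ((tendsto_const_nhds.sub tendsto_id).mono_left nhdsWithin_le_nhds)
        refine tendsto_of_tendsto_of_tendsto_of_le_of_le tendsto_const_nhds hub
          (fun a => zero_le) (fun a => ?_)
        calc (volume.restrict (Ioo x₀ d)) (Ioo a d) ≤ volume (Ioo a d) :=
              Measure.restrict_apply_le _ _
          _ = ENNReal.ofReal (d - a) := Real.volume_Ioo
      have htail0 := (hwint x₀ hx₀).tendsto_setIntegral_nhds_zero hmeas0
      have hev : ∀ᶠ a in nhdsWithin d (Iio d),
          (∫ x in Ioo a d, w x ^ p ∂(volume.restrict (Ioo x₀ d))) < η := by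
        have := htail0.eventually (eventually_lt_nhds hη)
        exact this
      obtain ⟨a₀, h1, h2⟩ := (hev.and (Ioo_mem_nhdsLT_of_mem ⟨hx₀.2, le_refl d⟩)).exists
      refine ⟨a₀, h2, ?_⟩
      rw [Measure.restrict_restrict measurableSet_Ioo,
        inter_eq_self_of_subset_left (Ioo_subset_Ioo_left h2.1.le)] at h1
      exact h1
    have ha₀cd : a₀ ∈ Ioo c d := ⟨lt_trans hx₀.1 ha₀.1, ha₀.2⟩
    -- find s ∈ (a₀, d) with ε ≤ |g s|
    obtain ⟨s, hgs, hs⟩ := (hfreq.and_eventually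
      (Ioo_mem_nhdsLT_of_mem ⟨ha₀.2, le_refl d⟩)).exists
    have hscd : s ∈ Ioo c d := ⟨lt_trans ha₀cd.1 hs.1, hs.2⟩
    -- continuity of g at s
    obtain ⟨δ, hδ, hδg⟩ := Metric.continuousWithinAt_iff.1 (hgc s hscd) (ε/2) (by linarith)
    set a : ℝ := max a₀ (s - δ/2) with hadef
    set b : ℝ := min ((s + d)/2) (s + δ/2) with hbdef
    have has : a < s := max_lt hs.1 (by linarith)
    have hsb : s < b := lt_min (by linarith [hs.2]) (by linarith)
    have hab : a < b := lt_trans has hsb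
    have ha₀a : a₀ ≤ a := le_max_left _ _
    have hacd : a ∈ Ioo c d := ⟨lt_of_lt_of_le ha₀cd.1 ha₀a, lt_trans has hscd.2⟩
    have hbd : b < d := lt_of_le_of_lt (min_le_left _ _) (by linarith [hs.2])
    have hsubcd : Ioo a b ⊆ Ioo c d := Ioo_subset_Ioo hacd.1.le hbd.le
    have hba : 0 < b - a := by linarith
    -- points of Ioo a b are δ-close to s
    have hclose : ∀ t ∈ Ioo a b, dist t s < δ := by
      intro t ht
      rw [Real.dist_eq, abs_lt]
      have h1 : s - δ/2 ≤ a := le_max_right _ _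
      have h2 : b ≤ s + δ/2 := min_le_right _ _
      constructor
      · linarith [ht.1, hδ]
      · linarith [ht.2, hδ]
    set σ : ℝ := if 0 < g s then 1 else -1 with hσdef
    have hσ1 : |σ| = 1 := by rw [hσdef]; split_ifs <;> simp
    have hσgs : σ * g s = |g s| := by
      rw [hσdef]; split_ifs with h
      · rw [one_mul, abs_of_pos h]
      · rw [abs_of_nonpos (not_lt.1 h)]; ring
    have hlow : ∀ t ∈ Ioo a b, ε/2 ≤ σ * g t := by
      intro t ht
      have h1 : |g t - g s| < ε/2 := by
        have := hδg (hsubcd ht) (hclose t ht)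
        rwa [Real.dist_eq] at this
      have h2 : -|g t - g s| ≤ σ * (g t - g s) := by
        calc -|g t - g s| = -|σ * (g t - g s)| := by rw [abs_mul, hσ1, one_mul]
          _ ≤ σ * (g t - g s) := neg_abs_le _
      have h3 : σ * g t = σ * g s + σ * (g t - g s) := by ring
      rw [h3, hσgs]
      linarith
    set f : ℝ → ℝ := (Ioo a b).indicator (fun _ => σ) with hfdef
    have hfabs : ∀ t, |f t| = (Ioo a b).indicator (fun _ => (1:ℝ)) t := by
      intro t
      rw [hfdef]
      by_cases ht : t ∈ Ioo a b
      · rw [indicator_of_mem ht, indicator_of_mem ht, hσ1]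
      · rw [indicator_of_notMem ht, indicator_of_notMem ht, abs_zero]
    have hvol : volume (Ioo a b) = ENNReal.ofReal (b - a) := Real.volume_Ioo
    have hIfx : ∀ x : ℝ, (∫ t in Ioc c x, |f t|) = (volume (Ioc c x ∩ Ioo a b)).toReal := by
      intro x
      simp_rw [hfabs]
      rw [setIntegral_indicator measurableSet_Ioo, setIntegral_const, smul_eq_mul, mul_one, measureReal_def]
    have hI0 : ∀ x : ℝ, 0 ≤ ∫ t in Ioc c x, |f t| := fun x => by
      rw [hIfx]; exact ENNReal.toReal_nonneg
    have hfinvol : ∀ x : ℝ, volume (Ioc c x ∩ Ioo a b) ≠ ⊤ := fun x =>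
      ne_top_of_le_ne_top ENNReal.ofReal_ne_top (le_trans (measure_mono inter_subset_right) (le_of_eq hvol))
    have hIub : ∀ x : ℝ, (∫ t in Ioc c x, |f t|) ≤ b - a := by
      intro x
      rw [hIfx]
      calc (volume (Ioc c x ∩ Ioo a b)).toReal ≤ (ENNReal.ofReal (b-a)).toReal :=
            ENNReal.toReal_mono ENNReal.ofReal_ne_top
              (le_trans (measure_mono inter_subset_right) (le_of_eq hvol))
        _ = b - a := ENNReal.toReal_ofReal hba.le
    have hIa : ∀ x ≤ a, (∫ t in Ioc c x, |f t|) = 0 := by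
      intro x hx
      rw [hIfx]
      have hemp : Ioc c x ∩ Ioo a b = ∅ := by
        apply eq_empty_iff_forall_notMem.mpr
        rintro t ⟨⟨_, h1⟩, h2, _⟩
        linarith
      simp [hemp]
    have hImono : Monotone fun x : ℝ => ∫ t in Ioc c x, |f t| := by
      intro x y hxy
      simp only [hIfx]
      exact ENNReal.toReal_mono (hfinvol y)
        (measure_mono (inter_subset_inter_left _ (Ioc_subset_Ioc_right hxy)))
    set N : ℝ → ℝ := fun x => (w x * ∫ t in Ioc c x, |f t|) ^ p with hNdef
    have hNmeas : Measurable N := (Real.continuous_rpow_const hp0.le).measurable.comp (hwm.mul hImono.measurable)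
    have hN0 : ∀ x ≤ a, N x = 0 := fun x hx => by
      rw [hNdef]; simp only; rw [hIa x hx, mul_zero, Real.zero_rpow hp0']
    have hNnonneg : ∀ x ∈ Ioo c d, 0 ≤ N x := fun x hx =>
      Real.rpow_nonneg (mul_nonneg (hwpos x hx).le (hI0 x)) p
    have hNub : ∀ x ∈ Ioo a d, N x ≤ (b - a) ^ p * w x ^ p := by
      intro x hx
      have hxcd : x ∈ Ioo c d := ⟨lt_trans hacd.1 hx.1, hx.2⟩
      have hw0 : 0 ≤ w x := (hwpos x hxcd).le
      calc N x ≤ (w x * (b - a)) ^ p :=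
            Real.rpow_le_rpow (mul_nonneg hw0 (hI0 x))
              (mul_le_mul_of_nonneg_left (hIub x) hw0) hp0.le
        _ = (b - a) ^ p * w x ^ p := by
            rw [mul_comm (w x), Real.mul_rpow hba.le hw0]
    have hwintA : IntegrableOn (fun t => w t ^ p) (Ioo a d) := hwint a hacd
    have hNint2 : IntegrableOn N (Ioo a d) := by
      refine Integrable.mono (hwintA.const_mul ((b-a)^p)) hNmeas.aestronglyMeasurable.restrict ?_
      filter_upwards [ae_restrict_mem measurableSet_Ioo] with x hx
      rw [Real.norm_eq_abs, Real.norm_eq_abs,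
        abs_of_nonneg (hNnonneg x ⟨lt_trans hacd.1 hx.1, hx.2⟩)]
      exact le_trans (hNub x hx) (le_abs_self _)
    have hNint1 : IntegrableOn N (Ioc c a) :=
      (integrableOn_zero).congr_fun (fun x hx => (hN0 x hx.2).symm) measurableSet_Ioc
    have hsplitset : Ioo c d = Ioc c a ∪ Ioo a d := (Ioc_union_Ioo_eq_Ioo hacd.1.le hacd.2).symm
    have hNint : IntegrableOn N (Ioo c d) := by
      rw [hsplitset]; exact hNint1.union hNint2
    have hmem : memCs c d p w f := by
      refine ⟨measurable_const.indicator measurableSet_Ioo, fun x hx => ?_, hNint⟩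
      have hic : IntegrableOn (fun _ : ℝ => σ) (Ioo a b) :=
        integrableOn_const (by rw [hvol]; exact ENNReal.ofReal_ne_top)
      exact ((integrable_indicator_iff measurableSet_Ioo).2 hic).integrableOn
    obtain ⟨hint_fg, hbound⟩ := hC f hmem
    -- lower bound on the pairing
    have hfg_eq : (∫ x in Ioo c d, f x * g x) = ∫ x in Ioo a b, f x * g x := by
      have h1 : ∀ x : ℝ, f x * g x = (Ioo a b).indicator (fun y => f y * g y) x := by
        intro x
        by_cases hx : x ∈ Ioo a b
        · rw [indicator_of_mem hx]
        · rw [indicator_of_notMem hx, hfdef, indicator_of_notMem hx, zero_mul]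
      calc (∫ x in Ioo c d, f x * g x)
          = ∫ x in Ioo c d, (Ioo a b).indicator (fun y => f y * g y) x :=
            integral_congr_ae (ae_of_all _ fun x => h1 x)
        _ = ∫ x in Ioo c d ∩ Ioo a b, f x * g x := setIntegral_indicator measurableSet_Ioo
        _ = ∫ x in Ioo a b, f x * g x := by rw [inter_eq_self_of_subset_right hsubcd]
    have hvolab : (volume (Ioo a b)).toReal = b - a := by
      rw [hvol, ENNReal.toReal_ofReal hba.le]
    have hlow2 : ε/2 * (b - a) ≤ ∫ x in Ioo c d, f x * g x := by
      rw [hfg_eq, ← hvolab, ← measureReal_def, mul_comm, ← smul_eq_mul]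
      refine setIntegral_ge_of_const_le measurableSet_Ioo
        (by rw [hvol]; exact ENNReal.ofReal_ne_top) (fun x hx => ?_) (hint_fg.mono_set hsubcd)
      rw [hfdef, indicator_of_mem hx]
      exact hlow x hx
    -- upper bound on the norm
    have htail' : (∫ x in Ioo a d, w x ^ p) ≤ ∫ x in Ioo a₀ d, w x ^ p := by
      refine setIntegral_mono_set (hwint a₀ ha₀cd) ?_
        (HasSubset.Subset.eventuallyLE (Ioo_subset_Ioo_left ha₀a))
      filter_upwards [ae_restrict_mem measurableSet_Ioo] with x hx
      exact Real.rpow_nonneg (hwpos x ⟨lt_trans ha₀cd.1 hx.1, hx.2⟩).le p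
    have hNsum : (∫ x in Ioo c d, N x) ≤ (b - a) ^ p * η := by
      have hdisj : Disjoint (Ioc c a) (Ioo a d) := by
        rw [Set.disjoint_left]
        rintro x ⟨_, h1⟩ ⟨h2, _⟩
        exact absurd h2 (not_lt.2 h1)
      have hu : (∫ x in Ioo c d, N x) = (∫ x in Ioc c a, N x) + ∫ x in Ioo a d, N x := by
        rw [hsplitset]
        exact setIntegral_union hdisj measurableSet_Ioo hNint1 hNint2
      have h1 : (∫ x in Ioc c a, N x) = 0 := by
        rw [setIntegral_congr_fun measurableSet_Ioc
          (fun x (hx : x ∈ Ioc c a) => hN0 x hx.2)]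
        simp
      have h2 : (∫ x in Ioo a d, N x) ≤ ∫ x in Ioo a d, (b-a)^p * w x ^ p :=
        setIntegral_mono_on hNint2 (hwintA.const_mul _) measurableSet_Ioo hNub
      rw [integral_const_mul] at h2
      have h3 : (b-a)^p * (∫ x in Ioo a d, w x ^ p) ≤ (b-a)^p * η :=
        mul_le_mul_of_nonneg_left (le_of_lt (lt_of_le_of_lt htail' htail))
          (Real.rpow_nonneg hba.le p)
      rw [hu, h1, zero_add]
      exact le_trans h2 h3
    have hNnn : (0:ℝ) ≤ ∫ x in Ioo c d, N x := setIntegral_nonneg measurableSet_Ioo hNnonneg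
    have hcseq : csNorm c d p w f = (∫ x in Ioo c d, N x) ^ (1/p) := rfl
    have hnorm : csNorm c d p w f ≤ (b - a) * η ^ (1/p) := by
      rw [hcseq]
      calc (∫ x in Ioo c d, N x) ^ (1/p) ≤ ((b-a)^p * η) ^ (1/p) :=
            Real.rpow_le_rpow hNnn hNsum (by positivity)
        _ = (b - a) * η ^ (1/p) := by
            rw [Real.mul_rpow (Real.rpow_nonneg hba.le p) hη.le,
              ← Real.rpow_mul hba.le, mul_one_div_cancel hp0', Real.rpow_one]
    have hcsnn : 0 ≤ csNorm c d p w f := by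
      rw [hcseq]; exact Real.rpow_nonneg hNnn _
    have hchain : ε/2 * (b - a) ≤ C * csNorm c d p w f :=
      le_trans hlow2 (le_trans (le_abs_self _) hbound)
    have hC0 : 0 ≤ C := by
      by_contra h
      push_neg at h
      have h1 : C * csNorm c d p w f ≤ 0 := mul_nonpos_of_nonpos_of_nonneg h.le hcsnn
      have h2 : 0 < ε/2 * (b - a) := mul_pos (by linarith) hba
      linarith
    have hfin : ε/2 * (b-a) ≤ (C * η^(1/p)) * (b-a) := by
      calc ε/2 * (b-a) ≤ C * csNorm c d p w f := hchain
        _ ≤ C * ((b-a) * η^(1/p)) := mul_le_mul_of_nonneg_left hnorm hC0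
        _ = (C * η^(1/p)) * (b-a) := by ring
    exact le_of_mul_le_mul_right hfin hba

  -- conclude
  have hCpos : ε / 2 ≤ C := by
    have := key 1 one_pos
    simpa using this
  have hC0 : 0 < C := lt_of_lt_of_le (by linarith) hCpos
  have := key ((ε / (4 * C)) ^ p) (Real.rpow_pos_of_pos (by positivity) p)
  rw [← Real.rpow_mul (by positivity), mul_one_div_cancel hp0', Real.rpow_one] at this
  have : ε / 2 ≤ ε / 4 := by
    calc ε / 2 ≤ C * (ε / (4 * C)) := this
      _ = ε / 4 := by field_simp
  linarith
end

section
/- Let I = (c,d) ⊂ ℝ, p ∈ (1,∞), p' = p/(p−1), w : I → (0,∞) measurable with ∫_x^d w^p < ∞ for all x ∈ I. Suppose g̃ is locally absolutely continuous on I with g̃(x) = −∫_x^d Dg̃ for all x and Dg̃/w ∈ L^{p'}(I). Then for every f ∈ Cs_{p,w}(I), |∫_I f g̃| ≤ (∫_I |Dg̃/w|^{p'})^{1/p'} · (∫_I |w(x) ∫_c^x f|^p dx)^{1/p}. -/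
open MeasureTheory Set Filter

private lemma aux_cont (c d : ℝ) (f : ℝ → ℝ)
    (hfloc : ∀ x ∈ Ioo c d, IntegrableOn f (Ioc c x)) :
    ContinuousOn (fun x => ∫ t in Ioc c x, f t) (Ioo c d) := by
  intro x hx
  have hb : (x + d) / 2 ∈ Ioo c d := ⟨by linarith [hx.1, hx.2], by linarith [hx.2]⟩
  have hxb : x < (x + d) / 2 := by linarith [hx.2]
  have hint : IntegrableOn f (Icc c ((x + d) / 2)) := by
    rw [integrableOn_Icc_iff_integrableOn_Ioc]
    exact hfloc _ hb
  have hco := intervalIntegral.continuousOn_primitive (μ := volume) hint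
  exact (hco.continuousAt (Icc_mem_nhds hx.1 hxb)).continuousWithinAt

private noncomputable def Phi (c d : ℝ) (f v : ℝ → ℝ) : ℝ × ℝ → ℝ := fun z =>
  ((Ioo c d).indicator f z.1) * ((Ioo c d).indicator v z.2) *
    ({z : ℝ × ℝ | z.1 < z.2}.indicator (fun _ => (1 : ℝ)) z)

private lemma aux_fubini (c d : ℝ) (f v : ℝ → ℝ) (hfm : Measurable f) (hvm : Measurable v)
    (hfloc : ∀ t ∈ Ioo c d, IntegrableOn f (Ioo c t))
    (hGv : IntegrableOn (fun t => (∫ x in Ioo c t, |f x|) * |v t|) (Ioo c d)) :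
    IntegrableOn (fun x => f x * ∫ t in Ioo x d, v t) (Ioo c d) ∧
      ∫ x in Ioo c d, (f x * ∫ t in Ioo x d, v t)
        = ∫ t in Ioo c d, (∫ x in Ioo c t, f x) * v t := by
  have hS : MeasurableSet {z : ℝ × ℝ | z.1 < z.2} :=
    measurableSet_lt measurable_fst measurable_snd
  have hΦm : Measurable (Phi c d f v) :=
    (((hfm.indicator measurableSet_Ioo).comp measurable_fst).mul
      ((hvm.indicator measurableSet_Ioo).comp measurable_snd)).mul
      (measurable_const.indicator hS)
  have hxs : ∀ t : ℝ, (fun x => Phi c d f v (x, t)) =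
      fun x => ((Ioo c (min d t)).indicator f x) * ((Ioo c d).indicator v t) := by
    intro t; funext x
    simp only [Phi, Set.indicator_apply, mem_Ioo, mem_setOf_eq, lt_min_iff]
    split_ifs <;> (first | ring1 | tauto)
  have hts : ∀ x : ℝ, (fun t => Phi c d f v (x, t)) =
      fun t => ((Ioo c d).indicator f x) * ((Ioo (max c x) d).indicator v t) := by
    intro x; funext t
    simp only [Phi, Set.indicator_apply, mem_Ioo, mem_setOf_eq, max_lt_iff]
    split_ifs <;> (first | ring1 | tauto)
  have habs : ∀ (s : Set ℝ) (g : ℝ → ℝ) (x : ℝ),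
      |s.indicator g x| = s.indicator (fun y => |g y|) x := by
    intro s g x
    by_cases hxs : x ∈ s <;> simp [hxs]
  have hxp : ∀ x t : ℝ, Phi c d f v (x, t) =
      ((Ioo c (min d t)).indicator f x) * ((Ioo c d).indicator v t) :=
    fun x t => congrFun (hxs t) x
  have hint : Integrable (Phi c d f v) (volume.prod volume) := by
    rw [integrable_prod_iff' hΦm.aestronglyMeasurable]
    constructor
    · refine ae_of_all _ fun t => ?_
      rw [hxs t]
      by_cases h : t ∈ Ioo c d
      · have hmin : min d t = t := min_eq_right h.2.le
        rw [hmin]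
        exact ((integrable_indicator_iff measurableSet_Ioo).2 (hfloc t h)).mul_const _
      · simp only [Set.indicator_of_notMem h, mul_zero]
        exact integrable_zero _ _ _
    · have heq : (fun t => ∫ x, ‖Phi c d f v (x, t)‖) =
          (Ioo c d).indicator (fun t => (∫ x in Ioo c t, |f x|) * |v t|) := by
        funext t
        simp only [hxp]
        by_cases h : t ∈ Ioo c d
        · have hmin : min d t = t := min_eq_right h.2.le
          rw [Set.indicator_of_mem h (fun t => (∫ x in Ioo c t, |f x|) * |v t|),
            Set.indicator_of_mem h v, hmin]
          simp only [norm_mul, Real.norm_eq_abs]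
          rw [integral_mul_const]
          congr 1
          simp_rw [habs]
          rw [integral_indicator measurableSet_Ioo]
        · rw [Set.indicator_of_notMem h, Set.indicator_of_notMem h]
          simp
      rw [heq, integrable_indicator_iff measurableSet_Ioo]
      exact hGv
  have hK : (fun x => ∫ t, Phi c d f v (x, t)) =
      (Ioo c d).indicator (fun x => f x * ∫ t in Ioo x d, v t) := by
    funext x
    rw [hts x]
    by_cases h : x ∈ Ioo c d
    · have hmax : max c x = x := max_eq_right h.1.le
      rw [Set.indicator_of_mem h (fun x => f x * ∫ t in Ioo x d, v t),
        Set.indicator_of_mem h f, hmax, integral_const_mul,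
        integral_indicator measurableSet_Ioo]
    · rw [Set.indicator_of_notMem h, Set.indicator_of_notMem h]
      simp
  have hL : (fun t => ∫ x, Phi c d f v (x, t)) =
      (Ioo c d).indicator (fun t => (∫ x in Ioo c t, f x) * v t) := by
    funext t
    rw [hxs t]
    by_cases h : t ∈ Ioo c d
    · have hmin : min d t = t := min_eq_right h.2.le
      rw [Set.indicator_of_mem h (fun t => (∫ x in Ioo c t, f x) * v t),
        Set.indicator_of_mem h v, hmin, integral_mul_const,
        integral_indicator measurableSet_Ioo]
    · rw [Set.indicator_of_notMem h, Set.indicator_of_notMem h]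
      simp
  constructor
  · have h1 := hint.integral_prod_left
    rw [hK] at h1
    exact (integrable_indicator_iff measurableSet_Ioo).1 h1
  · have h2 : ∫ x, ∫ t, Phi c d f v (x, t) = ∫ t, ∫ x, Phi c d f v (x, t) :=
      integral_integral_swap hint
    calc ∫ x in Ioo c d, (f x * ∫ t in Ioo x d, v t)
        = ∫ x, (Ioo c d).indicator (fun x => f x * ∫ t in Ioo x d, v t) x :=
          (integral_indicator measurableSet_Ioo).symm
      _ = ∫ x, ∫ t, Phi c d f v (x, t) := by rw [hK]
      _ = ∫ t, ∫ x, Phi c d f v (x, t) := h2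
      _ = ∫ t, (Ioo c d).indicator (fun t => (∫ x in Ioo c t, f x) * v t) t := by rw [hL]
      _ = _ := integral_indicator measurableSet_Ioo

theorem stmt7 (c d p q : ℝ) (hcd : c < d) (hp : 1 < p) (hq : q = p / (p - 1))
    (w : ℝ → ℝ) (hwm : Measurable w)
    (hwpos : ∀ x ∈ Ioo c d, 0 < w x)
    (hwint : ∀ x ∈ Ioo c d, IntegrableOn (fun t => w t ^ p) (Ioo x d))
    (gt v : ℝ → ℝ) (hvm : Measurable v)
    (hrep : ∀ x ∈ Ioo c d, IntegrableOn v (Ioo x d) ∧ gt x = -∫ t in Ioo x d, v t)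
    (hvq : IntegrableOn (fun x => |v x / w x| ^ q) (Ioo c d))
    (f : ℝ → ℝ) (hfm : Measurable f)
    (hfloc : ∀ x ∈ Ioo c d, IntegrableOn f (Ioc c x))
    (hfCs : IntegrableOn (fun x => (w x * ∫ t in Ioc c x, |f t|) ^ p) (Ioo c d)) :
    IntegrableOn (fun x => f x * gt x) (Ioo c d) ∧
    |∫ x in Ioo c d, f x * gt x| ≤
      (∫ x in Ioo c d, |v x / w x| ^ q) ^ (1/q) *
        (∫ x in Ioo c d, |w x * ∫ t in Ioc c x, f t| ^ p) ^ (1/p) := by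
  have hpq : p.HolderConjugate q := (Real.holderConjugate_iff_eq_conjExponent hp).2 hq
  have hppos : 0 < p := hpq.pos
  have hqpos : 0 < q := hpq.symm.pos
  have hpne : ENNReal.ofReal p ≠ 0 := by
    simp only [ne_eq, ENNReal.ofReal_eq_zero, not_le]; exact hppos
  have hqne : ENNReal.ofReal q ≠ 0 := by
    simp only [ne_eq, ENNReal.ofReal_eq_zero, not_le]; exact hqpos
  -- notation: μ is the restricted measure
  set μ := volume.restrict (Ioo c d) with hμ
  -- measurability of the primitives
  have hFc : ContinuousOn (fun x => ∫ t in Ioc c x, f t) (Ioo c d) := aux_cont c d f hfloc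
  have hGc : ContinuousOn (fun x => ∫ t in Ioc c x, |f t|) (Ioo c d) :=
    aux_cont c d (fun t => |f t|) (fun x hx => (hfloc x hx).abs)
  have hFsm : AEStronglyMeasurable (fun x => ∫ t in Ioc c x, f t) μ :=
    hFc.aestronglyMeasurable measurableSet_Ioo
  have hGsm : AEStronglyMeasurable (fun x => ∫ t in Ioc c x, |f t|) μ :=
    hGc.aestronglyMeasurable measurableSet_Ioo
  have hGnn : ∀ x, 0 ≤ ∫ t in Ioc c x, |f t| := fun x => integral_nonneg fun t => abs_nonneg _
  -- Memℒp facts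
  have hAsm : AEStronglyMeasurable (fun x => v x / w x) μ := (hvm.div hwm).aestronglyMeasurable
  have hA : MemLp (fun x => v x / w x) (ENNReal.ofReal q) μ := by
    rw [← memLp_norm_rpow_iff hAsm hqne ENNReal.ofReal_ne_top,
      ENNReal.div_self hqne ENNReal.ofReal_ne_top, ENNReal.toReal_ofReal hqpos.le,
      memLp_one_iff_integrable]
    simp only [Real.norm_eq_abs]
    exact hvq
  have hBGsm : AEStronglyMeasurable (fun x => w x * ∫ t in Ioc c x, |f t|) μ :=
    hwm.aestronglyMeasurable.mul hGsm
  have hBG : MemLp (fun x => w x * ∫ t in Ioc c x, |f t|) (ENNReal.ofReal p) μ := by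
    rw [← memLp_norm_rpow_iff hBGsm hpne ENNReal.ofReal_ne_top,
      ENNReal.div_self hpne ENNReal.ofReal_ne_top, ENNReal.toReal_ofReal hppos.le,
      memLp_one_iff_integrable]
    apply hfCs.congr
    filter_upwards [ae_restrict_mem measurableSet_Ioo] with x hx
    rw [Real.norm_eq_abs, abs_of_nonneg (mul_nonneg (hwpos x hx).le (hGnn x))]
  have hBFsm : AEStronglyMeasurable (fun x => w x * ∫ t in Ioc c x, f t) μ :=
    hwm.aestronglyMeasurable.mul hFsm
  have hBF : MemLp (fun x => w x * ∫ t in Ioc c x, f t) (ENNReal.ofReal p) μ := by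
    refine hBG.of_le hBFsm ?_
    filter_upwards [ae_restrict_mem measurableSet_Ioo] with x hx
    rw [Real.norm_eq_abs, Real.norm_eq_abs, abs_mul, abs_mul,
      abs_of_nonneg (hGnn x)]
    refine mul_le_mul_of_nonneg_left ?_ (abs_nonneg _)
    calc |∫ t in Ioc c x, f t| = ‖∫ t in Ioc c x, f t‖ := (Real.norm_eq_abs _).symm
      _ ≤ ∫ t in Ioc c x, ‖f t‖ := norm_integral_le_integral_norm _
      _ = ∫ t in Ioc c x, |f t| := by simp [Real.norm_eq_abs]
  -- product integrability via Hölder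
  have hsum : (1 : ENNReal) / 1 = 1 / ENNReal.ofReal q + 1 / ENNReal.ofReal p := by
    simp only [one_div, inv_one]
    exact (Real.HolderConjugate.inv_add_inv_ennreal hpq.symm).symm
  have hmul : MemLp (fun x => (v x / w x) * (w x * ∫ t in Ioc c x, |f t|)) 1 μ := by
    haveI := Real.HolderConjugate.ennrealOfReal hpq.symm
    have := MemLp.smul (r := 1) hBG hA
    simpa [Pi.smul_apply, smul_eq_mul, Pi.mul_def] using this
  have hGv_int : IntegrableOn (fun t => (∫ x in Ioo c t, |f x|) * |v t|) (Ioo c d) := by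
    have h2 := (memLp_one_iff_integrable.1 hmul).abs
    apply h2.congr
    filter_upwards [ae_restrict_mem measurableSet_Ioo] with t ht
    have hw := hwpos t ht
    have h3 : v t / w t * (w t * ∫ s in Ioc c t, |f s|) = v t * ∫ s in Ioc c t, |f s| := by
      field_simp
    rw [h3, abs_mul, abs_of_nonneg (hGnn t), ← integral_Ioc_eq_integral_Ioo, mul_comm]
  have key := aux_fubini c d f v hfm hvm
    (fun t ht => (hfloc t ht).mono_set Ioo_subset_Ioc_self) hGv_int
  constructor
  · apply (key.1.neg.congr)
    filter_upwards [ae_restrict_mem measurableSet_Ioo] with x hx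
    rw [(hrep x hx).2]
    simp only [Pi.neg_apply]
    ring
  · have hIeq : ∫ x in Ioo c d, f x * gt x
        = -∫ t in Ioo c d, (∫ x in Ioo c t, f x) * v t := by
      rw [← key.2, ← integral_neg]
      refine setIntegral_congr_fun measurableSet_Ioo fun x hx => ?_
      rw [(hrep x hx).2]
      ring
    rw [hIeq, abs_neg]
    have hfinal := integral_mul_norm_le_Lp_mul_Lq (μ := μ) hpq hBF hA
    calc |∫ t in Ioo c d, (∫ x in Ioo c t, f x) * v t|
        = ‖∫ t in Ioo c d, (∫ x in Ioo c t, f x) * v t‖ := (Real.norm_eq_abs _).symm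
      _ ≤ ∫ t in Ioo c d, ‖(∫ x in Ioo c t, f x) * v t‖ := norm_integral_le_integral_norm _
      _ = ∫ t in Ioo c d, ‖w t * ∫ s in Ioc c t, f s‖ * ‖v t / w t‖ := by
          refine integral_congr_ae ?_
          filter_upwards [ae_restrict_mem measurableSet_Ioo] with t ht
          have hw := hwpos t ht
          rw [← integral_Ioc_eq_integral_Ioo]
          rw [Real.norm_eq_abs, Real.norm_eq_abs, Real.norm_eq_abs, abs_mul, abs_mul, abs_div,
            abs_of_pos hw]
          field_simp
      _ ≤ (∫ t in Ioo c d, ‖w t * ∫ s in Ioc c t, f s‖ ^ p) ^ (1 / p) *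
            (∫ t in Ioo c d, ‖v t / w t‖ ^ q) ^ (1 / q) := hfinal
      _ = (∫ x in Ioo c d, |v x / w x| ^ q) ^ (1/q) *
            (∫ x in Ioo c d, |w x * ∫ t in Ioc c x, f t| ^ p) ^ (1/p) := by
          simp only [Real.norm_eq_abs]
          rw [mul_comm]
end

section
/- Let I = (c,d) ⊂ ℝ, p ∈ (1,∞), w : I → (0,∞) measurable with ∫_x^d w^p < ∞ for all x ∈ I. Suppose g has a continuous representative g̃ and J(g) := sup over nonzero f ∈ Ch_{p,w}(I) of |∫_I f g| / ‖f‖_{Ch_{p,w}(I)} < ∞. Then there exists b ∈ I such that g̃ = 0 Lebesgue-a.e. on [b, d). -/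
open MeasureTheory Set Filter Topology
open scoped ENNReal NNReal


noncomputable section

/-- basic alternating piece -/
def chPc (a b h : ℝ) : ℝ → ℝ := fun x =>
  h * ((Set.Ioc a ((a+b)/2)).indicator (fun _ => (1:ℝ)) x
     - (Set.Ioc ((a+b)/2) b).indicator (fun _ => (1:ℝ)) x)

/-- primitive of the piece -/
def chPcF (a b h : ℝ) : ℝ → ℝ := fun x =>
  h * (max (min x ((a+b)/2) - a) 0 - max (min x b - (a+b)/2) 0)

lemma chPc_measurable (a b h : ℝ) : Measurable (chPc a b h) := by
  apply Measurable.const_mul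
  exact ((measurable_const.indicator measurableSet_Ioc).sub
    (measurable_const.indicator measurableSet_Ioc))

lemma chPc_integrable (a b h : ℝ) : Integrable (chPc a b h) := by
  apply Integrable.const_mul
  apply Integrable.sub
  · exact (integrableOn_const measure_Ioc_lt_top.ne).integrable_indicator
      measurableSet_Ioc
  · exact (integrableOn_const measure_Ioc_lt_top.ne).integrable_indicator
      measurableSet_Ioc

lemma chPc_eq_zero {a b x : ℝ} (h : ℝ) (hab : a ≤ b) (hx : x ∉ Set.Ioc a b) :
    chPc a b h x = 0 := by
  have h1 : x ∉ Set.Ioc a ((a+b)/2) := fun hmem =>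
    hx ⟨hmem.1, hmem.2.trans (by linarith)⟩
  have h2 : x ∉ Set.Ioc ((a+b)/2) b := fun hmem =>
    hx ⟨lt_of_le_of_lt (by linarith) hmem.1, hmem.2⟩
  simp [chPc, Set.indicator_of_notMem h1, Set.indicator_of_notMem h2]

lemma chPc_abs {a b h x : ℝ} (hh : 0 ≤ h) (hx : x ∈ Set.Ioc a b) :
    |chPc a b h x| = h := by
  rcases le_or_gt x ((a+b)/2) with hc | hc
  · have h1 : x ∈ Set.Ioc a ((a+b)/2) := ⟨hx.1, hc⟩
    have h2 : x ∉ Set.Ioc ((a+b)/2) b := fun hmem => absurd hc (not_le.2 hmem.1)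
    simp [chPc, Set.indicator_of_mem h1, Set.indicator_of_notMem h2, abs_of_nonneg hh]
  · have h1 : x ∉ Set.Ioc a ((a+b)/2) := fun hmem => absurd hc (not_lt.2 hmem.2)
    have h2 : x ∈ Set.Ioc ((a+b)/2) b := ⟨hc, hx.2⟩
    simp [chPc, Set.indicator_of_mem h2, Set.indicator_of_notMem h1, abs_of_nonneg hh]

lemma chPc_primitive {c a b : ℝ} (h : ℝ) (hca : c ≤ a) (hab : a ≤ b) (x : ℝ) :
    ∫ t in Set.Ioc c x, chPc a b h t = chPcF a b h x := by
  have key : ∀ u v : ℝ, a ≤ u → (∫ t in Set.Ioc c x,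
      (Set.Ioc u v).indicator (fun _ => (1:ℝ)) t) = max (min x v - u) 0 := by
    intro u v hu
    rw [setIntegral_indicator measurableSet_Ioc, setIntegral_const, smul_eq_mul, mul_one]
    rw [Set.Ioc_inter_Ioc, Real.volume_real_Ioc]
    congr 1
    rw [sup_eq_right.2 (hca.trans hu), min_comm]
  have hu2 : a ≤ (a+b)/2 := by linarith
  simp only [chPc]
  rw [MeasureTheory.integral_const_mul]
  rw [integral_sub]
  · rw [key a ((a+b)/2) le_rfl, key ((a+b)/2) b hu2, chPcF]
  · exact ((integrableOn_const measure_Ioc_lt_top.ne).integrable_indicator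
      measurableSet_Ioc).integrableOn
  · exact ((integrableOn_const measure_Ioc_lt_top.ne).integrable_indicator
      measurableSet_Ioc).integrableOn

lemma chPcF_continuous (a b h : ℝ) : Continuous (chPcF a b h) := by
  apply continuous_const.mul
  apply Continuous.sub
  · exact ((continuous_id.min continuous_const).sub continuous_const).max continuous_const
  · exact ((continuous_id.min continuous_const).sub continuous_const).max continuous_const

lemma chPcF_zero_left {a b x : ℝ} (h : ℝ) (hab : a ≤ b) (hx : x ≤ a) :
    chPcF a b h x = 0 := by
  have h1 : min x ((a+b)/2) - a ≤ 0 := by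
    have : min x ((a+b)/2) ≤ a := le_trans (min_le_left _ _) hx
    linarith
  have h2 : min x b - (a+b)/2 ≤ 0 := by
    have : min x b ≤ (a+b)/2 := le_trans (min_le_left _ _) (by linarith)
    linarith
  rw [chPcF]; rw [max_eq_right h1, max_eq_right h2]; ring

lemma chPcF_zero_right {a b x : ℝ} (h : ℝ) (hab : a ≤ b) (hx : b ≤ x) :
    chPcF a b h x = 0 := by
  have hm1 : min x ((a+b)/2) = (a+b)/2 := min_eq_right (by linarith)
  have hm2 : min x b = b := min_eq_right hx
  rw [chPcF, hm1, hm2]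
  rw [max_eq_left (by linarith), max_eq_left (by linarith)]
  ring

lemma chPcF_abs_le {a b h : ℝ} (hab : a ≤ b) (hh : 0 ≤ h) (x : ℝ) :
    |chPcF a b h x| ≤ h * (b - a) / 2 := by
  have e1 : 0 ≤ max (min x ((a+b)/2) - a) 0 := le_max_right _ _
  have e2 : 0 ≤ max (min x b - (a+b)/2) 0 := le_max_right _ _
  have e3 : max (min x ((a+b)/2) - a) 0 ≤ (b - a) / 2 := by
    apply max_le _ (by linarith)
    have : min x ((a+b)/2) ≤ (a+b)/2 := min_le_right _ _
    linarith
  have e4 : max (min x b - (a+b)/2) 0 ≤ (b - a) / 2 := by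
    apply max_le _ (by linarith)
    have : min x b ≤ b := min_le_right _ _
    linarith
  rw [chPcF, abs_mul, abs_of_nonneg hh]
  have : |max (min x ((a+b)/2) - a) 0 - max (min x b - (a+b)/2) 0| ≤ (b - a)/2 := by
    rw [abs_le]; constructor <;> linarith
  calc h * |max (min x ((a+b)/2) - a) 0 - max (min x b - (a+b)/2) 0|
      ≤ h * ((b - a)/2) := mul_le_mul_of_nonneg_left this hh
    _ = h * (b - a) / 2 := by ring

end


lemma chStep (c d p : ℝ) (hp0 : 0 < p)
    (W gt : ℝ → ℝ) (hW0 : ∀ t, 0 ≤ W t)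
    (hWint : ∀ x ∈ Ioo c d, IntegrableOn W (Ioo x d))
    (hgtc : ContinuousOn gt (Ioo c d))
    (hne : ∀ s ∈ Ioo c d, ∃ x ∈ Ioo s d, gt x ≠ 0)
    {s : ℝ} (hs : s ∈ Ioo c d) {δ : ℝ} (hδ : 0 < δ) :
    ∃ a b h ε : ℝ, s < a ∧ a < b ∧ b < d ∧ 0 < h ∧ 0 < ε ∧
      (∀ x ∈ Icc a b, ε ≤ |gt x|) ∧ 1 ≤ h * ε * (b - a) ∧
      IntegrableOn W (Ioc a b) ∧ (∫ t in Ioc a b, W t) * (h * (b - a) / 2) ^ p ≤ δ := by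
  obtain ⟨x₀, hx₀, hgx₀⟩ := hne s hs
  have hx₀cd : x₀ ∈ Ioo c d := ⟨hs.1.trans hx₀.1, hx₀.2⟩
  set ε := |gt x₀| / 2 with hεdef
  have hε : 0 < ε := by
    have := abs_pos.2 hgx₀; simp only [hεdef]; linarith
  have hcont : ContinuousAt gt x₀ := hgtc.continuousAt (isOpen_Ioo.mem_nhds hx₀cd)
  have h1 : Tendsto (fun x => |gt x|) (𝓝 x₀) (𝓝 |gt x₀|) :=
    (continuous_abs.tendsto _).comp hcont
  have hev1 : ∀ᶠ x in 𝓝 x₀, ε < |gt x| := h1.eventually (eventually_gt_nhds (by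
    simp only [hεdef]; linarith [abs_pos.2 hgx₀]))
  have hev2 : ∀ᶠ x in 𝓝 x₀, x ∈ Ioo s d :=
    eventually_of_mem (isOpen_Ioo.mem_nhds hx₀) (fun x hx => hx)
  obtain ⟨η, hη0, hball⟩ := Metric.eventually_nhds_iff.1 (hev1.and hev2)
  set η' := η / 2 with hη'def
  have hη' : 0 < η' := by simp only [hη'def]; linarith
  have hball' : ∀ y : ℝ, |y - x₀| ≤ η' → (ε < |gt y| ∧ y ∈ Ioo s d) := by
    intro y hy
    refine hball ?_
    rw [Real.dist_eq]
    calc |y - x₀| ≤ η' := hy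
      _ < η := by simp only [hη'def]; linarith
  set J := Icc (x₀ - η') (x₀ + η') with hJdef
  have hJsub : J ⊆ Ioo s d := by
    intro y hy
    exact (hball' y (abs_le.2 ⟨by linarith [hy.1], by linarith [hy.2]⟩)).2
  have hWJ : IntegrableOn W J := (hWint s hs).mono_set hJsub
  -- the shrinking radii
  set r : ℕ → ℝ := fun n => η' / (n + 1) with hrdef
  have hr0 : ∀ n, 0 < r n := fun n => by
    apply div_pos hη'; positivity
  have hrη' : ∀ n, r n ≤ η' := fun n => by
    apply div_le_self hη'.le; simp [le_add_iff_nonneg_left]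
  have hrtend : Tendsto r atTop (𝓝 0) := by
    have := tendsto_const_div_atTop_nhds_zero_nat η'
    have h2 := (tendsto_add_atTop_iff_nat 1).2 this
    refine h2.congr (fun n => ?_)
    simp only [hrdef]
    push_cast
    ring
  -- the integrals over shrinking intervals tend to 0
  set ν : ℕ → ℝ := fun n => ∫ t in Ioc (x₀ - r n) (x₀ + r n), W t with hνdef
  have hsubJ : ∀ n, Ioc (x₀ - r n) (x₀ + r n) ⊆ J := by
    intro n y hy
    constructor
    · have := hrη' n; have := hy.1; simp only [hJdef] at *; linarith
    · have := hrη' n; have := hy.2; linarith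
  have hν_eq : ∀ n, ν n = ∫ t in J, (Ioc (x₀ - r n) (x₀ + r n)).indicator W t := by
    intro n
    rw [setIntegral_indicator measurableSet_Ioc,
      Set.inter_eq_self_of_subset_right (hsubJ n)]
  have hνtend : Tendsto ν atTop (𝓝 0) := by
    have h0 : (0 : ℝ) = ∫ t in J, (0:ℝ) := by simp
    rw [h0]
    refine Tendsto.congr (fun n => (hν_eq n).symm) ?_
    apply tendsto_integral_of_dominated_convergence W
    · intro n
      exact (hWJ.1).indicator measurableSet_Ioc
    · exact hWJ
    · intro n
      filter_upwards with t
      rw [Real.norm_eq_abs]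
      by_cases ht : t ∈ Ioc (x₀ - r n) (x₀ + r n)
      · rw [Set.indicator_of_mem ht, abs_of_nonneg (hW0 t)]
      · rw [Set.indicator_of_notMem ht]; simpa using hW0 t
    · have hne' : ∀ᵐ t ∂(volume.restrict J), t ≠ x₀ := by
        refine ae_restrict_of_ae ?_
        rw [ae_iff]
        have : {t : ℝ | ¬ t ≠ x₀} = {x₀} := by ext t; simp
        rw [this]
        exact measure_singleton x₀
      filter_upwards [hne'] with t ht
      have hev : ∀ᶠ n in atTop, (Ioc (x₀ - r n) (x₀ + r n)).indicator W t = 0 := by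
        rcases lt_or_gt_of_ne ht with h | h
        · -- t < x₀ : eventually r n < x₀ - t, so t ≤ x₀ - r n
          have : ∀ᶠ n in atTop, r n < x₀ - t :=
            hrtend.eventually (eventually_lt_nhds (by linarith))
          filter_upwards [this] with n hn
          apply Set.indicator_of_notMem
          intro hmem
          have := hmem.1; linarith
        · have : ∀ᶠ n in atTop, r n < t - x₀ :=
            hrtend.eventually (eventually_lt_nhds (by linarith))
          filter_upwards [this] with n hn
          apply Set.indicator_of_notMem
          intro hmem
          have := hmem.2; linarith
      exact Tendsto.congr' (hev.mono (fun n hn => hn.symm)) tendsto_const_nhds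
  -- choose a good n
  set θ := δ * (2 * ε) ^ p with hθdef
  have hθ : 0 < θ := by
    apply mul_pos hδ (Real.rpow_pos_of_pos (by linarith) p)
  obtain ⟨n, hn⟩ := (hνtend.eventually (eventually_lt_nhds hθ)).exists
  -- the final data
  refine ⟨x₀ - r n, x₀ + r n, 1 / (ε * (2 * r n)), ε, ?_, ?_, ?_, ?_, hε, ?_, ?_, ?_, ?_⟩
  · exact (hJsub ⟨by linarith [hrη' n], by linarith [hr0 n, hrη' n]⟩).1
  · linarith [hr0 n]
  · exact (hJsub ⟨by linarith [hr0 n, hrη' n], by linarith [hrη' n]⟩).2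
  · positivity
  · intro x hx
    exact (hball' x (abs_le.2 ⟨by linarith [hx.1, hrη' n], by linarith [hx.2, hrη' n]⟩)).1.le
  · have h2r : x₀ + r n - (x₀ - r n) = 2 * r n := by ring
    rw [h2r]
    have hne0 : ε * (2 * r n) ≠ 0 := by positivity
    rw [one_div, inv_mul_eq_div]
    rw [div_mul_eq_mul_div, div_mul_eq_mul_div]
    rw [le_div_iff₀ (by positivity)]
    ring_nf
    exact le_of_eq (by ring)
  · exact hWJ.mono_set (hsubJ n)
  · have hm : 1 / (ε * (2 * r n)) * (x₀ + r n - (x₀ - r n)) / 2 = 1 / (2 * ε) := by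
      field_simp
      rw [div_eq_iff (hr0 n).ne']; ring
    rw [hm]
    have hrw : (1 / (2 * ε)) ^ p = ((2 * ε) ^ p)⁻¹ := by
      rw [one_div, Real.inv_rpow (by linarith : (0:ℝ) ≤ 2 * ε)]
    rw [hrw]
    have hpos : (0:ℝ) < (2 * ε) ^ p := Real.rpow_pos_of_pos (by linarith) p
    calc ν n * ((2 * ε) ^ p)⁻¹ ≤ θ * ((2 * ε) ^ p)⁻¹ := by
          apply mul_le_mul_of_nonneg_right hn.le
          positivity
      _ = δ := by
          rw [hθdef]
          field_simp


theorem stmt9 (c d p : ℝ) (hcd : c < d) (hp : 1 < p)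
    (w : ℝ → ℝ) (hwm : Measurable w)
    (hwpos : ∀ x ∈ Ioo c d, 0 < w x)
    (hwint : ∀ x ∈ Ioo c d, IntegrableOn (fun t => w t ^ p) (Ioo x d))
    (g gt : ℝ → ℝ) (hgm : Measurable g)
    (hgtc : ContinuousOn gt (Ioo c d))
    (hrep : ∀ᵐ x ∂(volume.restrict (Ioo c d)), g x = gt x)
    (C : ℝ)
    (hC : ∀ f : ℝ → ℝ, memCh c d p w f →
      IntegrableOn (fun x => f x * g x) (Ioo c d) ∧
      |∫ x in Ioo c d, f x * g x| ≤ C * chNorm c d p w f) :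
    ∃ b ∈ Ioo c d, ∀ᵐ x ∂(volume.restrict (Ico b d)), gt x = 0 := by
  by_contra hcon
  push_neg at hcon
  have hp0 : 0 < p := lt_trans one_pos hp
  -- gt does not vanish identically near d
  have hne : ∀ s ∈ Ioo c d, ∃ x ∈ Ioo s d, gt x ≠ 0 := by
    intro s hs
    by_contra hz
    push_neg at hz
    refine hcon s hs ?_
    have h1 : ∀ᵐ x ∂(volume.restrict (Ico s d)), x ∈ Ico s d :=
      ae_restrict_mem measurableSet_Ico
    have h2 : ∀ᵐ x ∂(volume.restrict (Ico s d)), x ≠ s := by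
      refine ae_restrict_of_ae ?_
      rw [ae_iff]
      have hset : {x : ℝ | ¬ x ≠ s} = {s} := by ext t; simp
      rw [hset]
      exact measure_singleton s
    filter_upwards [h1, h2] with x hx hxs
    exact fun hne0 => hne0 (hz x ⟨lt_of_le_of_ne hx.1 (Ne.symm hxs), hx.2⟩)
  -- the weight
  set W : ℝ → ℝ := fun t => |w t| ^ p with hWdef
  have hW0 : ∀ t, 0 ≤ W t := fun t => Real.rpow_nonneg (abs_nonneg _) p
  have hWm : Measurable W :=
    (Real.continuous_rpow_const hp0.le).measurable.comp (continuous_abs.measurable.comp hwm)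
  have hWint : ∀ x ∈ Ioo c d, IntegrableOn W (Ioo x d) := by
    intro x hx
    refine (hwint x hx).congr_fun ?_ measurableSet_Ioo
    intro t ht
    have htcd : t ∈ Ioo c d := ⟨lt_trans hx.1 ht.1, ht.2⟩
    simp only [hWdef]
    rw [abs_of_pos (hwpos t htcd)]
  -- thresholds converging to d
  set T : ℕ → ℝ := fun k => d - (d - c) / (k + 2) with hTdef
  have hT : ∀ k, T k ∈ Ioo c d := by
    intro k
    have hk2 : (1:ℝ) < (k:ℝ) + 2 := by
      have := Nat.cast_nonneg (α := ℝ) k; linarith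
    constructor
    · have hlt : (d - c) / ((k:ℝ) + 2) < d - c := div_lt_self (by linarith) hk2
      simp only [hTdef]; linarith
    · have hpos : 0 < (d - c) / ((k:ℝ) + 2) := div_pos (by linarith) (by linarith)
      simp only [hTdef]; linarith
  have hTtend : ∀ x : ℝ, x < d → ∃ N : ℕ, ∀ k, N ≤ k → x < T k := by
    intro x hx
    have h1 : Tendsto (fun k : ℕ => (d - c) / ((k:ℝ) + 2)) atTop (𝓝 0) := by
      refine ((tendsto_add_atTop_iff_nat 2).2
        (tendsto_const_div_atTop_nhds_zero_nat (d - c))).congr (fun n => ?_)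
      push_cast; ring
    obtain ⟨N, hN⟩ := eventually_atTop.1
      (h1.eventually (eventually_lt_nhds (show (0:ℝ) < d - x by linarith)))
    refine ⟨N, fun k hk => ?_⟩
    have := hN k hk
    simp only [hTdef]; linarith
  -- the step data
  have key : ∀ (k : ℕ) (s : ℝ), s ∈ Ioo c d → ∃ q : ℝ × ℝ × ℝ × ℝ,
      (s < q.1 ∧ q.1 < q.2.1 ∧ q.2.1 < d) ∧ (0 < q.2.2.1 ∧ 0 < q.2.2.2) ∧
      (∀ x ∈ Icc q.1 q.2.1, q.2.2.2 ≤ |gt x|) ∧ 1 ≤ q.2.2.1 * q.2.2.2 * (q.2.1 - q.1) ∧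
      IntegrableOn W (Ioc q.1 q.2.1) ∧
      (∫ t in Ioc q.1 q.2.1, W t) * (q.2.2.1 * (q.2.1 - q.1) / 2) ^ p ≤ (1/2 : ℝ)^k := by
    intro k s hs
    obtain ⟨a, b, h, ε, h1, h2, h3, h4, h5, h6, h7, h8, h9⟩ :=
      chStep c d p hp0 W gt hW0 hWint hgtc hne hs
        (show (0:ℝ) < (1/2:ℝ)^k by positivity)
    exact ⟨⟨a, b, h, ε⟩, ⟨h1, h2, h3⟩, ⟨h4, h5⟩, h6, h7, h8, h9⟩
  choose Fq hFq using key
  -- recursively defined starting points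
  obtain ⟨S, hS0, hSrec⟩ : ∃ S : ℕ → {x : ℝ // x ∈ Ioo c d},
      (S 0).1 = T 0 ∧ ∀ k, (S (k+1)).1 = max (Fq k (S k).1 (S k).2).2.1 (T (k+1)) := by
    refine ⟨fun n => Nat.rec ⟨T 0, hT 0⟩ (fun k prev =>
      ⟨max (Fq k prev.1 prev.2).2.1 (T (k+1)),
        ⟨lt_of_lt_of_le (hT (k+1)).1 (le_max_right _ _),
          max_lt (hFq k prev.1 prev.2).1.2.2 (hT (k+1)).2⟩⟩) n, rfl, fun k => rfl⟩
  set A : ℕ → ℝ := fun k => (Fq k (S k).1 (S k).2).1 with hAdef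
  set B : ℕ → ℝ := fun k => (Fq k (S k).1 (S k).2).2.1 with hBdef
  set H : ℕ → ℝ := fun k => (Fq k (S k).1 (S k).2).2.2.1 with hHdef
  set E : ℕ → ℝ := fun k => (Fq k (S k).1 (S k).2).2.2.2 with hEdef
  have hP := fun k => hFq k (S k).1 (S k).2
  have hSA : ∀ k, (S k).1 < A k := fun k => (hP k).1.1
  have hAB : ∀ k, A k < B k := fun k => (hP k).1.2.1
  have hBd : ∀ k, B k < d := fun k => (hP k).1.2.2
  have hH : ∀ k, 0 < H k := fun k => (hP k).2.1.1
  have hE : ∀ k, 0 < E k := fun k => (hP k).2.1.2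
  have hgtlow : ∀ k, ∀ x ∈ Icc (A k) (B k), E k ≤ |gt x| := fun k => (hP k).2.2.1
  have hHE : ∀ k, 1 ≤ H k * E k * (B k - A k) := fun k => (hP k).2.2.2.1
  have hWk : ∀ k, IntegrableOn W (Ioc (A k) (B k)) := fun k => (hP k).2.2.2.2.1
  have hnorm : ∀ k, (∫ t in Ioc (A k) (B k), W t) * (H k * (B k - A k) / 2) ^ p
      ≤ (1/2 : ℝ)^k := fun k => (hP k).2.2.2.2.2
  have hcA : ∀ k, c < A k := fun k => lt_trans (S k).2.1 (hSA k)
  have hTS : ∀ k, T k ≤ (S k).1 := by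
    intro k
    cases k with
    | zero => rw [hS0]
    | succ k => rw [hSrec k]; exact le_max_right _ _
  have hBS : ∀ k, B k ≤ (S (k+1)).1 := fun k => by
    rw [hSrec k]; exact le_max_left _ _
  have hSmono : Monotone (fun k => (S k).1) :=
    monotone_nat_of_le_succ (fun k =>
      le_trans (le_trans (hSA k).le (hAB k).le) (hBS k))
  have horder : ∀ j k, j < k → B j ≤ A k := by
    intro j k hjk
    calc B j ≤ (S (j+1)).1 := hBS j
      _ ≤ (S k).1 := hSmono (Nat.succ_le_of_lt hjk)
      _ ≤ A k := (hSA k).le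
  have hTA : ∀ k, T k ≤ A k := fun k => le_trans (hTS k) (hSA k).le
  have hAfar : ∀ x : ℝ, x < d → ∃ N, ∀ k, N ≤ k → x ≤ A k := by
    intro x hx
    obtain ⟨N, hN⟩ := hTtend x hx
    exact ⟨N, fun k hk => le_trans (hN k hk).le (hTA k)⟩
  -- the test function
  set f : ℝ → ℝ := fun x => ∑' k, chPc (A k) (B k) (H k) x with hfdef
  have hvan : ∀ x : ℝ, ∃ N : ℕ, ∀ k, N ≤ k → x ≤ A k ∨ B k < x := by
    intro x
    rcases lt_or_ge x d with hx | hx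
    · obtain ⟨N, hN⟩ := hAfar x hx
      exact ⟨N, fun k hk => Or.inl (hN k hk)⟩
    · exact ⟨0, fun k _ => Or.inr (lt_of_lt_of_le (hBd k) hx)⟩
  have hpc0 : ∀ (k : ℕ) (x : ℝ), (x ≤ A k ∨ B k < x) → chPc (A k) (B k) (H k) x = 0 := by
    intro k x hx
    apply chPc_eq_zero _ (hAB k).le
    intro hmem
    rcases hx with h | h
    · exact absurd hmem.1 (not_lt.2 h)
    · exact absurd hmem.2 (not_le.2 h)
  have hfsum : ∀ (x : ℝ) (N : ℕ), (∀ k, N ≤ k → x ≤ A k ∨ B k < x) →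
      f x = ∑ k ∈ Finset.range N, chPc (A k) (B k) (H k) x := by
    intro x N hN
    apply tsum_eq_sum
    intro k hk
    exact hpc0 k x (hN k (le_of_not_gt (fun h => hk (Finset.mem_range.2 h))))
  have hfmeas : Measurable f := by
    apply measurable_of_tendsto_metrizable
      (f := fun n x => ∑ k ∈ Finset.range n, chPc (A k) (B k) (H k) x)
      (fun n => Finset.measurable_sum _ (fun k _ => chPc_measurable _ _ _))
    rw [tendsto_pi_nhds]
    intro x
    obtain ⟨N, hN⟩ := hvan x
    rw [hfsum x N hN]
    apply tendsto_atTop_of_eventually_const (i₀ := N)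
    intro n hn
    exact (Finset.sum_subset (Finset.range_subset_range.2 hn) (fun k _ hk =>
      hpc0 k x (hN k (le_of_not_gt (fun h => hk (Finset.mem_range.2 h)))))).symm
  -- the primitive
  set Ftil : ℝ → ℝ := fun x => ∑' k, chPcF (A k) (B k) (H k) x with hFtildef
  have hpcF0 : ∀ (k : ℕ) (x : ℝ), (x ≤ A k ∨ B k ≤ x) → chPcF (A k) (B k) (H k) x = 0 := by
    intro k x hx
    rcases hx with h | h
    · exact chPcF_zero_left _ (hAB k).le h
    · exact chPcF_zero_right _ (hAB k).le h
  have hFtilsum : ∀ (x : ℝ) (N : ℕ), (∀ k, N ≤ k → x ≤ A k ∨ B k < x) →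
      Ftil x = ∑ k ∈ Finset.range N, chPcF (A k) (B k) (H k) x := by
    intro x N hN
    apply tsum_eq_sum
    intro k hk
    refine hpcF0 k x ?_
    rcases hN k (le_of_not_gt (fun h => hk (Finset.mem_range.2 h))) with h | h
    · exact Or.inl h
    · exact Or.inr h.le
  have hFtilmeas : Measurable Ftil := by
    apply measurable_of_tendsto_metrizable
      (f := fun n x => ∑ k ∈ Finset.range n, chPcF (A k) (B k) (H k) x)
      (fun n => Finset.measurable_sum _ (fun k _ => (chPcF_continuous _ _ _).measurable))
    rw [tendsto_pi_nhds]
    intro x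
    obtain ⟨N, hN⟩ := hvan x
    rw [hFtilsum x N hN]
    apply tendsto_atTop_of_eventually_const (i₀ := N)
    intro n hn
    refine (Finset.sum_subset (Finset.range_subset_range.2 hn) (fun k _ hk => ?_)).symm
    refine hpcF0 k x ?_
    rcases hN k (le_of_not_gt (fun h => hk (Finset.mem_range.2 h))) with h | h
    · exact Or.inl h
    · exact Or.inr h.le
  have hprim : ∀ x ∈ Ioo c d, (∫ t in Ioc c x, f t) = Ftil x := by
    intro x hx
    obtain ⟨N, hN⟩ := hAfar x hx.2
    have hNx : ∀ k, N ≤ k → x ≤ A k ∨ B k < x := fun k hk => Or.inl (hN k hk)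
    have heq : EqOn f (fun y => ∑ k ∈ Finset.range N, chPc (A k) (B k) (H k) y) (Ioc c x) := by
      intro y hy
      exact hfsum y N (fun k hk => Or.inl (le_trans hy.2 (hN k hk)))
    rw [setIntegral_congr_fun measurableSet_Ioc heq]
    rw [integral_finset_sum _ (fun k _ => (chPc_integrable _ _ _).integrableOn)]
    rw [hFtilsum x N hNx]
    exact Finset.sum_congr rfl (fun k _ => chPc_primitive _ (hcA k).le (hAB k).le x)
  -- disjointness
  have hdisjoint : ∀ j k, j ≠ k → ∀ x, x ∈ Ioc (A j) (B j) → x ∉ Ioc (A k) (B k) := by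
    intro j k hjk x hxj hxk
    rcases lt_or_gt_of_ne hjk with h | h
    · have := horder j k h
      have := hxj.2; have := hxk.1; linarith
    · have := horder k j h
      have := hxk.2; have := hxj.1; linarith
  have hFb : ∀ x, (∀ j, x ∉ Ioc (A j) (B j)) → Ftil x = 0 := by
    intro x hx
    have hz : ∀ k, chPcF (A k) (B k) (H k) x = 0 := by
      intro k
      refine hpcF0 k x ?_
      rcases not_and_or.1 (hx k) with h | h
      · exact Or.inl (not_lt.1 h)
      · exact Or.inr (not_le.1 h).le
    simp only [hFtildef]
    rw [tsum_congr hz, tsum_zero]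
  have hFpiece : ∀ j x, x ∈ Ioc (A j) (B j) → |Ftil x| ≤ H j * (B j - A j) / 2 := by
    intro j x hxj
    have hsingle : Ftil x = chPcF (A j) (B j) (H j) x := by
      apply tsum_eq_single
      intro k hkj
      refine hpcF0 k x ?_
      have hnot := hdisjoint j k (fun h => hkj h.symm) x hxj
      rcases not_and_or.1 hnot with h | h
      · exact Or.inl (not_lt.1 h)
      · exact Or.inr (not_le.1 h).le
    rw [hsingle]
    exact chPcF_abs_le (hAB j).le (hH j).le x
  -- membership in the Cesàro space
  have hmem : memCh c d p w f := by
    refine ⟨hfmeas, ?_, ?_⟩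
    · intro x hx
      obtain ⟨N, hN⟩ := hAfar x hx.2
      have heq : EqOn (fun y => ∑ k ∈ Finset.range N, chPc (A k) (B k) (H k) y) f (Ioc c x) :=
        fun y hy => (hfsum y N (fun k hk => Or.inl (le_trans hy.2 (hN k hk)))).symm
      have hintsum : IntegrableOn
          (fun y => ∑ k ∈ Finset.range N, chPc (A k) (B k) (H k) y) (Ioc c x) :=
        integrable_finset_sum _ (fun k _ => (chPc_integrable _ _ _).integrableOn)
      exact hintsum.congr_fun heq measurableSet_Ioc
    · set M : ℕ → ℝ := fun k => H k * (B k - A k) / 2 with hMdef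
      have hM0 : ∀ k, 0 ≤ M k := by
        intro k
        have h1 := mul_pos (hH k) (sub_pos.2 (hAB k))
        simp only [hMdef]; linarith
      set I0 : ℝ → ℝ := fun x => |w x * Ftil x| ^ p with hI0def
      have hI0meas : Measurable I0 :=
        (Real.continuous_rpow_const hp0.le).measurable.comp
          (continuous_abs.measurable.comp (hwm.mul hFtilmeas))
      have hI0 : IntegrableOn I0 (Ioo c d) := by
        refine ⟨hI0meas.aestronglyMeasurable, ?_⟩
        rw [hasFiniteIntegral_iff_norm]
        set Φ : ℝ → ℝ≥0∞ := fun x =>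
          ∑' k, (Ioc (A k) (B k)).indicator (fun t => ENNReal.ofReal (W t * M k ^ p)) x
          with hΦdef
        have hΦkmeas : ∀ k, Measurable
            ((Ioc (A k) (B k)).indicator (fun t => ENNReal.ofReal (W t * M k ^ p))) :=
          fun k => ((hWm.mul_const _).ennreal_ofReal).indicator measurableSet_Ioc
        have hΦmeas : Measurable Φ := Measurable.ennreal_tsum hΦkmeas
        have hbound : ∀ x ∈ Ioo c d, ENNReal.ofReal ‖I0 x‖ ≤ Φ x := by
          intro x hx
          have hnn : 0 ≤ I0 x := Real.rpow_nonneg (abs_nonneg _) p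
          rw [Real.norm_eq_abs, abs_of_nonneg hnn]
          by_cases hxp : ∃ j, x ∈ Ioc (A j) (B j)
          · obtain ⟨j, hj⟩ := hxp
            have habs : |w x * Ftil x| ≤ |w x| * M j := by
              rw [abs_mul]
              exact mul_le_mul_of_nonneg_left (hFpiece j x hj) (abs_nonneg _)
            have h1 : I0 x ≤ W x * M j ^ p := by
              calc I0 x ≤ (|w x| * M j) ^ p :=
                    Real.rpow_le_rpow (abs_nonneg _) habs hp0.le
                _ = W x * M j ^ p := Real.mul_rpow (abs_nonneg _) (hM0 j)
            calc ENNReal.ofReal (I0 x) ≤ ENNReal.ofReal (W x * M j ^ p) :=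
                  ENNReal.ofReal_le_ofReal h1
              _ = (Ioc (A j) (B j)).indicator
                    (fun t => ENNReal.ofReal (W t * M j ^ p)) x :=
                  by rw [Set.indicator_of_mem hj]
              _ ≤ Φ x := ENNReal.le_tsum j
          · push_neg at hxp
            have h0 : Ftil x = 0 := hFb x hxp
            have hz : I0 x = 0 := by
              simp only [hI0def]
              rw [h0, mul_zero, abs_zero, Real.zero_rpow (ne_of_gt hp0)]
            rw [hz]
            simp
        calc ∫⁻ x in Ioo c d, ENNReal.ofReal ‖I0 x‖
            ≤ ∫⁻ x in Ioo c d, Φ x := setLIntegral_mono hΦmeas hbound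
          _ ≤ ∫⁻ x, Φ x := setLIntegral_le_lintegral _ _
          _ = ∑' k, ∫⁻ x, (Ioc (A k) (B k)).indicator
                (fun t => ENNReal.ofReal (W t * M k ^ p)) x :=
              lintegral_tsum (fun k => (hΦkmeas k).aemeasurable)
          _ ≤ ∑' k, ENNReal.ofReal ((1/2 : ℝ)^k) := by
              apply ENNReal.tsum_le_tsum
              intro k
              rw [lintegral_indicator measurableSet_Ioc]
              rw [← ofReal_integral_eq_lintegral_ofReal
                ((hWk k).mul_const _)
                (ae_of_all _ (fun t => mul_nonneg (hW0 t) (Real.rpow_nonneg (hM0 k) p)))]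
              apply ENNReal.ofReal_le_ofReal
              rw [integral_mul_const]
              exact hnorm k
          _ < ⊤ := by
              rw [← ENNReal.ofReal_tsum_of_nonneg (fun k => by positivity)
                (summable_geometric_of_lt_one (by norm_num) (by norm_num))]
              exact ENNReal.ofReal_lt_top
      refine hI0.congr_fun (fun x hx => ?_) measurableSet_Ioo
      simp only [hI0def]
      rw [hprim x hx]
  -- the contradiction
  obtain ⟨hint, -⟩ := hC f hmem
  have habs : IntegrableOn (fun x => |f x * g x|) (Ioo c d) := hint.abs
  have hsub : ∀ k, Ioc (A k) (B k) ⊆ Ioo c d := fun k x hx =>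
    ⟨lt_trans (hcA k) hx.1, lt_of_le_of_lt hx.2 (hBd k)⟩
  have hpiece : ∀ k, (1:ℝ) ≤ ∫ x in Ioc (A k) (B k), |f x * g x| := by
    intro k
    have hrep' : ∀ᵐ x ∂(volume.restrict (Ioc (A k) (B k))), g x = gt x :=
      ae_restrict_of_ae_restrict_of_subset (hsub k) hrep
    have hmemae : ∀ᵐ x ∂(volume.restrict (Ioc (A k) (B k))), x ∈ Ioc (A k) (B k) :=
      ae_restrict_mem measurableSet_Ioc
    have hlow : ∀ᵐ x ∂(volume.restrict (Ioc (A k) (B k))),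
        H k * E k ≤ |f x * g x| := by
      filter_upwards [hrep', hmemae] with x hgx hxm
      have hfx : f x = chPc (A k) (B k) (H k) x := by
        apply tsum_eq_single
        intro j hjk
        apply hpc0 j x
        have hnot := hdisjoint k j (fun h => hjk h.symm) x hxm
        rcases not_and_or.1 hnot with h | h
        · exact Or.inl (not_lt.1 h)
        · exact Or.inr (not_le.1 h)
      rw [abs_mul, hfx, chPc_abs (hH k).le hxm, hgx]
      exact mul_le_mul_of_nonneg_left (hgtlow k x (Ioc_subset_Icc_self hxm)) (hH k).le
    have hconst : Integrable (fun _ : ℝ => H k * E k)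
        (volume.restrict (Ioc (A k) (B k))) :=
      integrableOn_const measure_Ioc_lt_top.ne
    have h2 := integral_mono_ae hconst (habs.mono_set (hsub k)) hlow
    rw [setIntegral_const] at h2
    have hvol : (volume (Ioc (A k) (B k))).toReal = B k - A k := by
      rw [Real.volume_Ioc, ENNReal.toReal_ofReal (by linarith [hAB k])]
    calc (1:ℝ) ≤ H k * E k * (B k - A k) := hHE k
      _ = (volume (Ioc (A k) (B k))).toReal • (H k * E k) := by
          rw [hvol, smul_eq_mul]; ring
      _ ≤ _ := h2
  have hnineq : ∀ n : ℕ, (n : ℝ) ≤ ∫ x in Ioo c d, |f x * g x| := by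
    intro n
    have hU : ∫ x in (⋃ k ∈ Finset.range n, Ioc (A k) (B k)), |f x * g x|
        = ∑ k ∈ Finset.range n, ∫ x in Ioc (A k) (B k), |f x * g x| := by
      apply integral_biUnion_finset _ (fun k _ => measurableSet_Ioc)
      · intro i _ j _ hij
        exact Set.disjoint_left.2 (fun x hxi hxj => hdisjoint i j hij x hxi hxj)
      · exact fun k _ => habs.mono_set (hsub k)
    calc (n : ℝ) = ∑ k ∈ Finset.range n, (1:ℝ) := by simp
      _ ≤ ∑ k ∈ Finset.range n, ∫ x in Ioc (A k) (B k), |f x * g x| :=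
          Finset.sum_le_sum (fun k _ => hpiece k)
      _ = ∫ x in ⋃ k ∈ Finset.range n, Ioc (A k) (B k), |f x * g x| := hU.symm
      _ ≤ ∫ x in Ioo c d, |f x * g x| := by
          apply setIntegral_mono_set habs (ae_of_all _ (fun x => abs_nonneg _))
          exact HasSubset.Subset.eventuallyLE (Set.iUnion₂_subset (fun k _ => hsub k))
  obtain ⟨n, hn2⟩ := exists_nat_gt (∫ x in Ioo c d, |f x * g x|)
  exact absurd (hnineq n) (not_le.2 hn2)
end

section
/- Let I = (c,d) ⊂ ℝ, p ∈ (1,∞), p' = p/(p−1), w : I → (0,∞) measurable with ∫_x^d w^p < ∞ for all x ∈ I. Suppose g̃ is locally absolutely continuous and bounded on I, g̃(x) = −χ_{(c,b]}(x) ∫_x^d Dg̃ for some b ∈ I, and Dg̃/w ∈ L^{p'}(I). Then for every f ∈ Ch_{p,w}(I): |∫_I f g̃| ≤ (∫_I |Dg̃/w|^{p'})^{1/p'} · (∫_I |w(x) ∫_c^x f|^p dx)^{1/p}. -/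
open MeasureTheory Set Filter
open scoped Topology ENNReal

private lemma harch (r x : ℝ) (hr : 0 < r) (hx : 0 < x) :
    ∃ n : ℕ, r / ((n : ℝ) + 2) < x := by
  obtain ⟨n, hn⟩ := exists_nat_gt (r / x)
  refine ⟨n, ?_⟩
  rw [div_lt_iff₀ (by positivity)]
  rw [div_lt_iff₀ hx] at hn
  nlinarith [hx, hn, (Nat.cast_nonneg n : (0:ℝ) ≤ n)]

private lemma seq_anti {r : ℝ} (hr : 0 ≤ r) :
    Antitone (fun n : ℕ => r / ((n : ℝ) + 2)) := by
  intro m n hmn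
  have h2 : ((m : ℝ) + 2) ≤ (n : ℝ) + 2 := by
    have : (m : ℝ) ≤ n := Nat.cast_le.2 hmn
    linarith
  have h3 : (0 : ℝ) < (m : ℝ) + 2 := by positivity
  exact div_le_div_of_nonneg_left hr h3 h2 |>.trans_eq rfl

private lemma iInter_Ioc_empty (a r : ℝ) (hr : 0 < r) :
    (⋂ n : ℕ, Ioc a (a + r / ((n : ℝ) + 2))) = (∅ : Set ℝ) := by
  rw [eq_empty_iff_forall_notMem]
  intro x hx
  simp only [mem_iInter, mem_Ioc] at hx
  have h1 : a < x := (hx 0).1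
  obtain ⟨n, hn⟩ := harch r (x - a) hr (by linarith)
  have h2 := (hx n).2
  linarith

private lemma aesm_tail {c d : ℝ} (hcd : c < d) (v : ℝ → ℝ)
    (hvt : ∀ x ∈ Ioo c d, IntegrableOn v (Ioo x d)) :
    AEStronglyMeasurable (fun x => ∫ t in Ioo x d, v t) (volume.restrict (Ioo c d)) := by
  have hU : Ioo c d = ⋃ n : ℕ, Ioo (c + (d - c) / ((n : ℝ) + 2)) d := by
    ext x
    simp only [mem_iUnion, mem_Ioo]
    constructor
    · rintro ⟨h1, h2⟩
      obtain ⟨n, hn⟩ := harch (d - c) (x - c) (by linarith) (by linarith)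
      exact ⟨n, by linarith, h2⟩
    · rintro ⟨n, h1, h2⟩
      have hp : 0 < (d - c) / ((n : ℝ) + 2) := div_pos (by linarith) (by positivity)
      exact ⟨by linarith, h2⟩
  rw [hU, aestronglyMeasurable_iUnion_iff]
  intro n
  set a : ℝ := c + (d - c) / ((n : ℝ) + 2) with ha
  have hp : 0 < (d - c) / ((n : ℝ) + 2) := div_pos (by linarith) (by positivity)
  have hac : c < a := by simp only [ha]; linarith
  have had : a < d := by
    have h2 : (d - c) / ((n : ℝ) + 2) < d - c := by
      apply div_lt_self (by linarith)
      have : (0 : ℝ) ≤ (n : ℝ) := Nat.cast_nonneg n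
      linarith
    simp only [ha]; linarith
  have hva : IntegrableOn v (Ioo a d) := hvt a ⟨hac, had⟩
  have hmono : ∀ u : ℝ → ℝ, IntegrableOn u (Ioo a d) → (∀ t, 0 ≤ u t) →
      Antitone (fun x => ∫ t in Ioo (max x a) d, u t) := by
    intro u hu hupos x y hxy
    refine setIntegral_mono_set (hu.mono_set (Ioo_subset_Ioo_left (le_max_right x a)))
      (Eventually.of_forall fun t => hupos t) ?_
    exact HasSubset.Subset.eventuallyLE
      (Ioo_subset_Ioo_left (max_le_max hxy (le_refl a)))
  have h1 : Antitone (fun x => ∫ t in Ioo (max x a) d, max (v t) 0) :=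
    hmono _ hva.pos_part (fun t => le_max_right _ _)
  have h2 : Antitone (fun x => ∫ t in Ioo (max x a) d, max (-v t) 0) :=
    hmono _ hva.neg_part (fun t => le_max_right _ _)
  refine AEStronglyMeasurable.congr
    ((h1.measurable.sub h2.measurable).aestronglyMeasurable) ?_
  filter_upwards [ae_restrict_mem measurableSet_Ioo] with x hx
  have hxa : max x a = x := max_eq_left hx.1.le
  have hss : Ioo x d ⊆ Ioo a d := Ioo_subset_Ioo_left hx.1.le
  show (∫ t in Ioo (max x a) d, max (v t) 0) - (∫ t in Ioo (max x a) d, max (-v t) 0) = ∫ t in Ioo x d, v t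
  rw [hxa]
  rw [← integral_sub ((hva.mono_set hss).pos_part) ((hva.mono_set hss).neg_part)]
  exact integral_congr_ae (Eventually.of_forall fun t => max_zero_sub_max_neg_zero_eq_self _)

private lemma aesm_prim {c d : ℝ} (hcd : c < d) (f : ℝ → ℝ)
    (hfloc : ∀ x ∈ Ioo c d, IntegrableOn f (Ioc c x)) :
    AEStronglyMeasurable (fun x => ∫ t in Ioc c x, f t) (volume.restrict (Ioo c d)) := by
  have hU : Ioo c d = ⋃ n : ℕ, Ioo c (d - (d - c) / ((n : ℝ) + 2)) := by
    ext x
    simp only [mem_iUnion, mem_Ioo]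
    constructor
    · rintro ⟨h1, h2⟩
      obtain ⟨n, hn⟩ := harch (d - c) (d - x) (by linarith) (by linarith)
      exact ⟨n, h1, by linarith⟩
    · rintro ⟨n, h1, h2⟩
      have hp : 0 < (d - c) / ((n : ℝ) + 2) := div_pos (by linarith) (by positivity)
      exact ⟨h1, by linarith⟩
  rw [hU, aestronglyMeasurable_iUnion_iff]
  intro n
  set b : ℝ := d - (d - c) / ((n : ℝ) + 2) with hbdef
  have hp : 0 < (d - c) / ((n : ℝ) + 2) := div_pos (by linarith) (by positivity)
  have hbd : b < d := by simp only [hbdef]; linarith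
  have hcb : c < b := by
    have h2 : (d - c) / ((n : ℝ) + 2) < d - c := by
      apply div_lt_self (by linarith)
      have : (0 : ℝ) ≤ (n : ℝ) := Nat.cast_nonneg n
      linarith
    simp only [hbdef]; linarith
  have hfb : IntegrableOn f (Ioc c b) := hfloc b ⟨hcb, hbd⟩
  have hmono : ∀ u : ℝ → ℝ, IntegrableOn u (Ioc c b) → (∀ t, 0 ≤ u t) →
      Monotone (fun x => ∫ t in Ioc c (min x b), u t) := by
    intro u hu hupos x y hxy
    refine setIntegral_mono_set (hu.mono_set (Ioc_subset_Ioc_right (min_le_right y b)))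
      (Eventually.of_forall fun t => hupos t) ?_
    exact HasSubset.Subset.eventuallyLE
      (Ioc_subset_Ioc_right (min_le_min hxy (le_refl b)))
  have h1 : Monotone (fun x => ∫ t in Ioc c (min x b), max (f t) 0) :=
    hmono _ hfb.pos_part (fun t => le_max_right _ _)
  have h2 : Monotone (fun x => ∫ t in Ioc c (min x b), max (-f t) 0) :=
    hmono _ hfb.neg_part (fun t => le_max_right _ _)
  refine AEStronglyMeasurable.congr
    ((h1.measurable.sub h2.measurable).aestronglyMeasurable) ?_
  filter_upwards [ae_restrict_mem measurableSet_Ioo] with x hx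
  have hxb : min x b = x := min_eq_left hx.2.le
  have hss : Ioc c x ⊆ Ioc c b := Ioc_subset_Ioc_right hx.2.le
  show (∫ t in Ioc c (min x b), max (f t) 0) - (∫ t in Ioc c (min x b), max (-f t) 0) = ∫ t in Ioc c x, f t
  rw [hxb]
  rw [← integral_sub ((hfb.mono_set hss).pos_part) ((hfb.mono_set hss).neg_part)]
  exact integral_congr_ae (Eventually.of_forall fun t => max_zero_sub_max_neg_zero_eq_self _)

private lemma fubini_core {a b d : ℝ} (hab : a < b) (hbd : b < d) (f v : ℝ → ℝ)
    (hfm : Measurable f) (hvm : Measurable v)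
    (hf : IntegrableOn f (Ioc a b)) (hv : IntegrableOn v (Ioo a d)) :
    ∫ x in Ioc a b, (f x * ∫ t in Ioo x d, v t) =
      (∫ t in Ioc a b, (∫ x in Ioo a t, f x) * v t) +
        (∫ x in Ioc a b, f x) * ∫ t in Ioo b d, v t := by
  have hS : MeasurableSet {p : ℝ × ℝ | p.1 < p.2} :=
    measurableSet_lt measurable_fst measurable_snd
  have hkint : Integrable ({p : ℝ × ℝ | p.1 < p.2}.indicator (fun p => f p.1 * v p.2))
      ((volume.restrict (Ioc a b)).prod (volume.restrict (Ioo a d))) :=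
    (Integrable.mul_prod hf hv).indicator hS
  have hswap := integral_integral_swap
    (f := fun x t => {p : ℝ × ℝ | p.1 < p.2}.indicator (fun p => f p.1 * v p.2) (x, t))
    (μ := volume.restrict (Ioc a b)) (ν := volume.restrict (Ioo a d)) hkint
  have hL : ∫ x in Ioc a b,
        (∫ t in Ioo a d, {p : ℝ × ℝ | p.1 < p.2}.indicator (fun p => f p.1 * v p.2) (x, t)) =
      ∫ x in Ioc a b, (f x * ∫ t in Ioo x d, v t) := by
    refine setIntegral_congr_fun measurableSet_Ioc fun x hx => ?_
    have hk1 : (fun t => {p : ℝ × ℝ | p.1 < p.2}.indicator (fun p => f p.1 * v p.2) (x, t)) =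
        (Ioi x).indicator (fun t => f x * v t) := by
      funext t
      by_cases h : x < t
      · rw [indicator_of_mem (by exact h), indicator_of_mem (mem_Ioi.2 h)]
      · rw [indicator_of_notMem (by exact h), indicator_of_notMem (fun hc => h (mem_Ioi.1 hc))]
    rw [hk1, setIntegral_indicator measurableSet_Ioi]
    have hset : Ioo a d ∩ Ioi x = Ioo x d := by
      ext t
      simp only [mem_inter_iff, mem_Ioo, mem_Ioi]
      constructor
      · rintro ⟨⟨_, h2⟩, h3⟩; exact ⟨h3, h2⟩
      · rintro ⟨h1, h2⟩; exact ⟨⟨hx.1.trans h1, h2⟩, h1⟩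
    rw [hset, integral_const_mul]
  have hR : ∀ t : ℝ, (∫ x in Ioc a b,
        {p : ℝ × ℝ | p.1 < p.2}.indicator (fun p => f p.1 * v p.2) (x, t)) =
      (∫ x in Ioc a b ∩ Iio t, f x) * v t := by
    intro t
    have hk2 : (fun x => {p : ℝ × ℝ | p.1 < p.2}.indicator (fun p => f p.1 * v p.2) (x, t)) =
        (Iio t).indicator (fun x => f x * v t) := by
      funext x
      by_cases h : x < t
      · rw [indicator_of_mem (by exact h), indicator_of_mem (mem_Iio.2 h)]
      · rw [indicator_of_notMem (by exact h), indicator_of_notMem (fun hc => h (mem_Iio.1 hc))]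
    rw [hk2, setIntegral_indicator measurableSet_Iio, integral_mul_const]
  have hg_int : IntegrableOn (fun t => (∫ x in Ioc a b ∩ Iio t, f x) * v t) (Ioo a d) := by
    have h := hkint.integral_prod_right
    exact h.congr (Eventually.of_forall fun t => hR t)
  have hunion : Ioc a b ∪ Ioo b d = Ioo a d := Ioc_union_Ioo_eq_Ioo hab.le hbd
  have hdisj : Disjoint (Ioc a b) (Ioo b d) := by
    rw [Set.disjoint_left]
    intro x hx1 hx2
    exact absurd hx2.1 (not_lt.2 hx1.2)
  have hsub1 : Ioc a b ⊆ Ioo a d := fun x hx => ⟨hx.1, lt_of_le_of_lt hx.2 hbd⟩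
  have hsub2 : Ioo b d ⊆ Ioo a d := Ioo_subset_Ioo_left hab.le
  calc ∫ x in Ioc a b, (f x * ∫ t in Ioo x d, v t)
      = ∫ x in Ioc a b,
          (∫ t in Ioo a d, {p : ℝ × ℝ | p.1 < p.2}.indicator (fun p => f p.1 * v p.2) (x, t)) :=
        hL.symm
    _ = ∫ t in Ioo a d,
          (∫ x in Ioc a b, {p : ℝ × ℝ | p.1 < p.2}.indicator (fun p => f p.1 * v p.2) (x, t)) :=
        hswap
    _ = ∫ t in Ioo a d, (∫ x in Ioc a b ∩ Iio t, f x) * v t :=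
        integral_congr_ae (Eventually.of_forall fun t => hR t)
    _ = (∫ t in Ioc a b, (∫ x in Ioc a b ∩ Iio t, f x) * v t) +
          ∫ t in Ioo b d, (∫ x in Ioc a b ∩ Iio t, f x) * v t := by
        rw [← hunion, setIntegral_union hdisj measurableSet_Ioo
          (hg_int.mono_set hsub1) (hg_int.mono_set hsub2)]
    _ = (∫ t in Ioc a b, (∫ x in Ioo a t, f x) * v t) +
          (∫ x in Ioc a b, f x) * ∫ t in Ioo b d, v t := by
        congr 1
        · refine setIntegral_congr_fun measurableSet_Ioc fun t ht => ?_
          have hseteq : Ioc a b ∩ Iio t = Ioo a t := by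
            ext x
            simp only [mem_inter_iff, mem_Ioc, mem_Iio, mem_Ioo]
            constructor
            · rintro ⟨⟨h1, _⟩, h3⟩; exact ⟨h1, h3⟩
            · rintro ⟨h1, h2⟩; exact ⟨⟨h1, h2.le.trans ht.2⟩, h2⟩
          rw [hseteq]
        · rw [← integral_const_mul]
          refine setIntegral_congr_fun measurableSet_Ioo fun t ht => ?_
          have hseteq : Ioc a b ∩ Iio t = Ioc a b :=
            inter_eq_left.2 fun x hx => mem_Iio.2 (lt_of_le_of_lt hx.2 ht.1)
          rw [hseteq]

theorem stmt11 (c d p q : ℝ) (hcd : c < d) (hp : 1 < p) (hq : q = p / (p - 1))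
    (w : ℝ → ℝ) (hwm : Measurable w)
    (hwpos : ∀ x ∈ Ioo c d, 0 < w x)
    (hwint : ∀ x ∈ Ioo c d, IntegrableOn (fun t => w t ^ p) (Ioo x d))
    (gt v : ℝ → ℝ) (b : ℝ) (hb : b ∈ Ioo c d) (hvm : Measurable v)
    (hAC : ∀ x ∈ Ioo c d, ∀ y ∈ Ioo c d,
      IntegrableOn v (uIcc x y) ∧ gt y - gt x = ∫ t in x..y, v t)
    (hbdd : ∃ M : ℝ, ∀ x ∈ Ioo c d, |gt x| ≤ M)
    (hvt : ∀ x ∈ Ioo c d, IntegrableOn v (Ioo x d))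
    (hform : ∀ x ∈ Ioo c d,
      gt x = -(Ioc c b).indicator (fun y => ∫ t in Ioo y d, v t) x)
    (hvq : IntegrableOn (fun x => |v x / w x| ^ q) (Ioo c d))
    (f : ℝ → ℝ) (hfm : Measurable f)
    (hfloc : ∀ x ∈ Ioo c d, IntegrableOn f (Ioc c x))
    (hfCh : IntegrableOn (fun x => |w x * ∫ t in Ioc c x, f t| ^ p) (Ioo c d)) :
    IntegrableOn (fun x => f x * gt x) (Ioo c d) ∧
    |∫ x in Ioo c d, f x * gt x| ≤
      (∫ x in Ioo c d, |v x / w x| ^ q) ^ (1/q) *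
        (∫ x in Ioo c d, |w x * ∫ t in Ioc c x, f t| ^ p) ^ (1/p) := by
  obtain ⟨M, hM⟩ := hbdd
  obtain ⟨hcb, hbd⟩ := hb
  set F : ℝ → ℝ := fun x => ∫ t in Ioc c x, f t with hFdef
  have hIoo : MeasurableSet (Ioo c d) := measurableSet_Ioo
  have hsub : Ioc c b ⊆ Ioo c d := fun x hx => ⟨hx.1, lt_of_le_of_lt hx.2 hbd⟩
  -- measurability packages
  have hFm : AEStronglyMeasurable F (volume.restrict (Ioo c d)) := aesm_prim hcd f hfloc
  have hHm : AEStronglyMeasurable (fun x => ∫ t in Ioo x d, v t) (volume.restrict (Ioo c d)) :=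
    aesm_tail hcd v hvt
  have hgtm : AEStronglyMeasurable gt (volume.restrict (Ioo c d)) := by
    refine AEStronglyMeasurable.congr ((hHm.indicator (measurableSet_Ioc : MeasurableSet (Ioc c b))).neg) ?_
    filter_upwards [ae_restrict_mem hIoo] with x hx
    exact (hform x hx).symm
  set M' : ℝ := max M 0 with hM'def
  have hMnn : ∀ x ∈ Ioo c d, |gt x| ≤ M' := fun x hx => (hM x hx).trans (le_max_left _ _)
  -- integrability of f * gt
  have hdom : Integrable ((Ioc c b).indicator (fun x => M' * |f x|))
      (volume.restrict (Ioo c d)) := by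
    have h1 : IntegrableOn (fun x => M' * |f x|) (Ioc c b) :=
      ((hfloc b ⟨hcb, hbd⟩).abs.const_mul M')
    exact (h1.integrable_indicator measurableSet_Ioc).integrableOn
  have hint1 : IntegrableOn (fun x => f x * gt x) (Ioo c d) := by
    refine Integrable.mono' hdom ((hfm.aestronglyMeasurable.restrict).mul hgtm) ?_
    filter_upwards [ae_restrict_mem hIoo] with x hx
    by_cases hxb : x ∈ Ioc c b
    · rw [indicator_of_mem hxb]
      calc ‖f x * gt x‖ = |f x| * |gt x| := by rw [Real.norm_eq_abs, abs_mul]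
        _ ≤ |f x| * M' := mul_le_mul_of_nonneg_left (hMnn x hx) (abs_nonneg _)
        _ = M' * |f x| := mul_comm _ _
    · rw [indicator_of_notMem hxb]
      have hgt0 : gt x = 0 := by rw [hform x hx, indicator_of_notMem hxb, neg_zero]
      simp [hgt0]
  -- K = 0
  have hK : ∫ t in Ioo b d, v t = 0 := by
    have hvb : IntegrableOn v (Ioo b d) := hvt b ⟨hcb, hbd⟩
    have h0 : ∀ y ∈ Ioo b d, ∫ t in Ioc b y, v t = ∫ t in Ioo b d, v t := by
      intro y hy
      have hy' : y ∈ Ioo c d := ⟨hcb.trans hy.1, hy.2⟩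
      have hAC' := (hAC b ⟨hcb, hbd⟩ y hy').2
      have hgty : gt y = 0 := by
        rw [hform y hy', indicator_of_notMem, neg_zero]
        exact fun h => absurd h.2 (not_le.2 hy.1)
      have hgtb : gt b = -∫ t in Ioo b d, v t := by
        rw [hform b ⟨hcb, hbd⟩, indicator_of_mem (mem_Ioc.mpr ⟨hcb, le_refl b⟩)]
      rw [hgty, hgtb, intervalIntegral.integral_of_le hy.1.le] at hAC'
      linarith
    have hypos : ∀ n : ℕ, 0 < (d - b) / ((n : ℝ) + 2) :=
      fun n => div_pos (by linarith) (by positivity)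
    have hymem : ∀ n : ℕ, b + (d - b) / ((n : ℝ) + 2) ∈ Ioo b d := by
      intro n
      have h2 : (d - b) / ((n : ℝ) + 2) < d - b := by
        apply div_lt_self (by linarith)
        have : (0 : ℝ) ≤ (n : ℝ) := Nat.cast_nonneg n
        linarith
      exact ⟨by linarith [hypos n], by linarith⟩
    have hanti : Antitone (fun n : ℕ => Ioc b (b + (d - b) / ((n : ℝ) + 2))) := by
      intro m n hmn
      exact Ioc_subset_Ioc_right (by linarith [seq_anti (by linarith : (0:ℝ) ≤ d - b) hmn])
    have hex : ∃ n : ℕ, IntegrableOn v (Ioc b (b + (d - b) / ((n : ℝ) + 2))) volume :=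
      ⟨0, hvb.mono_set (fun x hx => ⟨hx.1, lt_of_le_of_lt hx.2 (hymem 0).2⟩)⟩
    have htend := tendsto_setIntegral_of_antitone
      (fun n : ℕ => measurableSet_Ioc) hanti hex
    rw [iInter_Ioc_empty b (d - b) (by linarith)] at htend
    simp only [Measure.restrict_empty, integral_zero_measure] at htend
    have hconst : (fun n : ℕ => ∫ t in Ioc b (b + (d - b) / ((n : ℝ) + 2)), v t) =
        fun _ => ∫ t in Ioo b d, v t :=
      funext fun n => h0 _ (hymem n)
    rw [hconst] at htend
    exact tendsto_nhds_unique tendsto_const_nhds htend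
  -- Hölder package
  have hconj : p.HolderConjugate q := (Real.holderConjugate_iff_eq_conjExponent hp).2 hq
  have hp0 : 0 < p := lt_trans one_pos hp
  have hq0 : 0 < q := hconj.symm.pos
  have hP0 : ENNReal.ofReal p ≠ 0 := by simp [ENNReal.ofReal_eq_zero, not_le, hp0]
  have hPt : ENNReal.ofReal p ≠ ⊤ := ENNReal.ofReal_ne_top
  have hQ0 : ENNReal.ofReal q ≠ 0 := by simp [ENNReal.ofReal_eq_zero, not_le, hq0]
  have hQt : ENNReal.ofReal q ≠ ⊤ := ENNReal.ofReal_ne_top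
  have hwFm : AEStronglyMeasurable (fun x => w x * F x) (volume.restrict (Ioo c d)) :=
    (hwm.aestronglyMeasurable.restrict).mul hFm
  have hvwm : AEStronglyMeasurable (fun x => v x / w x) (volume.restrict (Ioo c d)) :=
    ((hvm.div hwm).aestronglyMeasurable).restrict
  have hMemwF : MemLp (fun x => w x * F x) (ENNReal.ofReal p) (volume.restrict (Ioo c d)) := by
    refine (memLp_norm_rpow_iff hwFm hP0 hPt).1 ?_
    rw [ENNReal.toReal_ofReal hp0.le, ENNReal.div_self hP0 hPt, memLp_one_iff_integrable]
    exact hfCh.congr (Eventually.of_forall fun x => by simp only [Real.norm_eq_abs, hFdef])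
  have hMemvw : MemLp (fun x => v x / w x) (ENNReal.ofReal q) (volume.restrict (Ioo c d)) := by
    refine (memLp_norm_rpow_iff hvwm hQ0 hQt).1 ?_
    rw [ENNReal.toReal_ofReal hq0.le, ENNReal.div_self hQ0 hQt, memLp_one_iff_integrable]
    exact hvq.congr (Eventually.of_forall fun x => by simp only [Real.norm_eq_abs])
  have hMemwF_abs : MemLp (fun x => |w x * F x|) (ENNReal.ofReal p)
      (volume.restrict (Ioo c d)) := by
    simpa only [Real.norm_eq_abs] using hMemwF.norm
  have hMemvw_abs : MemLp (fun x => |v x / w x|) (ENNReal.ofReal q)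
      (volume.restrict (Ioo c d)) := by
    simpa only [Real.norm_eq_abs] using hMemvw.norm
  have harith : (1 : ENNReal) / 1 = 1 / ENNReal.ofReal q + 1 / ENNReal.ofReal p := by
    have e1 : 1 / ENNReal.ofReal q = ENNReal.ofReal (1 / q) := by
      rw [ENNReal.ofReal_div_of_pos hq0, ENNReal.ofReal_one]
    have e2 : 1 / ENNReal.ofReal p = ENNReal.ofReal (1 / p) := by
      rw [ENNReal.ofReal_div_of_pos hp0, ENNReal.ofReal_one]
    rw [div_one, e1, e2, ← ENNReal.ofReal_add (by positivity) (by positivity)]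
    have e3 : 1 / q + 1 / p = 1 := by
      have := hconj.inv_add_inv_eq_one
      rw [one_div, one_div]
      linarith
    rw [e3, ENNReal.ofReal_one]
  have hFv_int : IntegrableOn (fun x => F x * v x) (Ioo c d) := by
    have h1 : MemLp ((fun x => v x / w x) • (fun x => w x * F x)) 1
        (volume.restrict (Ioo c d)) :=
      haveI : ENNReal.HolderTriple (ENNReal.ofReal q) (ENNReal.ofReal p) 1 :=
        ⟨by simpa only [one_div] using harith.symm⟩
      hMemwF.smul hMemvw
    rw [memLp_one_iff_integrable] at h1
    refine h1.congr ?_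
    filter_upwards [ae_restrict_mem hIoo] with x hx
    have hw : w x ≠ 0 := ne_of_gt (hwpos x hx)
    show (v x / w x) * (w x * F x) = F x * v x
    field_simp
  -- key identity for each truncation point
  have key : ∀ a ∈ Ioo c b, ∫ x in Ioc a b, f x * gt x =
      -(∫ t in Ioc a b, F t * v t) - F a * gt a := by
    intro a ha
    have hac : c < a := ha.1
    have hab : a < b := ha.2
    have had : a ∈ Ioo c d := ⟨hac, hab.trans hbd⟩
    have hfa : IntegrableOn f (Ioc a b) :=
      (hfloc b ⟨hcb, hbd⟩).mono_set (Ioc_subset_Ioc_left hac.le)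
    have hva : IntegrableOn v (Ioo a d) := hvt a had
    have hsubab : Ioc a b ⊆ Ioo c d := fun x hx =>
      ⟨hac.trans hx.1, lt_of_le_of_lt hx.2 hbd⟩
    have e1 : ∫ x in Ioc a b, f x * gt x =
        -∫ x in Ioc a b, (f x * ∫ t in Ioo x d, v t) := by
      rw [← integral_neg]
      refine setIntegral_congr_fun measurableSet_Ioc fun x hx => ?_
      rw [hform x (hsubab hx), indicator_of_mem (mem_Ioc.mpr ⟨hac.trans hx.1, hx.2⟩)]
      ring
    have e2 := fubini_core hab hbd f v hfm hvm hfa hva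
    have hvab : IntegrableOn v (Ioc a b) :=
      hva.mono_set (fun x hx => ⟨hx.1, lt_of_le_of_lt hx.2 hbd⟩)
    have e3 : ∫ t in Ioc a b, (∫ x in Ioo a t, f x) * v t =
        (∫ t in Ioc a b, F t * v t) - F a * ∫ t in Ioc a b, v t := by
      have hFt : ∀ t ∈ Ioc a b, (∫ x in Ioo a t, f x) = F t - F a := by
        intro t ht
        have htd : t ∈ Ioo c d := ⟨hac.trans ht.1, lt_of_le_of_lt ht.2 hbd⟩
        have h4 : IntegrableOn f (Ioc c a) := hfloc a had
        have h5 : IntegrableOn f (Ioc a t) :=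
          (hfloc t htd).mono_set (Ioc_subset_Ioc_left hac.le)
        have hsplit : F t = (∫ x in Ioc c a, f x) + ∫ x in Ioc a t, f x := by
          have hu : Ioc c t = Ioc c a ∪ Ioc a t := (Ioc_union_Ioc_eq_Ioc hac.le ht.1.le).symm
          have hd : Disjoint (Ioc c a) (Ioc a t) := by
            rw [Set.disjoint_left]
            intro x hx1 hx2
            exact absurd hx2.1 (not_lt.2 hx1.2)
          show (∫ x in Ioc c t, f x) = _
          rw [hu, setIntegral_union hd measurableSet_Ioc h4 h5]
        have hIoc : (∫ x in Ioc a t, f x) = ∫ x in Ioo a t, f x :=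
          integral_Ioc_eq_integral_Ioo
        have hFa : F a = ∫ x in Ioc c a, f x := rfl
        rw [← hIoc, hsplit, hFa]
        ring
      have hi1 : IntegrableOn (fun t => F t * v t) (Ioc a b) := hFv_int.mono_set hsubab
      have hi2 : IntegrableOn (fun t => F a * v t) (Ioc a b) := hvab.const_mul (F a)
      calc ∫ t in Ioc a b, (∫ x in Ioo a t, f x) * v t
          = ∫ t in Ioc a b, (F t - F a) * v t :=
            setIntegral_congr_fun measurableSet_Ioc (fun t ht => by rw [hFt t ht])
        _ = ∫ t in Ioc a b, (F t * v t - F a * v t) :=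
            integral_congr_ae (Eventually.of_forall fun t => by ring)
        _ = (∫ t in Ioc a b, F t * v t) - ∫ t in Ioc a b, F a * v t := integral_sub hi1 hi2
        _ = (∫ t in Ioc a b, F t * v t) - F a * ∫ t in Ioc a b, v t := by
            rw [integral_const_mul]
    have e4 : ∫ t in Ioc a b, v t = -gt a := by
      have hu : Ioo a d = Ioc a b ∪ Ioo b d := (Ioc_union_Ioo_eq_Ioo hab.le hbd).symm
      have hd : Disjoint (Ioc a b) (Ioo b d) := by
        rw [Set.disjoint_left]
        intro x hx1 hx2
        exact absurd hx2.1 (not_lt.2 hx1.2)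
      have hsplit : ∫ t in Ioo a d, v t = (∫ t in Ioc a b, v t) + ∫ t in Ioo b d, v t := by
        rw [hu, setIntegral_union hd measurableSet_Ioo hvab
          (hva.mono_set (Ioo_subset_Ioo_left hab.le))]
      have hg : gt a = -∫ t in Ioo a d, v t := by
        rw [hform a had, indicator_of_mem (mem_Ioc.mpr ⟨hac, hab.le⟩)]
      rw [hK, add_zero] at hsplit
      rw [hg, hsplit, neg_neg]
    rw [e1, e2, hK, mul_zero, add_zero, e3, e4]
    ring
  -- the truncation sequence
  have hαpos : ∀ n : ℕ, 0 < (b - c) / ((n : ℝ) + 2) :=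
    fun n => div_pos (by linarith) (by positivity)
  have hαmem : ∀ n : ℕ, c + (b - c) / ((n : ℝ) + 2) ∈ Ioo c b := by
    intro n
    have h2 : (b - c) / ((n : ℝ) + 2) < b - c := by
      apply div_lt_self (by linarith)
      have : (0 : ℝ) ≤ (n : ℝ) := Nat.cast_nonneg n
      linarith
    exact ⟨by linarith [hαpos n], by linarith⟩
  have hαmemd : ∀ n : ℕ, c + (b - c) / ((n : ℝ) + 2) ∈ Ioo c d :=
    fun n => ⟨(hαmem n).1, (hαmem n).2.trans hbd⟩
  have hmonoS : Monotone (fun n : ℕ => Ioc (c + (b - c) / ((n : ℝ) + 2)) b) := by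
    intro m n hmn
    exact Ioc_subset_Ioc_left (by linarith [seq_anti (by linarith : (0:ℝ) ≤ b - c) hmn])
  have hUnion : (⋃ n : ℕ, Ioc (c + (b - c) / ((n : ℝ) + 2)) b) = Ioc c b := by
    ext x
    simp only [mem_iUnion, mem_Ioc]
    constructor
    · rintro ⟨n, h1, h2⟩
      exact ⟨by linarith [hαpos n], h2⟩
    · rintro ⟨h1, h2⟩
      obtain ⟨n, hn⟩ := harch (b - c) (x - c) (by linarith) (by linarith)
      exact ⟨n, by linarith, h2⟩
  have t1 : Tendsto (fun n : ℕ => ∫ x in Ioc (c + (b - c) / ((n : ℝ) + 2)) b, f x * gt x)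
      atTop (𝓝 (∫ x in Ioc c b, f x * gt x)) := by
    have hIn : IntegrableOn (fun x => f x * gt x)
        (⋃ n : ℕ, Ioc (c + (b - c) / ((n : ℝ) + 2)) b) volume := by
      rw [hUnion]; exact hint1.mono_set hsub
    have h := tendsto_setIntegral_of_monotone (fun n : ℕ => measurableSet_Ioc) hmonoS hIn
    rwa [hUnion] at h
  have t2 : Tendsto (fun n : ℕ => ∫ t in Ioc (c + (b - c) / ((n : ℝ) + 2)) b, F t * v t)
      atTop (𝓝 (∫ t in Ioc c b, F t * v t)) := by
    have hIn : IntegrableOn (fun t => F t * v t)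
        (⋃ n : ℕ, Ioc (c + (b - c) / ((n : ℝ) + 2)) b) volume := by
      rw [hUnion]; exact hFv_int.mono_set hsub
    have h := tendsto_setIntegral_of_monotone (fun n : ℕ => measurableSet_Ioc) hmonoS hIn
    rwa [hUnion] at h
  have t3 : Tendsto (fun n : ℕ => F (c + (b - c) / ((n : ℝ) + 2)) *
      gt (c + (b - c) / ((n : ℝ) + 2))) atTop (𝓝 0) := by
    have hanti2 : Antitone (fun n : ℕ => Ioc c (c + (b - c) / ((n : ℝ) + 2))) := by
      intro m n hmn
      exact Ioc_subset_Ioc_right (by linarith [seq_anti (by linarith : (0:ℝ) ≤ b - c) hmn])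
    have hu : Tendsto (fun n : ℕ => ∫ x in Ioc c (c + (b - c) / ((n : ℝ) + 2)), |f x|)
        atTop (𝓝 0) := by
      have hex : ∃ n : ℕ, IntegrableOn (fun x => |f x|)
          (Ioc c (c + (b - c) / ((n : ℝ) + 2))) volume := ⟨0, (hfloc _ (hαmemd 0)).abs⟩
      have h := tendsto_setIntegral_of_antitone
        (fun n : ℕ => measurableSet_Ioc) hanti2 hex
      rw [iInter_Ioc_empty c (b - c) (by linarith)] at h
      simpa using h
    apply squeeze_zero_norm ?_ (by simpa using hu.const_mul M')
    intro n
    have h1 : |F (c + (b - c) / ((n : ℝ) + 2))| ≤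
        ∫ x in Ioc c (c + (b - c) / ((n : ℝ) + 2)), |f x| := by
      calc |F (c + (b - c) / ((n : ℝ) + 2))| =
          ‖∫ x in Ioc c (c + (b - c) / ((n : ℝ) + 2)), f x‖ := (Real.norm_eq_abs _).symm
        _ ≤ ∫ x in Ioc c (c + (b - c) / ((n : ℝ) + 2)), ‖f x‖ :=
            norm_integral_le_integral_norm _
        _ = ∫ x in Ioc c (c + (b - c) / ((n : ℝ) + 2)), |f x| := by
            simp [Real.norm_eq_abs]
    have hnn : 0 ≤ ∫ x in Ioc c (c + (b - c) / ((n : ℝ) + 2)), |f x| :=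
      integral_nonneg fun x => abs_nonneg _
    calc ‖F (c + (b - c) / ((n : ℝ) + 2)) * gt (c + (b - c) / ((n : ℝ) + 2))‖
        = |F (c + (b - c) / ((n : ℝ) + 2))| * |gt (c + (b - c) / ((n : ℝ) + 2))| := by
          rw [Real.norm_eq_abs, abs_mul]
      _ ≤ (∫ x in Ioc c (c + (b - c) / ((n : ℝ) + 2)), |f x|) * M' :=
          mul_le_mul h1 (hMnn _ (hαmemd n)) (abs_nonneg _) hnn
      _ = M' * ∫ x in Ioc c (c + (b - c) / ((n : ℝ) + 2)), |f x| := mul_comm _ _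
  have t4 : Tendsto (fun n : ℕ => -(∫ t in Ioc (c + (b - c) / ((n : ℝ) + 2)) b, F t * v t) -
      F (c + (b - c) / ((n : ℝ) + 2)) * gt (c + (b - c) / ((n : ℝ) + 2)))
      atTop (𝓝 (-(∫ t in Ioc c b, F t * v t) - 0)) := t2.neg.sub t3
  have eqkey : (fun n : ℕ => ∫ x in Ioc (c + (b - c) / ((n : ℝ) + 2)) b, f x * gt x) =
      fun n : ℕ => -(∫ t in Ioc (c + (b - c) / ((n : ℝ) + 2)) b, F t * v t) -
        F (c + (b - c) / ((n : ℝ) + 2)) * gt (c + (b - c) / ((n : ℝ) + 2)) :=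
    funext fun n => key _ (hαmem n)
  rw [eqkey] at t1
  have main_eq : ∫ x in Ioc c b, f x * gt x = -(∫ t in Ioc c b, F t * v t) := by
    have h := tendsto_nhds_unique t1 t4
    rw [h]; ring
  -- reduce Ioo c d integral to Ioc c b
  have hzero : ∫ x in Ioo c d \ Ioc c b, f x * gt x = 0 := by
    have heq : EqOn (fun x => f x * gt x) (fun _ => (0:ℝ)) (Ioo c d \ Ioc c b) := by
      intro x hx
      have hgt0 : gt x = 0 := by rw [hform x hx.1, indicator_of_notMem hx.2, neg_zero]
      simp [hgt0]
    rw [setIntegral_congr_fun (hIoo.diff measurableSet_Ioc) heq, integral_zero]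
  have hIoodecomp : ∫ x in Ioo c d, f x * gt x = ∫ x in Ioc c b, f x * gt x := by
    have hu : Ioo c d = Ioc c b ∪ (Ioo c d \ Ioc c b) := (union_diff_cancel hsub).symm
    rw [hu, setIntegral_union disjoint_sdiff_right (hIoo.diff measurableSet_Ioc)
      (hint1.mono_set hsub) (hint1.mono_set diff_subset), hzero, add_zero]
  refine ⟨hint1, ?_⟩
  rw [hIoodecomp, main_eq, abs_neg]
  calc |∫ t in Ioc c b, F t * v t| ≤ ∫ t in Ioc c b, |F t * v t| := by
        simpa only [Real.norm_eq_abs] using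
          norm_integral_le_integral_norm (μ := volume.restrict (Ioc c b)) (fun t => F t * v t)
    _ ≤ ∫ t in Ioo c d, |F t * v t| :=
        setIntegral_mono_set hFv_int.abs (Eventually.of_forall fun x => abs_nonneg _)
          (HasSubset.Subset.eventuallyLE hsub)
    _ = ∫ x in Ioo c d, |v x / w x| * |w x * F x| := by
        refine setIntegral_congr_fun hIoo fun x hx => ?_
        have hw : w x ≠ 0 := ne_of_gt (hwpos x hx)
        rw [← abs_mul]
        congr 1
        field_simp
    _ ≤ (∫ x in Ioo c d, |v x / w x| ^ q) ^ (1/q) *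
        (∫ x in Ioo c d, |w x * F x| ^ p) ^ (1/p) :=
        integral_mul_le_Lp_mul_Lq_of_nonneg hconj.symm
          (Eventually.of_forall fun x => abs_nonneg _)
          (Eventually.of_forall fun x => abs_nonneg _) hMemvw_abs hMemwF_abs
end
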